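/- arXiv:1207.4969 — 6 statements merged into one kernel-verified Lean document; each statement's English description precedes it below -/
import Mathlib

section
/- Let Q ∈ F_q[x] be monic irreducible and 𝔇 = deg Q − 1. Then (1/φ(Q)) · Σ_{χ ≠ χ₀ mod Q} L(1/2,χ) = 1 + O(q^{−𝔇/2}), with an implied constant depending only on q. -/
set_option linter.unusedSectionVars false
set_option maxHeartbeats 1000000


open Polynomial

noncomputable section

variable {F : Type*}

/-- A Dirichlet character modulo `Q` over the polynomial ring. -/
def IsDirichletChar [CommRing F] (Q : Polynomial F) (χ : Polynomial F → ℂ) : Prop :=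
  (∀ A B : Polynomial F, χ (A + B * Q) = χ A) ∧
  (∀ A B : Polynomial F, χ (A * B) = χ A * χ B) ∧
  (∀ A : Polynomial F, χ A ≠ 0 ↔ IsCoprime A Q)

/-- The trivial character modulo `Q`. -/
def trivialChar [CommRing F] (Q : Polynomial F) : Polynomial F → ℂ :=
  fun A => @ite ℂ (IsCoprime A Q) (Classical.propDecidable _) 1 0

/-- Euler's totient: the number of residue classes modulo `Q` coprime to `Q`. -/
def polyPhi [Field F] (Q : Polynomial F) : ℕ :=
  Nat.card ((Polynomial F ⧸ Ideal.span {Q}))ˣ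

/-- The central value `L(1/2,χ)` as a finite sum over monic polynomials of degree `≤ 𝔇`. -/
def Lhalf [Field F] (q 𝔇 : ℕ) (χ : Polynomial F → ℂ) : ℂ :=
  ∑ᶠ N ∈ {N : Polynomial F | N.Monic ∧ N.natDegree ≤ 𝔇},
    χ N / (Real.sqrt ((q : ℝ) ^ N.natDegree) : ℂ)
namespace FirstMomentAux

variable [Field F] [Fintype F] {Q : Polynomial F}

lemma polyPhi_eq (Q : Polynomial F) : polyPhi Q = Nat.card (AdjoinRoot Q)ˣ := rfl

lemma finite_adjoinRoot (hQ : Q.Monic) : Finite (AdjoinRoot Q) := by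
  have b := AdjoinRoot.powerBasisAux' hQ
  exact Finite.of_equiv _ b.equivFun.symm.toEquiv

lemma isUnit_mk_iff [Fact (Irreducible Q)] (A : Polynomial F) :
    IsUnit (AdjoinRoot.mk Q A) ↔ IsCoprime A Q := by
  rw [isUnit_iff_ne_zero, Ne, AdjoinRoot.mk_eq_zero, isCoprime_comm,
    (Fact.out : Irreducible Q).coprime_iff_not_dvd]

lemma mulChar_ne_zero {R : Type*} [CommRing R] (ψ : MulChar R ℂ) {a : R} (ha : IsUnit a) :
    ψ a ≠ 0 := by
  obtain ⟨u, rfl⟩ := ha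
  intro h
  have h1 : ψ ((u : R) * ((u⁻¹ : Rˣ) : R)) = 1 := by rw [Units.mul_inv, map_one]
  rw [map_mul, h, zero_mul] at h1
  exact zero_ne_one h1

variable (Q) in
def toDC (ψ : MulChar (AdjoinRoot Q) ℂ) : Polynomial F → ℂ :=
  fun A => ψ (AdjoinRoot.mk Q A)

lemma toDC_injective : Function.Injective (toDC Q) := by
  intro ψ₁ ψ₂ h
  ext x
  obtain ⟨A, hA⟩ := AdjoinRoot.mk_surjective (g := Q) (x : AdjoinRoot Q)
  rw [← hA]
  exact congrFun h A

lemma toDC_isDC [Fact (Irreducible Q)] (ψ : MulChar (AdjoinRoot Q) ℂ) :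
    IsDirichletChar Q (toDC Q ψ) := by
  refine ⟨fun A B => ?_, fun A B => by simp only [toDC, map_mul], fun A => ?_⟩
  · simp only [toDC, map_add, map_mul, AdjoinRoot.mk_self, mul_zero, add_zero]
  · rw [← isUnit_mk_iff (Q := Q) A]
    constructor
    · intro h
      by_contra hu
      exact h (ψ.map_nonunit hu)
    · exact fun h => mulChar_ne_zero ψ h

lemma exists_mulChar [Fact (Irreducible Q)] {χ : Polynomial F → ℂ}
    (hχ : IsDirichletChar Q χ) : ∃ ψ : MulChar (AdjoinRoot Q) ℂ, toDC Q ψ = χ := by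
  obtain ⟨hadd, hmul, hne⟩ := hχ
  have key : ∀ A B : Polynomial F, AdjoinRoot.mk Q A = AdjoinRoot.mk Q B → χ A = χ B := by
    intro A B h
    rw [AdjoinRoot.mk_eq_mk] at h
    obtain ⟨C, hC⟩ := h
    have hAB : A = B + C * Q := by linear_combination hC
    rw [hAB, hadd]
  have hone : χ 1 = 1 := by
    have h1 : χ 1 ≠ 0 := (hne 1).mpr isCoprime_one_left
    have h := hmul 1 1
    rw [mul_one] at h
    exact (mul_left_cancel₀ h1 (by rw [mul_one, ← h] : χ 1 * 1 = χ 1 * χ 1)).symm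
  have hzero : χ 0 = 0 := by
    by_contra h0
    exact (Fact.out : Irreducible Q).not_isUnit (isCoprime_zero_left.mp ((hne 0).mp h0))
  set g : AdjoinRoot Q → Polynomial F := Function.surjInv (AdjoinRoot.mk_surjective (g := Q))
    with hgdef
  have hg : ∀ x, AdjoinRoot.mk Q (g x) = x := fun x => Function.surjInv_eq _ x
  have hgA : ∀ A, χ (g (AdjoinRoot.mk Q A)) = χ A := fun A => key _ _ (hg _)
  refine ⟨{ toFun := fun x => χ (g x)
            map_one' := ?_
            map_mul' := ?_
            map_nonunit' := ?_ }, ?_⟩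
  · show χ (g 1) = 1
    rw [show (1 : AdjoinRoot Q) = AdjoinRoot.mk Q 1 from (map_one _).symm, hgA, hone]
  · intro x y
    obtain ⟨A, rfl⟩ := AdjoinRoot.mk_surjective (g := Q) x
    obtain ⟨B, rfl⟩ := AdjoinRoot.mk_surjective (g := Q) y
    show χ (g _) = χ (g _) * χ (g _)
    rw [hgA, hgA, ← map_mul, hgA, hmul]
  · intro a ha
    have ha0 : a = 0 := by
      by_contra h
      exact ha (isUnit_iff_ne_zero.mpr h)
    show χ (g a) = 0
    rw [ha0, show (0 : AdjoinRoot Q) = AdjoinRoot.mk Q 0 from (map_zero _).symm, hgA, hzero]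
  · funext A
    show χ (g (AdjoinRoot.mk Q A)) = χ A
    exact hgA A

variable (Q) in
lemma setDC_eq [Fact (Irreducible Q)] :
    {χ : Polynomial F → ℂ | IsDirichletChar Q χ} = Set.range (toDC Q) := by
  ext χ
  constructor
  · exact fun h => exists_mulChar h
  · rintro ⟨ψ, rfl⟩
    exact toDC_isDC ψ

lemma monicSet_finite (D : ℕ) : {N : Polynomial F | N.Monic ∧ N.natDegree ≤ D}.Finite := by
  have h : Set.InjOn (fun p : Polynomial F => fun i : Fin (D + 1) => p.coeff i)
      {N : Polynomial F | N.Monic ∧ N.natDegree ≤ D} := by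
    intro p hp p' hp' h
    ext m
    rcases le_or_gt m D with hm | hm
    · exact congrFun h ⟨m, Nat.lt_succ_of_le hm⟩
    · rw [p.coeff_eq_zero_of_natDegree_lt (lt_of_le_of_lt hp.2 hm),
        p'.coeff_eq_zero_of_natDegree_lt (lt_of_le_of_lt hp'.2 hm)]
  exact Set.Finite.of_finite_image (Set.toFinite _) h

lemma card_monic_deg_le (n : ℕ) (s : Finset (Polynomial F))
    (hs : ∀ p ∈ s, p.Monic ∧ p.natDegree = n) : s.card ≤ Fintype.card F ^ n := by
  classical
  have h : s.card ≤ (Finset.univ : Finset (Fin n → F)).card := by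
    apply Finset.card_le_card_of_injOn (fun p => fun i : Fin n => p.coeff i)
      (fun p _ => Finset.mem_univ _)
    intro p hp p' hp' h
    obtain ⟨hpm, hpd⟩ := hs p hp
    obtain ⟨hpm', hpd'⟩ := hs p' hp'
    ext m
    rcases lt_trichotomy m n with hm | hm | hm
    · exact congrFun h ⟨m, hm⟩
    · subst hm
      rw [← hpd, hpm.coeff_natDegree, hpd, ← hpd', hpm'.coeff_natDegree]
    · rw [p.coeff_eq_zero_of_natDegree_lt (hpd ▸ hm),
        p'.coeff_eq_zero_of_natDegree_lt (hpd' ▸ hm)]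
  simpa using h

lemma card_adjoinRoot_ge [Fact (Irreducible Q)] (hQ : Q.Monic) :
    Fintype.card F ^ Q.natDegree ≤ Nat.card (AdjoinRoot Q) := by
  have hfin : Finite (AdjoinRoot Q) := finite_adjoinRoot hQ
  have hinj : Function.Injective
      (fun p : degreeLT F Q.natDegree => AdjoinRoot.mk Q p.1) := by
    rintro ⟨p, hp⟩ ⟨p', hp'⟩ h
    simp only at h
    rw [AdjoinRoot.mk_eq_mk] at h
    have hdeg : (p - p').degree < Q.degree := by
      rw [Polynomial.mem_degreeLT] at hp hp'
      refine lt_of_le_of_lt (Polynomial.degree_sub_le p p') ?_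
      rw [Polynomial.degree_eq_natDegree hQ.ne_zero]
      exact max_lt hp hp'
    have h0 := Polynomial.eq_zero_of_dvd_of_degree_lt h hdeg
    exact Subtype.ext (sub_eq_zero.mp h0)
  calc Fintype.card F ^ Q.natDegree
      = Nat.card (degreeLT F Q.natDegree) := by
        rw [Nat.card_congr (Polynomial.degreeLTEquiv F Q.natDegree).toEquiv,
          Nat.card_eq_fintype_card, Fintype.card_fun, Fintype.card_fin]
    _ ≤ Nat.card (AdjoinRoot Q) := Nat.card_le_card_of_injective _ hinj

lemma sum_mulChar [Fact (Irreducible Q)] [Finite (AdjoinRoot Q)]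
    [Fintype (MulChar (AdjoinRoot Q) ℂ)] (a : AdjoinRoot Q) :
    ∑ ψ : MulChar (AdjoinRoot Q) ℂ, ψ a
      = if a = 1 then (Nat.card (AdjoinRoot Q)ˣ : ℂ) else 0 := by
  haveI : NeZero ((Monoid.exponent (AdjoinRoot Q)ˣ : ℂ)) :=
    ⟨Nat.cast_ne_zero.mpr Monoid.exponent_ne_zero_of_finite⟩
  split_ifs with ha
  · subst ha
    simp only [map_one]
    rw [Finset.sum_const, Finset.card_univ, nsmul_eq_mul, mul_one,
      ← Nat.card_eq_fintype_card,
      MulChar.card_eq_card_units_of_hasEnoughRootsOfUnity (AdjoinRoot Q) ℂ]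
  · obtain ⟨ψ', hψ'⟩ :=
      MulChar.exists_apply_ne_one_of_hasEnoughRootsOfUnity (AdjoinRoot Q) ℂ ha
    refine eq_zero_of_mul_eq_self_left hψ' ?_
    simp only [Finset.mul_sum, ← MulChar.mul_apply]
    exact Fintype.sum_bijective _ (Group.mulLeft_bijective ψ') _ _ fun χ' => rfl

lemma trivialChar_isDC : IsDirichletChar Q (trivialChar Q) := by
  classical
  refine ⟨fun A B => ?_, fun A B => ?_, fun A => ?_⟩
  · simp only [trivialChar]
    congr 1
    exact propext ⟨fun h => by
      have := h.add_mul_right_left (-B)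
      simpa using this, fun h => h.add_mul_right_left B⟩
  · by_cases hA : IsCoprime A Q <;> by_cases hB : IsCoprime B Q <;>
      simp [trivialChar, IsCoprime.mul_left_iff, hA, hB]
  · by_cases hA : IsCoprime A Q <;> simp [trivialChar, hA]

lemma mk_eq_one_iff (hirr : Irreducible Q) {N : Polynomial F}
    (hdeg : N.natDegree ≤ Q.natDegree - 1) :
    AdjoinRoot.mk Q N = 1 ↔ N = 1 := by
  constructor
  · intro h
    rw [show (1 : AdjoinRoot Q) = AdjoinRoot.mk Q 1 from (map_one _).symm,
      AdjoinRoot.mk_eq_mk] at h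
    by_contra hN
    have hne : N - 1 ≠ 0 := fun h0 => hN (by linear_combination h0)
    have h1 : Q.natDegree ≤ (N - 1).natDegree := Polynomial.natDegree_le_of_dvd h hne
    have hQ1 : 1 ≤ Q.natDegree := hirr.natDegree_pos
    have h2 : (N - 1).natDegree ≤ max N.natDegree (1 : Polynomial F).natDegree :=
      Polynomial.natDegree_sub_le N 1
    simp only [Polynomial.natDegree_one] at h2
    omega
  · rintro rfl
    exact map_one _

lemma sqrt_pow_eq (x : ℝ) (hx : 0 ≤ x) (n : ℕ) :
    Real.sqrt (x ^ n) = Real.sqrt x ^ n := by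
  have h : (Real.sqrt x ^ n) ^ 2 = x ^ n := by
    rw [← pow_mul, mul_comm, pow_mul, Real.sq_sqrt hx]
  rw [← h, Real.sqrt_sq (by positivity)]

end FirstMomentAux
open FirstMomentAux in
theorem main_aux [Field F] [Fintype F] (q : ℕ) (hq : Fintype.card F = q)
    (Q : Polynomial F) (hQ : Q.Monic) (hirr : Irreducible Q) :
    ‖(polyPhi Q : ℂ)⁻¹ *
        (∑ᶠ χ ∈ {χ : Polynomial F → ℂ | IsDirichletChar Q χ ∧ χ ≠ trivialChar Q},
          Lhalf q (Q.natDegree - 1) χ) - 1‖ ≤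
      (2 * Real.sqrt q / (Real.sqrt q - 1)) / Real.sqrt ((q : ℝ) ^ (Q.natDegree - 1)) := by
  classical
  haveI : Fact (Irreducible Q) := ⟨hirr⟩
  haveI : Finite (AdjoinRoot Q) := finite_adjoinRoot hQ
  haveI : Fintype (MulChar (AdjoinRoot Q) ℂ) := Fintype.ofFinite _
  haveI : Fintype (AdjoinRoot Q) := Fintype.ofFinite _
  set D := Q.natDegree - 1 with hDdef
  have hD : Q.natDegree = D + 1 := by
    have := hirr.natDegree_pos; omega
  have hq2 : 2 ≤ q := by
    have := Fintype.one_lt_card (α := F); omega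
  have hq0 : (0:ℝ) < (q:ℝ) := by
    have : (0:ℕ) < q := by omega
    exact_mod_cast this
  set r : ℝ := Real.sqrt q with hrdef
  have hr0 : (0:ℝ) < r := Real.sqrt_pos.mpr hq0
  have hr1 : (1:ℝ) < r := by
    rw [hrdef, show (1:ℝ) = Real.sqrt 1 from Real.sqrt_one.symm]
    exact Real.sqrt_lt_sqrt (by norm_num) (by exact_mod_cast hq2)
  have hq_eq : (q:ℝ) = r^2 := (Real.sq_sqrt hq0.le).symm
  -- monic polynomials of degree ≤ D
  have hT : {N : Polynomial F | N.Monic ∧ N.natDegree ≤ D}.Finite := monicSet_finite D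
  set TF := hT.toFinset with hTFdef
  have hmemTF : ∀ N, N ∈ TF ↔ (N.Monic ∧ N.natDegree ≤ D) := fun N => hT.mem_toFinset
  have hLhalf : ∀ χ : Polynomial F → ℂ, Lhalf q D χ
      = ∑ N ∈ TF, χ N / (Real.sqrt ((q : ℝ) ^ N.natDegree) : ℂ) := by
    intro χ
    unfold Lhalf
    exact finsum_mem_eq_finite_toFinset_sum _ hT
  -- character sets
  have hS0 : {χ : Polynomial F → ℂ | IsDirichletChar Q χ} = Set.range (toDC Q) := setDC_eq Q
  have hS0fin : {χ : Polynomial F → ℂ | IsDirichletChar Q χ}.Finite := by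
    rw [hS0]; exact Set.finite_range _
  have hSfin : {χ : Polynomial F → ℂ | IsDirichletChar Q χ ∧ χ ≠ trivialChar Q}.Finite :=
    hS0fin.subset (fun χ h => h.1)
  have hsplit : {χ : Polynomial F → ℂ | IsDirichletChar Q χ}
      = {χ : Polynomial F → ℂ | IsDirichletChar Q χ ∧ χ ≠ trivialChar Q} ∪ {trivialChar Q} := by
    ext χ
    by_cases hχ : χ = trivialChar Q <;> simp [hχ, trivialChar_isDC]
  have hdisj : Disjoint {χ : Polynomial F → ℂ | IsDirichletChar Q χ ∧ χ ≠ trivialChar Q}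
      ({trivialChar Q} : Set (Polynomial F → ℂ)) := by
    rw [Set.disjoint_right]
    intro χ hχ
    simp only [Set.mem_singleton_iff] at hχ
    subst hχ
    intro hmem
    exact hmem.2 rfl
  -- orthogonality: sum over all characters equals φ(Q)
  have horth : (∑ᶠ χ ∈ {χ : Polynomial F → ℂ | IsDirichletChar Q χ}, Lhalf q D χ)
      = (polyPhi Q : ℂ) := by
    rw [hS0, finsum_mem_range toDC_injective, finsum_eq_sum_of_fintype]
    rw [Finset.sum_congr rfl (fun ψ _ => hLhalf (toDC Q ψ))]
    rw [Finset.sum_comm]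
    simp only [toDC]
    have hNsum : ∀ N ∈ TF, (∑ ψ : MulChar (AdjoinRoot Q) ℂ,
          ψ (AdjoinRoot.mk Q N) / (Real.sqrt ((q : ℝ) ^ N.natDegree) : ℂ))
        = (if N = 1 then ((polyPhi Q : ℕ) : ℂ) else 0)
            / (Real.sqrt ((q : ℝ) ^ N.natDegree) : ℂ) := by
      intro N hN
      rw [← Finset.sum_div, sum_mulChar, ← polyPhi_eq]
      have hcond := mk_eq_one_iff hirr (by have := (hmemTF N).mp hN; omega : N.natDegree ≤ Q.natDegree - 1)
      simp only [hcond]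
    rw [Finset.sum_congr rfl hNsum]
    rw [Finset.sum_eq_single_of_mem 1 ((hmemTF 1).mpr ⟨monic_one, by simp⟩)
      (fun N _ hne => by rw [if_neg hne, zero_div])]
    simp
  -- split off trivial character
  have hmain : (∑ᶠ χ ∈ {χ : Polynomial F → ℂ | IsDirichletChar Q χ ∧ χ ≠ trivialChar Q},
        Lhalf q D χ)
      = (polyPhi Q : ℂ) - Lhalf q D (trivialChar Q) := by
    have hu := finsum_mem_union hdisj hSfin (Set.finite_singleton (trivialChar Q))
      (f := fun χ => Lhalf q D χ)
    rw [← hsplit, horth, finsum_mem_singleton] at hu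
    exact eq_sub_of_add_eq hu.symm
  -- φ(Q) bounds
  have hcard : q ^ (D+1) ≤ Nat.card (AdjoinRoot Q) := by
    have h := card_adjoinRoot_ge (Q := Q) hQ
    rwa [hq, hD] at h
  have hφeq : polyPhi Q = Nat.card (AdjoinRoot Q) - 1 := by
    rw [polyPhi_eq, Nat.card_eq_fintype_card, Nat.card_eq_fintype_card, Fintype.card_units]
  have hq1 : 1 ≤ q ^ (D+1) := Nat.one_le_pow _ _ (by omega)
  have hφge : q ^ (D+1) - 1 ≤ polyPhi Q := by omega
  have hφR : ((q:ℝ)) ^ (D+1) - 1 ≤ (polyPhi Q : ℝ) := by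
    have h' : ((q ^ (D+1) - 1 : ℕ) : ℝ) ≤ ((polyPhi Q : ℕ) : ℝ) := Nat.cast_le.mpr hφge
    rwa [Nat.cast_sub hq1, Nat.cast_pow, Nat.cast_one] at h'
  have h2q : (2:ℝ) ≤ (q:ℝ)^(D+1) := by
    calc (2:ℝ) ≤ (q:ℝ) := by exact_mod_cast hq2
      _ = (q:ℝ)^1 := (pow_one _).symm
      _ ≤ (q:ℝ)^(D+1) := pow_le_pow_right₀ (by exact_mod_cast (by omega : 1 ≤ q)) (by omega)
  have hφhalf : (q:ℝ)^(D+1)/2 ≤ (polyPhi Q : ℝ) := by linarith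
  have hφpos : (0:ℝ) < (polyPhi Q : ℝ) := by linarith
  have hφne : ((polyPhi Q : ℕ) : ℂ) ≠ 0 := by
    have h0 : polyPhi Q ≠ 0 := by
      have : (0:ℕ) < polyPhi Q := by exact_mod_cast hφpos
      omega
    exact_mod_cast Nat.cast_ne_zero.mpr h0
  -- rewrite the goal
  rw [hmain]
  have hexp : ((polyPhi Q : ℕ) : ℂ)⁻¹ * (((polyPhi Q : ℕ) : ℂ) - Lhalf q D (trivialChar Q)) - 1
      = -(Lhalf q D (trivialChar Q) / ((polyPhi Q : ℕ) : ℂ)) := by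
    field_simp
    ring
  rw [hexp]
  rw [norm_neg, norm_div, Complex.norm_natCast]
  -- bound on |L(1/2, χ₀)|
  have hLbound : ‖Lhalf q D (trivialChar Q)‖ ≤ r^(D+1)/(r-1) := by
    rw [hLhalf]
    calc ‖∑ N ∈ TF, trivialChar Q N / (Real.sqrt ((q : ℝ) ^ N.natDegree) : ℂ)‖
        ≤ ∑ N ∈ TF, ‖trivialChar Q N / (Real.sqrt ((q : ℝ) ^ N.natDegree) : ℂ)‖ :=
          norm_sum_le _ _
      _ ≤ ∑ N ∈ TF, (r ^ N.natDegree)⁻¹ := by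
          refine Finset.sum_le_sum fun N _ => ?_
          rw [norm_div]
          have h2 : ‖((Real.sqrt ((q:ℝ)^N.natDegree) : ℂ))‖ = r ^ N.natDegree := by
            rw [Complex.norm_real, Real.norm_eq_abs, abs_of_nonneg (Real.sqrt_nonneg _), sqrt_pow_eq _ hq0.le]
          have h1 : ‖trivialChar Q N‖ ≤ 1 := by
            unfold trivialChar
            split_ifs <;> simp
          rw [h2, div_eq_mul_inv]
          calc ‖trivialChar Q N‖ * (r ^ N.natDegree)⁻¹
              ≤ 1 * (r ^ N.natDegree)⁻¹ :=
                mul_le_mul_of_nonneg_right h1 (by positivity)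
            _ = (r ^ N.natDegree)⁻¹ := one_mul _
      _ = ∑ n ∈ Finset.range (D+1), ∑ N ∈ TF.filter (fun N => N.natDegree = n),
            (r ^ N.natDegree)⁻¹ := by
          refine (Finset.sum_fiberwise_of_maps_to (fun N hN => ?_) _).symm
          rw [Finset.mem_range]
          have := (hmemTF N).mp hN
          omega
      _ ≤ ∑ n ∈ Finset.range (D+1), r ^ n := by
          refine Finset.sum_le_sum fun n hn => ?_
          have hconst : ∀ N ∈ TF.filter (fun N => N.natDegree = n),
              (r ^ N.natDegree)⁻¹ = (r^n)⁻¹ := by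
            intro N hN
            rw [(Finset.mem_filter.mp hN).2]
          rw [Finset.sum_congr rfl hconst, Finset.sum_const, nsmul_eq_mul]
          have hcard' : (TF.filter (fun N => N.natDegree = n)).card ≤ Fintype.card F ^ n := by
            refine card_monic_deg_le n _ fun p hp => ?_
            obtain ⟨hp1, hp2⟩ := Finset.mem_filter.mp hp
            exact ⟨((hmemTF p).mp hp1).1, hp2⟩
          calc ((TF.filter (fun N => N.natDegree = n)).card : ℝ) * (r^n)⁻¹
              ≤ ((Fintype.card F ^ n : ℕ) : ℝ) * (r^n)⁻¹ := by
                refine mul_le_mul_of_nonneg_right ?_ (by positivity)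
                exact_mod_cast hcard'
            _ = r ^ n := by
                rw [hq]
                push_cast
                rw [hq_eq, ← pow_mul, two_mul, pow_add,
                  mul_inv_cancel_right₀ (pow_ne_zero _ hr0.ne')]
      _ = (r^(D+1) - 1)/(r-1) := geom_sum_eq hr1.ne' _
      _ ≤ r^(D+1)/(r-1) := by
          refine (div_le_div_iff_of_pos_right (by linarith)).mpr (by linarith)
  -- final numeric estimate
  calc ‖Lhalf q D (trivialChar Q)‖ / ((polyPhi Q : ℕ) : ℝ)
      ≤ (r^(D+1)/(r-1)) / ((q:ℝ)^(D+1)/2) :=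
        div_le_div₀ (div_nonneg (by positivity) (by linarith)) hLbound (by positivity) hφhalf
    _ ≤ (2*r/(r-1)) / r^D := by
        have hpow : ((q:ℝ))^(D+1) = (r^(D+1) * r^D) * r := by
          rw [hq_eq, ← pow_mul]
          rw [show 2*(D+1) = (D+1) + D + 1 by ring]
          rw [pow_add, pow_add, pow_one]
        have hs : (0:ℝ) < r - 1 := by linarith
        have e1 : (r^(D+1)/(r-1)) / (((r^(D+1) * r^D) * r)/2) = 2/((r-1) * (r^D * r)) := by
          have h1 : r ≠ 0 := hr0.ne'
          have h2 : r - 1 ≠ 0 := hs.ne'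
          have h3 : r^D ≠ 0 := pow_ne_zero _ h1
          have h4 : r^(D+1) ≠ 0 := pow_ne_zero _ h1
          field_simp
        have e2 : (2*r/(r-1)) / r^D = (2*r)/((r-1) * r^D) := by
          rw [div_div]
        rw [hpow, e1, e2]
        rw [div_le_div_iff₀ (by positivity) (by positivity)]
        have hfact : (0:ℝ) < (r - 1) * r^D := by positivity
        nlinarith [mul_pos hfact (by nlinarith : (0:ℝ) < r^2 - 1)]
    _ = (2 * Real.sqrt q / (Real.sqrt q - 1)) / Real.sqrt ((q : ℝ) ^ D) := by
        rw [sqrt_pow_eq _ hq0.le]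


/-- The first moment: for monic irreducible `Q` with `𝔇 = deg Q - 1`,
`(1/φ(Q)) Σ_{χ ≠ χ₀} L(1/2,χ) = 1 + O(q^{-𝔇/2})`,
the implied constant depending only on `q`. -/
theorem first_moment_of_Dirichlet_L_functions
    (F : Type*) [Field F] [Fintype F] (q : ℕ) (hq : Fintype.card F = q) :
    ∃ C : ℝ, ∀ Q : Polynomial F, Q.Monic → Irreducible Q →
      ‖(polyPhi Q : ℂ)⁻¹ *
          (∑ᶠ χ ∈ {χ : Polynomial F → ℂ | IsDirichletChar Q χ ∧ χ ≠ trivialChar Q},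
            Lhalf q (Q.natDegree - 1) χ) - 1‖ ≤
        C / Real.sqrt ((q : ℝ) ^ (Q.natDegree - 1)) := by
  exact ⟨2 * Real.sqrt q / (Real.sqrt q - 1), fun Q hQ hirr => main_aux q hq Q hQ hirr⟩
end
end

section
/- Let Q ∈ F_q[x] be monic irreducible and 𝔇 = deg Q − 1. Then (1/φ(Q)) · Σ_{χ ≠ χ₀ mod Q} |L(1/2,χ)|² = 𝔇 + O(1), with an implied constant depending only on q. -/
open Polynomial

noncomputable section

variable {F : Type*}

namespace SMAux

set_option linter.unusedSectionVars false

lemma sum_mulChar {M : Type*} [CommMonoid M] [DecidableEq M] [Finite M]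
    [Fintype (MulChar M ℂ)] (a : M) :
    ∑ χ : MulChar M ℂ, χ a = if a = 1 then (Nat.card Mˣ : ℂ) else 0 := by
  haveI : NeZero ((Monoid.exponent Mˣ : ℕ) : ℂ) :=
    ⟨Nat.cast_ne_zero.mpr Monoid.exponent_ne_zero_of_finite⟩
  split_ifs with h
  · subst h
    simp only [MulChar.map_one]
    rw [Finset.sum_const, Finset.card_univ, nsmul_eq_mul, mul_one, ← Nat.card_eq_fintype_card,
      MulChar.card_eq_card_units_of_hasEnoughRootsOfUnity M ℂ]
  · obtain ⟨χ, hχ⟩ := MulChar.exists_apply_ne_one_of_hasEnoughRootsOfUnity M ℂ h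
    refine eq_zero_of_mul_eq_self_left hχ ?_
    simp only [Finset.mul_sum, ← MulChar.mul_apply]
    exact Fintype.sum_bijective _ (Group.mulLeft_bijective χ) _ _ fun χ' ↦ rfl

variable {F : Type*} [Field F] [Fintype F]

instance monicFintype (n : ℕ) : Fintype {p : F[X] // p.Monic ∧ p.natDegree = n} :=
  Fintype.ofEquiv _ ((monicEquivDegreeLT n).trans (degreeLTEquiv F n).toEquiv).symm

lemma card_monic (n : ℕ) :
    Fintype.card {p : F[X] // p.Monic ∧ p.natDegree = n} = Fintype.card F ^ n := by
  classical
  rw [Fintype.card_congr ((monicEquivDegreeLT n).trans (degreeLTEquiv F n).toEquiv),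
    Fintype.card_fun, Fintype.card_fin]

def liftChar (Q : Polynomial F) (ψ : MulChar (AdjoinRoot Q) ℂ) : Polynomial F → ℂ :=
  fun A => ψ (AdjoinRoot.mk Q A)

variable {Q : Polynomial F}

lemma isUnit_mk_iff (hQ : Irreducible Q) (A : Polynomial F) :
    IsUnit (AdjoinRoot.mk Q A) ↔ IsCoprime A Q := by
  haveI := Fact.mk hQ
  rw [isUnit_iff_ne_zero, Ne, AdjoinRoot.mk_eq_zero, isCoprime_comm, hQ.coprime_iff_not_dvd]

lemma liftChar_isDirichletChar (hQ : Irreducible Q) (ψ : MulChar (AdjoinRoot Q) ℂ) :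
    IsDirichletChar Q (liftChar Q ψ) := by
  refine ⟨fun A B => ?_, fun A B => ?_, fun A => ?_⟩
  · simp [liftChar, map_add, map_mul, AdjoinRoot.mk_self]
  · simp [liftChar, map_mul]
  · rw [show liftChar Q ψ A = ψ (AdjoinRoot.mk Q A) from rfl, ← isUnit_mk_iff hQ A]
    constructor
    · intro h
      by_contra hu
      exact h (ψ.map_nonunit hu)
    · intro hu
      rw [← hu.unit_spec, ← MulChar.coe_toUnitHom]
      exact Units.ne_zero _

lemma liftChar_injective (Q : Polynomial F) : Function.Injective (liftChar Q) := by
  intro ψ₁ ψ₂ h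
  refine MulChar.ext' fun a => ?_
  obtain ⟨A, rfl⟩ := AdjoinRoot.mk_surjective a
  exact congrFun h A

lemma liftChar_one (hQ : Irreducible Q) : liftChar Q 1 = trivialChar Q := by
  funext A
  by_cases h : IsCoprime A Q
  · rw [show liftChar Q 1 A = (1 : MulChar (AdjoinRoot Q) ℂ) (AdjoinRoot.mk Q A) from rfl,
      MulChar.one_apply ((isUnit_mk_iff hQ A).mpr h), trivialChar]
    exact (if_pos h).symm
  · rw [show liftChar Q 1 A = (1 : MulChar (AdjoinRoot Q) ℂ) (AdjoinRoot.mk Q A) from rfl,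
      MulChar.map_nonunit _ (fun hu => h ((isUnit_mk_iff hQ A).mp hu)), trivialChar]
    exact (if_neg h).symm

lemma liftChar_surj (hQ : Irreducible Q) {χ : Polynomial F → ℂ} (h : IsDirichletChar Q χ) :
    ∃ ψ : MulChar (AdjoinRoot Q) ℂ, liftChar Q ψ = χ := by
  obtain ⟨h1, h2, h3⟩ := h
  have hker : ∀ A B : Polynomial F, AdjoinRoot.mk Q A = AdjoinRoot.mk Q B → χ A = χ B := by
    intro A B hAB
    rw [AdjoinRoot.mk_eq_mk] at hAB
    obtain ⟨C, hC⟩ := hAB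
    have hA : A = B + C * Q := by linear_combination hC
    rw [hA, h1]
  set s : AdjoinRoot Q → Polynomial F := Function.surjInv (AdjoinRoot.mk_surjective (g := Q))
    with hs_def
  have hs : ∀ r, AdjoinRoot.mk Q (s r) = r := Function.surjInv_eq _
  have hcomp : ∀ A, χ (s (AdjoinRoot.mk Q A)) = χ A := fun A => hker _ _ (hs _)
  have hone : χ 1 = 1 := by
    have h0 : χ 1 ≠ 0 := (h3 1).mpr isCoprime_one_left
    have h11 : χ 1 = χ 1 * χ 1 := by
      have := h2 1 1
      rwa [mul_one] at this
    exact (mul_left_cancel₀ h0 (by rw [mul_one, ← h11])).symm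
  refine ⟨⟨⟨⟨fun r => χ (s r), ?_⟩, ?_⟩, ?_⟩, ?_⟩
  · show χ (s 1) = 1
    rw [show (1 : AdjoinRoot Q) = AdjoinRoot.mk Q 1 from (map_one _).symm, hcomp, hone]
  · intro r t
    have hrt : r * t = AdjoinRoot.mk Q (s r * s t) := by rw [map_mul, hs, hs]
    show χ (s (r * t)) = χ (s r) * χ (s t)
    rw [hrt, hcomp, h2]
  · intro r hr
    by_contra hne
    have := (h3 (s r)).mp hne
    exact hr (hs r ▸ (isUnit_mk_iff hQ (s r)).mpr this)
  · funext A
    exact hcomp A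

lemma char_set_eq (hQ : Irreducible Q) :
    {χ : Polynomial F → ℂ | IsDirichletChar Q χ ∧ χ ≠ trivialChar Q}
      = liftChar Q '' {ψ : MulChar (AdjoinRoot Q) ℂ | ψ ≠ 1} := by
  ext χ
  constructor
  · rintro ⟨h1, h2⟩
    obtain ⟨ψ, rfl⟩ := liftChar_surj hQ h1
    exact ⟨ψ, fun hψ => h2 (hψ ▸ liftChar_one hQ), rfl⟩
  · rintro ⟨ψ, hψ, rfl⟩
    exact ⟨liftChar_isDirichletChar hQ ψ,
      fun hc => hψ (liftChar_injective Q (hc.trans (liftChar_one hQ).symm))⟩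

end SMAux

/-- The second moment: for monic irreducible `Q` with `𝔇 = deg Q - 1`,
`(1/φ(Q)) Σ_{χ ≠ χ₀} |L(1/2,χ)|² = 𝔇 + O(1)`,
the implied constant depending only on `q`. -/
theorem second_moment_of_Dirichlet_L_functions
    (F : Type*) [Field F] [Fintype F] (q : ℕ) (hq : Fintype.card F = q) :
    ∃ C : ℝ, ∀ Q : Polynomial F, Q.Monic → Irreducible Q →
      |(polyPhi Q : ℝ)⁻¹ *
          (∑ᶠ χ ∈ {χ : Polynomial F → ℂ | IsDirichletChar Q χ ∧ χ ≠ trivialChar Q},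
            (‖Lhalf q (Q.natDegree - 1) χ‖) ^ 2) -
        ((Q.natDegree : ℝ) - 1)| ≤ C := by
  classical
  have hq2 : 2 ≤ q := hq ▸ Fintype.one_lt_card
  have hq0 : (0:ℝ) ≤ (q:ℝ) := by positivity
  set s : ℝ := Real.sqrt q with hs_def
  have hs0 : 0 ≤ s := Real.sqrt_nonneg _
  have hssq : s ^ 2 = (q:ℝ) := Real.sq_sqrt hq0
  have hs1 : 1 < s := by
    rw [hs_def, show (1:ℝ) = Real.sqrt 1 from Real.sqrt_one.symm]
    exact Real.sqrt_lt_sqrt (by norm_num)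
      (by exact_mod_cast lt_of_lt_of_le one_lt_two hq2)
  refine ⟨1 + 2 / (s - 1) ^ 2, ?_⟩
  intro Q hQm hQirr
  haveI := Fact.mk hQirr
  set d := Q.natDegree with hd_def
  have hd1 : 0 < d := natDegree_pos_iff_degree_pos.mpr (degree_pos_of_irreducible hQirr)
  letI : Fintype (AdjoinRoot Q) := Module.fintypeOfFintype (AdjoinRoot.powerBasisAux' hQm)
  haveI : Fintype (MulChar (AdjoinRoot Q) ℂ) := Fintype.ofFinite _
  -- the value of φ(Q)
  have hqd2 : 2 ≤ q ^ d := le_trans hq2 (Nat.le_self_pow (by omega) q)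
  have hphi : polyPhi Q = q ^ d - 1 := by
    have h0 : polyPhi Q = Nat.card (AdjoinRoot Q)ˣ := rfl
    rw [h0, Nat.card_eq_fintype_card, Fintype.card_units,
      Module.card_fintype (AdjoinRoot.powerBasisAux' hQm), Fintype.card_fin, hq]
  have hphiR : (polyPhi Q : ℝ) = (q:ℝ) ^ d - 1 := by
    rw [hphi, Nat.cast_sub (by omega)]
    push_cast
    ring
  have hqdR : (2:ℝ) ≤ (q:ℝ) ^ d := by exact_mod_cast hqd2
  have hφpos : (0:ℝ) < (polyPhi Q : ℝ) := by rw [hphiR]; linarith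
  -- Finsets of monic polynomials
  set Tn : ℕ → Finset (Polynomial F) := fun n =>
    Finset.univ.image ((↑) : {p : F[X] // p.Monic ∧ p.natDegree = n} → F[X]) with hTn_def
  have hTmem : ∀ n (p : Polynomial F), p ∈ Tn n ↔ p.Monic ∧ p.natDegree = n := by
    intro n p
    simp only [hTn_def, Finset.mem_image, Finset.mem_univ, true_and]
    constructor
    · rintro ⟨a, _, rfl⟩; exact a.2
    · intro h; exact ⟨⟨p, h⟩, rfl⟩
  have hTcard : ∀ n, (Tn n).card = q ^ n := by
    intro n
    rw [hTn_def]
    simp only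
    rw [Finset.card_image_of_injective _ Subtype.val_injective, Finset.card_univ,
      SMAux.card_monic, hq]
  set SF : Finset (Polynomial F) := (Finset.range d).biUnion Tn with hSF_def
  have hSFmem : ∀ p : Polynomial F, p ∈ SF ↔ p.Monic ∧ p.natDegree ≤ d - 1 := by
    intro p
    simp only [hSF_def, Finset.mem_biUnion, Finset.mem_range]
    constructor
    · rintro ⟨n, hn, hp⟩
      obtain ⟨h1, h2⟩ := (hTmem n p).mp hp
      exact ⟨h1, h2 ▸ Nat.le_pred_of_lt hn⟩
    · rintro ⟨h1, h2⟩
      exact ⟨p.natDegree, by omega, (hTmem _ _).mpr ⟨h1, rfl⟩⟩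
  have hSet : {N : Polynomial F | N.Monic ∧ N.natDegree ≤ d - 1} = ↑SF := by
    ext p
    simp only [Set.mem_setOf_eq, Finset.coe_sort_coe, Finset.mem_coe, hSFmem p]
  have hLhalf : ∀ χ : Polynomial F → ℂ, Lhalf q (d-1) χ
      = ∑ N ∈ SF, χ N / ((Real.sqrt ((q:ℝ) ^ N.natDegree) : ℝ) : ℂ) := by
    intro χ
    rw [Lhalf, hSet, finsum_mem_coe_finset]
  set cc : Polynomial F → ℂ := fun N => ((Real.sqrt ((q:ℝ) ^ N.natDegree) : ℝ) : ℂ) with hcc_def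
  have hccsq : ∀ N : Polynomial F, cc N * cc N = (((q:ℝ) ^ N.natDegree : ℝ) : ℂ) := by
    intro N
    rw [hcc_def]
    simp only
    rw [← Complex.ofReal_mul, Real.mul_self_sqrt (by positivity)]
  -- summation by degree
  have hdisj : (↑(Finset.range d) : Set ℕ).PairwiseDisjoint Tn := by
    intro m _ n _ hmn
    refine Finset.disjoint_left.mpr fun p hpm hpn => hmn ?_
    rw [← ((hTmem m p).mp hpm).2, ((hTmem n p).mp hpn).2]
  have hsumC : ∀ f : ℕ → ℂ, ∑ M ∈ SF, f M.natDegree = ∑ n ∈ Finset.range d, (q:ℂ) ^ n * f n := by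
    intro f
    rw [hSF_def, Finset.sum_biUnion hdisj]
    refine Finset.sum_congr rfl fun n _ => ?_
    calc ∑ M ∈ Tn n, f M.natDegree = ∑ M ∈ Tn n, f n :=
          Finset.sum_congr rfl fun M hM => by rw [((hTmem n M).mp hM).2]
      _ = (Tn n).card • f n := Finset.sum_const _
      _ = (q:ℂ) ^ n * f n := by rw [hTcard n, nsmul_eq_mul, Nat.cast_pow]
  have hsumR : ∀ f : ℕ → ℝ, ∑ M ∈ SF, f M.natDegree = ∑ n ∈ Finset.range d, (q:ℝ) ^ n * f n := by
    intro f
    rw [hSF_def, Finset.sum_biUnion hdisj]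
    refine Finset.sum_congr rfl fun n _ => ?_
    calc ∑ M ∈ Tn n, f M.natDegree = ∑ M ∈ Tn n, f n :=
          Finset.sum_congr rfl fun M hM => by rw [((hTmem n M).mp hM).2]
      _ = (Tn n).card • f n := Finset.sum_const _
      _ = (q:ℝ) ^ n * f n := by rw [hTcard n, nsmul_eq_mul, Nat.cast_pow]
  have hcop : ∀ M ∈ SF, IsCoprime M Q := by
    intro M hM
    obtain ⟨h1, h2⟩ := (hSFmem M).mp hM
    have hM0 : M ≠ 0 := h1.ne_zero
    have hlt : M.natDegree < d := by omega
    exact isCoprime_comm.mp (hQirr.coprime_iff_not_dvd.mpr (hQm.not_dvd_of_natDegree_lt hM0 hlt))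
  have hmk_inj : ∀ M ∈ SF, ∀ N ∈ SF, AdjoinRoot.mk Q M = AdjoinRoot.mk Q N → M = N := by
    intro M hM N hN h
    by_contra hne
    rw [AdjoinRoot.mk_eq_mk] at h
    have hsub : M - N ≠ 0 := sub_ne_zero.mpr hne
    obtain ⟨_, h2⟩ := (hSFmem M).mp hM
    obtain ⟨_, h4⟩ := (hSFmem N).mp hN
    have hdeg : (M - N).natDegree < d :=
      lt_of_le_of_lt (natDegree_sub_le M N) (max_lt (by omega) (by omega))
    exact hQm.not_dvd_of_natDegree_lt hsub hdeg h
  -- orthogonality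
  have horth : ∀ M ∈ SF, ∀ N ∈ SF,
      ∑ ψ : MulChar (AdjoinRoot Q) ℂ, ψ (AdjoinRoot.mk Q M) * ψ⁻¹ (AdjoinRoot.mk Q N)
        = if M = N then ((polyPhi Q : ℝ) : ℂ) else 0 := by
    intro M hM N hN
    have hNu : IsUnit (AdjoinRoot.mk Q N) := (SMAux.isUnit_mk_iff hQirr N).mpr (hcop N hN)
    have hN0 : AdjoinRoot.mk Q N ≠ 0 := hNu.ne_zero
    have key : ∀ ψ : MulChar (AdjoinRoot Q) ℂ,
        ψ (AdjoinRoot.mk Q M) * ψ⁻¹ (AdjoinRoot.mk Q N)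
          = ψ (AdjoinRoot.mk Q M * (AdjoinRoot.mk Q N)⁻¹) := by
      intro ψ
      rw [MulChar.inv_apply', ← map_mul]
    simp_rw [key]
    rw [SMAux.sum_mulChar]
    have hphidef : polyPhi Q = Nat.card (AdjoinRoot Q)ˣ := rfl
    have hiff : AdjoinRoot.mk Q M * (AdjoinRoot.mk Q N)⁻¹ = 1 ↔ M = N := by
      rw [mul_inv_eq_one₀ hN0]
      exact ⟨hmk_inj M hM N hN, fun h => h ▸ rfl⟩
    by_cases h : M = N
    · rw [if_pos (hiff.mpr h), if_pos h, ← hphidef, Complex.ofReal_natCast]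
    · rw [if_neg (fun hh => h (hiff.mp hh)), if_neg h]
  -- the square of a single L-value
  have habs2 : ∀ ψ : MulChar (AdjoinRoot Q) ℂ,
      ((‖Lhalf q (d - 1) (SMAux.liftChar Q ψ)‖ : ℝ) : ℂ) ^ 2
        = ∑ M ∈ SF, ∑ N ∈ SF,
            (ψ (AdjoinRoot.mk Q M) * ψ⁻¹ (AdjoinRoot.mk Q N)) / (cc M * cc N) := by
    intro ψ
    set L := Lhalf q (d-1) (SMAux.liftChar Q ψ) with hL
    have h1 : ((‖L‖ : ℝ) : ℂ) ^ 2 = L * (starRingEnd ℂ) L := by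
      rw [← Complex.ofReal_pow, Complex.sq_norm, Complex.mul_conj]
    have hLeq : L = ∑ N ∈ SF, ψ (AdjoinRoot.mk Q N) / cc N := hLhalf _
    have hLconj : (starRingEnd ℂ) L = ∑ N ∈ SF, ψ⁻¹ (AdjoinRoot.mk Q N) / cc N := by
      rw [hLeq, map_sum]
      refine Finset.sum_congr rfl fun N _ => ?_
      rw [map_div₀, hcc_def]
      simp only
      rw [Complex.conj_ofReal, starRingEnd_apply, MulChar.star_apply']
    rw [h1, hLconj, hLeq, Finset.sum_mul_sum]
    refine Finset.sum_congr rfl fun M _ => Finset.sum_congr rfl fun N _ => ?_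
    rw [div_mul_div_comm]
  -- total sum over all characters
  have htotal : ∑ ψ : MulChar (AdjoinRoot Q) ℂ,
      (‖Lhalf q (d - 1) (SMAux.liftChar Q ψ)‖) ^ 2 = (polyPhi Q : ℝ) * d := by
    apply Complex.ofReal_injective
    push_cast
    calc ∑ ψ : MulChar (AdjoinRoot Q) ℂ,
          ((‖Lhalf q (d - 1) (SMAux.liftChar Q ψ)‖ : ℝ) : ℂ) ^ 2
        = ∑ ψ : MulChar (AdjoinRoot Q) ℂ, ∑ M ∈ SF, ∑ N ∈ SF,
            (ψ (AdjoinRoot.mk Q M) * ψ⁻¹ (AdjoinRoot.mk Q N)) / (cc M * cc N) :=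
          Finset.sum_congr rfl fun ψ _ => habs2 ψ
      _ = ∑ M ∈ SF, ∑ N ∈ SF, (∑ ψ : MulChar (AdjoinRoot Q) ℂ,
            ψ (AdjoinRoot.mk Q M) * ψ⁻¹ (AdjoinRoot.mk Q N)) / (cc M * cc N) := by
          rw [Finset.sum_comm]
          refine Finset.sum_congr rfl fun M _ => ?_
          rw [Finset.sum_comm]
          refine Finset.sum_congr rfl fun N _ => ?_
          rw [← Finset.sum_div]
      _ = ∑ M ∈ SF, ((polyPhi Q : ℝ) : ℂ) / (cc M * cc M) := by
          refine Finset.sum_congr rfl fun M hM => ?_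
          calc ∑ N ∈ SF, (∑ ψ : MulChar (AdjoinRoot Q) ℂ,
                ψ (AdjoinRoot.mk Q M) * ψ⁻¹ (AdjoinRoot.mk Q N)) / (cc M * cc N)
              = ∑ N ∈ SF, if M = N then ((polyPhi Q : ℝ) : ℂ) / (cc M * cc N) else 0 := by
                refine Finset.sum_congr rfl fun N hN => ?_
                rw [horth M hM N hN]
                split_ifs with h
                · rfl
                · exact zero_div _
            _ = ((polyPhi Q : ℝ) : ℂ) / (cc M * cc M) := by
                rw [Finset.sum_ite_eq SF M (fun N => ((polyPhi Q : ℝ) : ℂ) / (cc M * cc N)),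
                  if_pos hM]
      _ = ∑ M ∈ SF, ((polyPhi Q : ℝ) : ℂ) / ((q:ℂ)) ^ M.natDegree := by
          refine Finset.sum_congr rfl fun M _ => ?_
          rw [hccsq M]
          norm_cast
      _ = ∑ n ∈ Finset.range d, (q:ℂ) ^ n * (((polyPhi Q : ℝ) : ℂ) / (q:ℂ) ^ n) :=
          hsumC (fun n => ((polyPhi Q : ℝ) : ℂ) / (q:ℂ) ^ n)
      _ = ∑ n ∈ Finset.range d, ((polyPhi Q : ℝ) : ℂ) := by
          refine Finset.sum_congr rfl fun n _ => ?_
          have hqn : ((q:ℂ)) ^ n ≠ 0 := by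
            apply pow_ne_zero
            exact_mod_cast (by omega : q ≠ 0)
          rw [mul_comm, div_mul_cancel₀ _ hqn]
      _ = ((polyPhi Q : ℝ) : ℂ) * d := by
          rw [Finset.sum_const, Finset.card_range, nsmul_eq_mul]
          push_cast
          ring
  -- reduce the finsum to the full character sum minus the trivial term
  have hE : (∑ᶠ χ ∈ {χ : Polynomial F → ℂ | IsDirichletChar Q χ ∧ χ ≠ trivialChar Q},
        (‖Lhalf q (d - 1) χ‖) ^ 2)
      = (polyPhi Q : ℝ) * d - (‖Lhalf q (d - 1) (trivialChar Q)‖) ^ 2 := by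
    rw [SMAux.char_set_eq hQirr,
      finsum_mem_image ((SMAux.liftChar_injective Q).injOn)]
    have hfin : {ψ : MulChar (AdjoinRoot Q) ℂ | ψ ≠ 1}.Finite := Set.toFinite _
    rw [finsum_mem_eq_finite_toFinset_sum _ hfin]
    have hTF : hfin.toFinset = Finset.univ.erase 1 := by
      ext ψ
      simp [Set.Finite.mem_toFinset]
    rw [hTF, Finset.sum_erase_eq_sub (Finset.mem_univ 1), htotal, SMAux.liftChar_one hQirr]
  -- bound the trivial character contribution
  have hsqrtpow : ∀ n : ℕ, Real.sqrt ((q:ℝ) ^ n) = s ^ n := by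
    intro n
    have h2 : (s ^ n) ^ 2 = (q:ℝ) ^ n := by
      rw [← pow_mul, mul_comm, pow_mul, hssq]
    rw [← h2, Real.sqrt_sq (pow_nonneg hs0 n)]
  set t : ℝ := ∑ n ∈ Finset.range d, s ^ n with ht_def
  have ht0 : 0 ≤ t := Finset.sum_nonneg fun n _ => pow_nonneg hs0 n
  have htgeom : t * (s - 1) = s ^ d - 1 := geom_sum_mul s d
  have ht_bound : ‖Lhalf q (d - 1) (trivialChar Q)‖ ≤ t := by
    rw [hLhalf]
    refine le_trans (norm_sum_le _ _) ?_
    have heq : ∀ M ∈ SF, ‖trivialChar Q M / ((Real.sqrt ((q:ℝ) ^ M.natDegree) : ℝ) : ℂ)‖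
        = 1 / Real.sqrt ((q:ℝ) ^ M.natDegree) := by
      intro M hM
      rw [trivialChar]
      rw [if_pos (hcop M hM), norm_div, norm_one, Complex.norm_real, Real.norm_eq_abs,
        abs_of_nonneg (Real.sqrt_nonneg _)]
    rw [Finset.sum_congr rfl heq, hsumR (fun n => 1 / Real.sqrt ((q:ℝ) ^ n))]
    rw [ht_def]
    refine le_of_eq (Finset.sum_congr rfl fun n _ => ?_)
    have hqs : ((q:ℝ)) ^ n = s ^ n * s ^ n := by rw [← hssq]; ring
    rw [hsqrtpow n, mul_one_div, hqs, mul_div_assoc,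
      div_self (ne_of_gt (pow_pos (lt_trans zero_lt_one hs1) n)), mul_one]
  -- final arithmetic
  set X : ℝ := (‖Lhalf q (d - 1) (trivialChar Q)‖) ^ 2 with hX_def
  have hX0 : 0 ≤ X := by positivity
  have hXt : X ≤ t ^ 2 := by
    rw [hX_def]
    exact pow_le_pow_left₀ (norm_nonneg _) ht_bound 2
  have hsd : (s ^ d) ^ 2 = (q:ℝ) ^ d := by rw [← pow_mul, mul_comm, pow_mul, hssq]
  have hXq : X * (s - 1) ^ 2 ≤ (q:ℝ) ^ d := by
    have h1 : (t * (s - 1)) ^ 2 = (s ^ d - 1) ^ 2 := by rw [htgeom]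
    have hsd1 : (1:ℝ) ≤ s ^ d := one_le_pow₀ hs1.le
    nlinarith [h1, hXt, sq_nonneg (s - 1), hsd, hsd1, pow_nonneg hs0 d, ht0]
  have hXφ : X / (polyPhi Q : ℝ) ≤ 2 / (s - 1) ^ 2 := by
    rw [div_le_div_iff₀ hφpos (pow_pos (sub_pos.mpr hs1) 2)]
    nlinarith [hXq, hphiR, hqdR]
  have hXφ0 : 0 ≤ X / (polyPhi Q : ℝ) := div_nonneg hX0 (le_of_lt hφpos)
  have hdR : (1:ℝ) ≤ (d:ℝ) := by exact_mod_cast hd1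
  rw [hE]
  have hsimp : (polyPhi Q : ℝ)⁻¹ * ((polyPhi Q : ℝ) * d - X) - ((d:ℝ) - 1)
      = 1 - X / (polyPhi Q : ℝ) := by
    field_simp
    ring
  rw [hsimp]
  have hB0 : (0:ℝ) ≤ 2 / (s - 1) ^ 2 := by positivity
  rw [abs_le]
  constructor
  · linarith [hXφ, hB0]
  · linarith [hXφ0, hB0]
end
end

section
/- Let Q ∈ F_q[x] be monic irreducible and 𝔇 = deg Q − 1, and let X(Q) = {χ ≠ χ₀ mod Q : L(1/2,χ) ≠ 0}. Then |X(Q)| ≥ c · q^𝔇/𝔇 for a constant c > 0 depending only on q; equivalently, the proportion of nontrivial characters χ modulo Q with L(1/2,χ) ≠ 0 is ≫ 1/𝔇. -/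
open Polynomial

noncomputable section

variable {F : Type*}

private lemma aux_nat_sq : ∀ n : ℕ, 6 ≤ n → (2*n+3)^2 ≤ 2^(n+2) := by
  intro n hn
  induction n with
  | zero => omega
  | succ m ih =>
    rcases Nat.lt_or_ge m 6 with h | h
    · have : m = 5 := by omega
      subst this; norm_num
    · have h2 := ih h
      have h3 : (2*(m+1)+3)^2 ≤ 2*(2*m+3)^2 := by nlinarith
      calc (2*(m+1)+3)^2 ≤ 2*(2*m+3)^2 := h3
        _ ≤ 2*2^(m+2) := by omega
        _ = 2^(m+1+2) := by ring

private lemma aux_sqrt_pow (x : ℝ) (hx : 0 ≤ x) (n : ℕ) :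
    Real.sqrt (x^n) = (Real.sqrt x)^n := by
  induction n with
  | zero => simp
  | succ m ih => rw [pow_succ, Real.sqrt_mul (pow_nonneg hx m), ih, pow_succ]

private lemma aux_monicLE_finite (F : Type*) [Semiring F] [Finite F] (m : ℕ) :
    {N : Polynomial F | N.Monic ∧ N.natDegree ≤ m}.Finite := by
  apply Set.Finite.of_finite_image
    (f := fun N : Polynomial F => fun i : Fin (m+1) => N.coeff i) (Set.toFinite _)
  intro M hM N hN h
  apply Polynomial.ext; intro k
  rcases le_or_gt k m with hk | hk
  · exact congrFun h ⟨k, by omega⟩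
  · rw [Polynomial.coeff_eq_zero_of_natDegree_lt (lt_of_le_of_lt hM.2 hk),
        Polynomial.coeff_eq_zero_of_natDegree_lt (lt_of_le_of_lt hN.2 hk)]

private lemma aux_sum_mulChar {K : Type*} [CommMonoid K] [Finite K] [DecidableEq K]
    [Fintype (MulChar K ℂ)] (a : K) :
    ∑ ψ : MulChar K ℂ, ψ a = if a = 1 then (Fintype.card (MulChar K ℂ) : ℂ) else 0 := by
  haveI : NeZero ((Monoid.exponent Kˣ : ℕ) : ℂ) :=
    ⟨Nat.cast_ne_zero.mpr Monoid.exponent_ne_zero_of_finite⟩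
  split_ifs with ha
  · subst ha
    simp only [MulChar.map_one, Finset.sum_const, Finset.card_univ, nsmul_eq_mul, mul_one]
  · obtain ⟨χ, hχ⟩ := MulChar.exists_apply_ne_one_of_hasEnoughRootsOfUnity K ℂ ha
    refine eq_zero_of_mul_eq_self_left hχ ?_
    simp only [Finset.mul_sum, ← MulChar.mul_apply]
    exact Fintype.sum_bijective _ (Group.mulLeft_bijective χ) _ _ fun χ' ↦ rfl

private lemma aux_card_mulChar {K : Type*} [CommMonoid K] [Finite K] :
    Nat.card (MulChar K ℂ) = Nat.card Kˣ := by
  haveI : NeZero ((Monoid.exponent Kˣ : ℕ) : ℂ) :=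
    ⟨Nat.cast_ne_zero.mpr Monoid.exponent_ne_zero_of_finite⟩
  exact MulChar.card_eq_card_units_of_hasEnoughRootsOfUnity K ℂ


set_option maxHeartbeats 1000000 in
/-- Non-vanishing: for monic irreducible `Q` with `𝔇 = deg Q - 1`, the number of
nontrivial characters `χ` modulo `Q` with `L(1/2,χ) ≠ 0` is at least `c · q^𝔇 / 𝔇`
for a constant `c > 0` depending only on `q`. -/
theorem nonvanishing_proportion
    (F : Type*) [Field F] [Fintype F] (q : ℕ) (hq : Fintype.card F = q) :
    ∃ c : ℝ, 0 < c ∧ ∀ Q : Polynomial F, Q.Monic → Irreducible Q →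
      c * (q : ℝ) ^ (Q.natDegree - 1) / ((Q.natDegree : ℝ) - 1) ≤
        ({χ : Polynomial F → ℂ | IsDirichletChar Q χ ∧ χ ≠ trivialChar Q ∧
            Lhalf q (Q.natDegree - 1) χ ≠ 0}.ncard : ℝ) := by
  classical
  have hq2 : 2 ≤ q := by rw [← hq]; exact Fintype.one_lt_card
  have hqR : (2:ℝ) ≤ (q:ℝ) := by exact_mod_cast hq2
  have hq0 : (0:ℝ) < q := by linarith
  refine ⟨((q:ℝ)^5)⁻¹, inv_pos.mpr (by positivity), fun Q hQm hQi => ?_⟩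
  set d := Q.natDegree with hd
  have hd1 : 1 ≤ d := by
    rcases Nat.eq_zero_or_pos d with h | h
    · exact absurd (hQm.natDegree_eq_zero.mp h ▸ hQi) not_irreducible_one
    · exact h
  rcases eq_or_lt_of_le hd1 with h1 | h2
  · have hz : ((d:ℝ) - 1) = 0 := by rw [← h1]; norm_num
    rw [hz, div_zero]
    exact Nat.cast_nonneg _
  -- main case : 2 ≤ d
  have hD1 : 1 ≤ d - 1 := by omega
  set 𝔇 := d - 1 with hDdef
  have hdD : d = 𝔇 + 1 := by omega
  haveI : Fact (Irreducible Q) := ⟨hQi⟩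
  set K := AdjoinRoot Q with hK
  have hQ0 : Q ≠ 0 := hQm.ne_zero
  let pb : PowerBasis F K := AdjoinRoot.powerBasis' hQm
  haveI : Fintype K := Fintype.ofEquiv _ pb.basis.equivFun.toEquiv.symm
  have hcardK : Fintype.card K = q ^ d := by
    rw [Module.card_fintype pb.basis, hq, Fintype.card_fin]
    rfl
  have hUnits : Nat.card Kˣ = q ^ d - 1 := by
    rw [Nat.card_units, Nat.card_eq_fintype_card, hcardK]
  haveI : Fintype (MulChar K ℂ) := Fintype.ofFinite _
  set U : ℕ := Fintype.card (MulChar K ℂ) with hUdef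
  have hU : U = q ^ d - 1 := by
    rw [hUdef, ← Nat.card_eq_fintype_card, aux_card_mulChar, hUnits]
  set π : Polynomial F → K := fun A => AdjoinRoot.mk Q A with hπ
  have hSfin := aux_monicLE_finite F 𝔇
  set S : Finset (Polynomial F) := hSfin.toFinset with hS
  have hmemS : ∀ {N : Polynomial F}, N ∈ S ↔ N.Monic ∧ N.natDegree ≤ 𝔇 := fun {N} => by
    simp [hS, Set.Finite.mem_toFinset]
  have h1S : (1 : Polynomial F) ∈ S := hmemS.mpr ⟨monic_one, by simp⟩
  have hπinj : ∀ M ∈ S, ∀ N ∈ S, π M = π N → M = N := by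
    intro M hM N hN h
    by_contra hne
    have hdvd : Q ∣ M - N := AdjoinRoot.mk_eq_mk.mp h
    have hMN : M - N ≠ 0 := sub_ne_zero_of_ne hne
    have h3 := Polynomial.natDegree_le_of_dvd hdvd hMN
    have h4 : (M - N).natDegree ≤ 𝔇 :=
      le_trans (Polynomial.natDegree_sub_le M N) (max_le (hmemS.mp hM).2 (hmemS.mp hN).2)
    omega
  have hπ0 : ∀ N ∈ S, π N ≠ 0 := by
    intro N hN
    exact AdjoinRoot.mk_ne_zero_of_natDegree_lt hQm (hmemS.mp hN).1.ne_zero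
      (by have := (hmemS.mp hN).2; omega)
  have hπunit : ∀ N ∈ S, IsUnit (π N) := fun N hN => isUnit_iff_ne_zero.mpr (hπ0 N hN)
  set s : Polynomial F → ℝ := fun N => Real.sqrt ((q:ℝ) ^ N.natDegree) with hsdef
  have hs_pos : ∀ N : Polynomial F, 0 < s N := fun N => Real.sqrt_pos.mpr (by positivity)
  have hLdef : ∀ χ : Polynomial F → ℂ, Lhalf q 𝔇 χ = ∑ N ∈ S, χ N / (s N : ℂ) := by
    intro χ
    exact finsum_mem_eq_finite_toFinset_sum _ hSfin
  set L : MulChar K ℂ → ℂ := fun ψ => ∑ N ∈ S, ψ (π N) / (s N : ℂ) with hLpsi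
  have hLL : ∀ ψ : MulChar K ℂ, Lhalf q 𝔇 (fun A => ψ (π A)) = L ψ := fun ψ => hLdef _
  have horth : ∀ a : K, ∑ ψ : MulChar K ℂ, ψ a = if a = 1 then (U:ℂ) else 0 :=
    fun a => aux_sum_mulChar a
  have hs1 : s 1 = 1 := by simp [hsdef]
  -- first moment
  have hFM : ∑ ψ : MulChar K ℂ, L ψ = (U:ℂ) := by
    rw [hLpsi]
    rw [Finset.sum_comm]
    have step : ∀ N ∈ S, ∑ ψ : MulChar K ℂ, ψ (π N) / (s N:ℂ)
        = (if π N = 1 then (U:ℂ) else 0) / (s N:ℂ) := by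
      intro N hN
      rw [← Finset.sum_div, horth]
    rw [Finset.sum_congr rfl step]
    rw [Finset.sum_eq_single_of_mem 1 h1S]
    · have : π (1 : Polynomial F) = 1 := map_one (AdjoinRoot.mk Q)
      rw [if_pos this, hs1]
      norm_num
    · intro N hN hne
      have hne1 : π N ≠ 1 := by
        intro h
        exact hne (hπinj N hN 1 h1S (by rw [h]; exact (map_one (AdjoinRoot.mk Q)).symm))
      rw [if_neg hne1, zero_div]

  -- conjugation facts
  haveI : NeZero (Fintype.card Kˣ) := ⟨Fintype.card_ne_zero⟩
  have hconj : ∀ (ψ : MulChar K ℂ) (N : Polynomial F), N ∈ S →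
      (starRingEnd ℂ) (ψ (π N)) = ψ ((π N)⁻¹) := by
    intro ψ N hN
    calc (starRingEnd ℂ) (ψ (π N)) = star (ψ (π N)) := rfl
      _ = ψ⁻¹ (π N) := MulChar.star_apply' ψ (π N)
      _ = ψ ((π N)⁻¹) := MulChar.inv_apply' ψ (π N)
  have hkey : ∀ M ∈ S, ∀ N ∈ S,
      ∑ ψ : MulChar K ℂ, ψ (π M) * (starRingEnd ℂ) (ψ (π N)) = if M = N then (U:ℂ) else 0 := by
    intro M hM N hN
    have h1 : ∀ ψ : MulChar K ℂ, ψ (π M) * (starRingEnd ℂ) (ψ (π N)) = ψ (π M * (π N)⁻¹) := by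
      intro ψ; rw [hconj ψ N hN, ← map_mul]
    simp only [h1]
    rw [horth]
    have hiff : π M * (π N)⁻¹ = 1 ↔ M = N := by
      rw [mul_inv_eq_one₀ (hπ0 N hN)]
      exact ⟨fun h => hπinj M hM N hN h, fun h => by rw [h]⟩
    by_cases h : M = N
    · rw [if_pos h, if_pos (hiff.mpr h)]
    · rw [if_neg h, if_neg (fun hh => h (hiff.mp hh))]
  set W2 : ℝ := ∑ N ∈ S, ((q:ℝ) ^ N.natDegree)⁻¹ with hW2def
  have hss : ∀ N : Polynomial F, (s N : ℝ) * s N = (q:ℝ) ^ N.natDegree := fun N =>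
    Real.mul_self_sqrt (by positivity)
  -- second moment
  have hSM : ∑ ψ : MulChar K ℂ, ‖L ψ‖ ^ 2 = (U:ℝ) * W2 := by
    have expand : ∀ ψ : MulChar K ℂ, L ψ * (starRingEnd ℂ) (L ψ)
        = ∑ M ∈ S, ∑ N ∈ S, ψ (π M) * (starRingEnd ℂ) (ψ (π N)) / ((s M : ℂ) * (s N : ℂ)) := by
      intro ψ
      rw [hLpsi, map_sum, Finset.sum_mul_sum]
      refine Finset.sum_congr rfl fun M hM => Finset.sum_congr rfl fun N hN => ?_
      rw [map_div₀, Complex.conj_ofReal, div_mul_div_comm]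
    have hC : ∑ ψ : MulChar K ℂ, (L ψ * (starRingEnd ℂ) (L ψ)) = (((U:ℝ) * W2 : ℝ) : ℂ) := by
      calc ∑ ψ : MulChar K ℂ, (L ψ * (starRingEnd ℂ) (L ψ))
          = ∑ ψ : MulChar K ℂ, ∑ M ∈ S, ∑ N ∈ S,
              ψ (π M) * (starRingEnd ℂ) (ψ (π N)) / ((s M : ℂ) * (s N : ℂ)) :=
            Finset.sum_congr rfl fun ψ _ => expand ψ
        _ = ∑ M ∈ S, ∑ N ∈ S, ∑ ψ : MulChar K ℂ,
              ψ (π M) * (starRingEnd ℂ) (ψ (π N)) / ((s M : ℂ) * (s N : ℂ)) := by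
            rw [Finset.sum_comm]
            exact Finset.sum_congr rfl fun M _ => Finset.sum_comm
        _ = ∑ M ∈ S, ∑ N ∈ S,
              (if M = N then (U:ℂ) else 0) / ((s M : ℂ) * (s N : ℂ)) := by
            refine Finset.sum_congr rfl fun M hM => Finset.sum_congr rfl fun N hN => ?_
            rw [← Finset.sum_div, hkey M hM N hN]
        _ = ∑ M ∈ S, (U:ℂ) / ((s M : ℂ) * (s M : ℂ)) := by
            refine Finset.sum_congr rfl fun M hM => ?_
            rw [Finset.sum_eq_single_of_mem M hM]
            · rw [if_pos rfl]
            · intro N hN hne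
              rw [if_neg (fun h => hne h.symm), zero_div]
        _ = ∑ M ∈ S, ((((U:ℝ) * ((q:ℝ) ^ M.natDegree)⁻¹ : ℝ)) : ℂ) := by
            refine Finset.sum_congr rfl fun M hM => ?_
            have h5 : ((s M : ℂ)) * (s M : ℂ) = (((q:ℝ) ^ M.natDegree : ℝ) : ℂ) := by
              rw [← Complex.ofReal_mul, hss M]
            rw [h5, div_eq_mul_inv, ← Complex.ofReal_inv, ← Complex.ofReal_natCast,
              ← Complex.ofReal_mul]
        _ = (((U:ℝ) * W2 : ℝ) : ℂ) := by
            rw [← Complex.ofReal_sum, hW2def, Finset.mul_sum]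
    have habs : ((∑ ψ : MulChar K ℂ, ‖L ψ‖ ^ 2 : ℝ) : ℂ) = (((U:ℝ) * W2 : ℝ) : ℂ) := by
      rw [← hC, Complex.ofReal_sum]
      refine Finset.sum_congr rfl fun ψ _ => ?_
      rw [Complex.sq_norm, Complex.mul_conj]
    exact_mod_cast habs
  -- counting bound
  have hcount : ∀ n : ℕ, (S.filter (fun N => N.natDegree = n)).card ≤ q ^ n := by
    intro n
    have hinjOn : Set.InjOn (fun N : Polynomial F => fun i : Fin n => N.coeff i)
        (S.filter (fun N => N.natDegree = n)) := by
      intro M hM N hN h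
      simp only [Finset.coe_filter, Set.mem_setOf_eq] at hM hN
      obtain ⟨hMS, hMn⟩ := hM
      obtain ⟨hNS, hNn⟩ := hN
      have hMm := (hmemS.mp hMS).1
      have hNm := (hmemS.mp hNS).1
      apply Polynomial.ext; intro k
      rcases lt_trichotomy k n with hk | hk | hk
      · exact congrFun h ⟨k, hk⟩
      · subst hk
        have e1 : M.coeff k = 1 := by rw [← hMn]; exact hMm.coeff_natDegree
        have e2 : N.coeff k = 1 := by rw [← hNn]; exact hNm.coeff_natDegree
        rw [e1, e2]
      · rw [Polynomial.coeff_eq_zero_of_natDegree_lt (hMn ▸ hk),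
            Polynomial.coeff_eq_zero_of_natDegree_lt (hNn ▸ hk)]
    have hle := Finset.card_le_card_of_injOn
      (t := (Finset.univ : Finset (Fin n → F)))
      (fun N : Polynomial F => fun i : Fin n => N.coeff i)
      (fun N _ => Finset.mem_univ _) hinjOn
    rwa [Finset.card_univ, Fintype.card_fun, hq, Fintype.card_fin] at hle
  have hWbound : ∀ r : ℕ → ℝ, (∀ n, 0 ≤ r n) →
      ∑ N ∈ S, r N.natDegree ≤ ∑ n ∈ Finset.range (𝔇+1), (q:ℝ)^n * r n := by
    intro r hr
    have hmaps : ∀ N ∈ S, N.natDegree ∈ Finset.range (𝔇+1) := fun N hN =>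
      Finset.mem_range.mpr (by have := (hmemS.mp hN).2; omega)
    rw [← Finset.sum_fiberwise_of_maps_to hmaps (fun N => r N.natDegree)]
    refine Finset.sum_le_sum fun n hn => ?_
    rw [Finset.sum_congr rfl (fun N hN => by rw [(Finset.mem_filter.mp hN).2])]
    rw [Finset.sum_const, nsmul_eq_mul]
    exact mul_le_mul_of_nonneg_right (by exact_mod_cast hcount n) (hr n)
  have hW2le : W2 ≤ (𝔇:ℝ) + 1 := by
    have hb := hWbound (fun n => ((q:ℝ)^n)⁻¹) (fun n => by positivity)
    calc W2 ≤ ∑ n ∈ Finset.range (𝔇+1), (q:ℝ)^n * ((q:ℝ)^n)⁻¹ := hb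
      _ = ∑ n ∈ Finset.range (𝔇+1), (1:ℝ) :=
          Finset.sum_congr rfl fun n _ => mul_inv_cancel₀ (by positivity)
      _ = (𝔇:ℝ) + 1 := by rw [Finset.sum_const, Finset.card_range]; push_cast; ring
  set B : ℝ := ∑ n ∈ Finset.range (𝔇+1), (Real.sqrt q)^n with hBdef
  have hsqq : Real.sqrt (q:ℝ) * Real.sqrt (q:ℝ) = (q:ℝ) := Real.mul_self_sqrt hq0.le
  have habs1 : ∀ (ψ : MulChar K ℂ) (N : Polynomial F), N ∈ S → ‖ψ (π N)‖ = 1 := by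
    intro ψ N hN
    have h6 : ψ (π N) = ψ ((hπunit N hN).unit : K) := by rw [IsUnit.unit_spec]
    rw [h6, ← MulChar.coe_equivToUnitHom]
    exact Complex.norm_eq_one_of_mem_rootsOfUnity (ψ.apply_mem_rootsOfUnity _)
  have habsL : ∀ ψ : MulChar K ℂ, ‖L ψ‖ ≤ B := by
    intro ψ
    have t1 : ‖L ψ‖ ≤ ∑ N ∈ S, ‖ψ (π N) / (s N:ℂ)‖ := by
      rw [hLpsi]; exact norm_sum_le _ _
    have t2 : ∑ N ∈ S, ‖ψ (π N) / (s N:ℂ)‖ = ∑ N ∈ S, (s N)⁻¹ := by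
      refine Finset.sum_congr rfl fun N hN => ?_
      rw [norm_div, habs1 ψ N hN, Complex.norm_real, Real.norm_eq_abs, abs_of_pos (hs_pos N), one_div]
    have t3 : ∑ N ∈ S, (s N)⁻¹ ≤ ∑ n ∈ Finset.range (𝔇+1), (q:ℝ)^n * (Real.sqrt ((q:ℝ)^n))⁻¹ :=
      hWbound (fun n => (Real.sqrt ((q:ℝ)^n))⁻¹) (fun n => by positivity)
    have t4 : ∀ n ∈ Finset.range (𝔇+1), (q:ℝ)^n * (Real.sqrt ((q:ℝ)^n))⁻¹ = (Real.sqrt q)^n := by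
      intro n _
      rw [aux_sqrt_pow _ hq0.le]
      have h7 : (Real.sqrt q)^n * (Real.sqrt q)^n = (q:ℝ)^n := by rw [← mul_pow, hsqq]
      rw [← h7, mul_inv_cancel_right₀ (pow_ne_zero _ (Real.sqrt_pos.mpr hq0).ne')]
    calc ‖L ψ‖ ≤ ∑ N ∈ S, (s N)⁻¹ := by rw [← t2]; exact t1
      _ ≤ ∑ n ∈ Finset.range (𝔇+1), (q:ℝ)^n * (Real.sqrt ((q:ℝ)^n))⁻¹ := t3
      _ = B := by rw [hBdef]; exact Finset.sum_congr rfl t4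
  set T : Finset (MulChar K ℂ) := Finset.univ.filter (fun ψ => ψ ≠ 1 ∧ L ψ ≠ 0) with hT
  have hsplit : ∑ ψ ∈ T, L ψ = (U:ℂ) - L 1 := by
    have h8 : ∑ ψ ∈ Finset.univ \ T, L ψ = L 1 := by
      refine Finset.sum_eq_single_of_mem 1 ?_ ?_
      · simp only [Finset.mem_sdiff, Finset.mem_univ, true_and, hT, Finset.mem_filter,
          not_and_or, not_not]
        tauto
      · intro ψ hψ hne
        have h9 := Finset.mem_sdiff.mp hψ
        simp only [hT, Finset.mem_filter, Finset.mem_univ, true_and, not_and_or, not_not] at h9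
        rcases h9 with h | h
        · exact absurd h hne
        · exact h
    have h9 : ∑ ψ ∈ Finset.univ \ T, L ψ + ∑ ψ ∈ T, L ψ = ∑ ψ : MulChar K ℂ, L ψ :=
      Finset.sum_sdiff (Finset.subset_univ T)
    rw [h8, hFM] at h9
    linear_combination h9
  have hTub : (U:ℝ) - B ≤ ∑ ψ ∈ T, ‖L ψ‖ := by
    have h10 : ‖∑ ψ ∈ T, L ψ‖ ≤ ∑ ψ ∈ T, ‖L ψ‖ :=
      norm_sum_le _ _
    have h11 := norm_add_le ((U:ℂ) - L 1) (L 1)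
    rw [sub_add_cancel] at h11
    rw [Complex.norm_natCast] at h11
    have h13 := habsL 1
    rw [hsplit] at h10
    linarith
  -- the bijection with the character set
  have hunit_iff : ∀ A : Polynomial F, IsUnit (π A) ↔ IsCoprime A Q := by
    intro A
    rw [isUnit_iff_ne_zero]
    have h20 : π A = 0 ↔ Q ∣ A := AdjoinRoot.mk_eq_zero
    constructor
    · intro h
      exact (hQi.coprime_iff_not_dvd.mpr (fun hd => h (h20.mpr hd))).symm
    · intro h hzero
      exact hQi.not_isUnit (h.symm.isUnit_of_dvd' dvd_rfl (h20.mp hzero))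
  have hjtriv : (fun A => (1 : MulChar K ℂ) (π A)) = trivialChar Q := by
    funext A
    by_cases h : IsCoprime A Q
    · simp only [trivialChar]
      rw [if_pos h]
      exact MulChar.one_apply ((hunit_iff A).mpr h)
    · simp only [trivialChar]
      rw [if_neg h]
      exact MulChar.map_nonunit _ (fun hu => h ((hunit_iff A).mp hu))
  have hEq : {χ : Polynomial F → ℂ | IsDirichletChar Q χ ∧ χ ≠ trivialChar Q ∧
      Lhalf q 𝔇 χ ≠ 0} = (fun (ψ : MulChar K ℂ) => (fun A => ψ (π A))) '' (T : Set (MulChar K ℂ)) := by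
    ext χ
    simp only [Set.mem_setOf_eq, Set.mem_image, Finset.mem_coe]
    constructor
    · rintro ⟨⟨hper, hmul, hcop⟩, hnt, hL0⟩
      have hconst : ∀ A B : Polynomial F, π A = π B → χ A = χ B := by
        intro A B h
        obtain ⟨C, hC⟩ : Q ∣ A - B := AdjoinRoot.mk_eq_mk.mp h
        have hAB : A = B + C * Q := by linear_combination hC
        rw [hAB, hper B C]
      obtain ⟨rep, hrep⟩ : ∃ rep : K → Polynomial F, ∀ k, π (rep k) = k := by
        have hsurj : Function.Surjective (AdjoinRoot.mk Q) := AdjoinRoot.mk_surjective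
        choose rep hrep' using hsurj
        exact ⟨rep, hrep'⟩
      have hχ1 : χ 1 = 1 := by
        have hne := (hcop 1).mpr isCoprime_one_left
        have h21 : χ 1 * χ 1 = χ 1 * 1 := by
          rw [mul_one, ← hmul 1 1, one_mul]
        exact mul_left_cancel₀ hne h21
      set ψ : MulChar K ℂ :=
        { toFun := fun k => χ (rep k)
          map_one' := by
            show χ (rep 1) = 1
            have h22 : π (rep 1) = π 1 := by rw [hrep]; exact (map_one (AdjoinRoot.mk Q)).symm
            rw [hconst _ _ h22, hχ1]
          map_mul' := by
            intro a b
            show χ (rep (a*b)) = χ (rep a) * χ (rep b)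
            have h23 : π (rep a * rep b) = a * b := by
              show (AdjoinRoot.mk Q) (rep a * rep b) = a * b
              rw [map_mul]
              exact congrArg₂ (· * ·) (hrep a) (hrep b)
            have h22 : π (rep (a*b)) = π (rep a * rep b) := by rw [hrep, h23]
            rw [hconst _ _ h22, hmul]
          map_nonunit' := by
            intro a ha
            have ha0 : a = 0 := by
              by_contra h
              exact ha (isUnit_iff_ne_zero.mpr h)
            subst ha0
            show χ (rep 0) = 0
            have hdvd : Q ∣ rep 0 := by
              rw [← AdjoinRoot.mk_eq_zero]
              exact hrep 0
            by_contra h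
            exact hQi.not_isUnit (((hcop (rep 0)).mp h).symm.isUnit_of_dvd' dvd_rfl hdvd) }
        with hψdef
      have hjψ : (fun A => ψ (π A)) = χ := by
        funext A
        exact hconst _ _ (hrep (π A))
      refine ⟨ψ, ?_, hjψ⟩
      rw [hT, Finset.mem_filter]
      refine ⟨Finset.mem_univ _, ?_, ?_⟩
      · -- ψ ≠ 1
        intro h1'
        apply hnt
        rw [← hjψ, h1']
        exact hjtriv
      · -- L ψ ≠ 0
        have h25 : Lhalf q 𝔇 χ = L ψ := by rw [← hjψ]; exact hLL ψ
        intro hzero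
        exact hL0 (h25.trans hzero)
    · rintro ⟨ψ, hψT, rfl⟩
      rw [hT, Finset.mem_filter] at hψT
      obtain ⟨-, hψ1, hψL⟩ := hψT
      refine ⟨⟨?_, ?_, ?_⟩, ?_, ?_⟩
      · intro A B
        show ψ (π (A + B * Q)) = ψ (π A)
        congr 1
        show (AdjoinRoot.mk Q) (A + B*Q) = (AdjoinRoot.mk Q) A
        rw [map_add, map_mul, AdjoinRoot.mk_self, mul_zero, add_zero]
      · intro A B
        show ψ (π (A*B)) = ψ (π A) * ψ (π B)
        rw [show π (A*B) = π A * π B from map_mul (AdjoinRoot.mk Q) A B, map_mul]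
      · intro A
        show ψ (π A) ≠ 0 ↔ _
        rw [← hunit_iff A]
        constructor
        · intro h
          by_contra hu
          exact h (MulChar.map_nonunit ψ hu)
        · intro hu
          obtain ⟨u, hu'⟩ := hu
          rw [← hu', ← MulChar.coe_equivToUnitHom]
          exact Units.ne_zero _
      · intro h
        apply hψ1
        apply MulChar.ext
        intro u
        obtain ⟨A, hA⟩ := AdjoinRoot.mk_surjective ((u : K))
        have e1 : ψ (π A) = trivialChar Q A := congrFun h A
        have e2 : (1 : MulChar K ℂ) (π A) = trivialChar Q A := congrFun hjtriv A
        have e3 : π A = (u : K) := hA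
        rw [← e3]
        exact e1.trans e2.symm
      · rw [hLL ψ]
        exact hψL
  have hinj : Function.Injective
      ((fun (ψ : MulChar K ℂ) => (fun A => ψ (π A))) : MulChar K ℂ → (Polynomial F → ℂ)) := by
    intro ψ ψ' h
    apply MulChar.ext'
    intro a
    obtain ⟨A, hA⟩ := AdjoinRoot.mk_surjective a
    have h24 := congrFun h A
    have e3 : π A = a := hA
    rw [← e3]
    exact h24
  rw [hEq, Set.ncard_image_of_injective _ hinj, Set.ncard_coe_finset]
  have hDR : ((d:ℝ) - 1) = (𝔇:ℝ) := by
    rw [hdD]; push_cast; ring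
  rw [hDR]
  -- final numeric estimates
  have hD1R : (1:ℝ) ≤ (𝔇:ℝ) := by exact_mod_cast hD1
  have hDpos : (0:ℝ) < (𝔇:ℝ) := by linarith
  have h1q : (1:ℝ) ≤ (q:ℝ) := by linarith
  have hURD : (U:ℝ) = (q:ℝ)^(𝔇+1) - 1 := by
    rw [hU, Nat.cast_sub (Nat.one_le_pow _ _ (by omega)), Nat.cast_pow, Nat.cast_one, hdD]
  have hqD1 : (1:ℝ) ≤ (q:ℝ)^𝔇 := by
    calc (1:ℝ) = 1^𝔇 := (one_pow 𝔇).symm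
      _ ≤ (q:ℝ)^𝔇 := pow_le_pow_left₀ (by norm_num) h1q 𝔇
  have hUq : (q:ℝ)^𝔇 ≤ (U:ℝ) := by
    rw [hURD, pow_succ]
    nlinarith [pow_pos hq0 𝔇]
  have hUpos : (0:ℝ) < (U:ℝ) := lt_of_lt_of_le (by positivity) hUq
  have hBnn : 0 ≤ B := Finset.sum_nonneg fun n _ => pow_nonneg (Real.sqrt_nonneg _) n
  have hsqle1 : (1:ℝ) ≤ Real.sqrt q := by
    rw [show (1:ℝ) = Real.sqrt 1 from (Real.sqrt_one).symm]
    exact Real.sqrt_le_sqrt (by linarith)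
  rcases le_or_gt 𝔇 5 with hsmall | hbig
  · -- small case : at least one nonvanishing character
    have hBltU : B < (U:ℝ) := by
      have hstep1 : B < ∑ n ∈ Finset.range (𝔇+1), (q:ℝ)^n := by
        apply Finset.sum_lt_sum
        · intro n _
          apply pow_le_pow_left₀ (Real.sqrt_nonneg _)
          calc Real.sqrt q ≤ Real.sqrt ((q:ℝ)^2) := Real.sqrt_le_sqrt (by nlinarith)
            _ = q := Real.sqrt_sq hq0.le
        · refine ⟨𝔇, Finset.self_mem_range_succ 𝔇, ?_⟩
          apply pow_lt_pow_left₀ ?_ (Real.sqrt_nonneg _) (by omega)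
          calc Real.sqrt q < Real.sqrt ((q:ℝ)^2) := Real.sqrt_lt_sqrt hq0.le (by nlinarith)
            _ = q := Real.sqrt_sq hq0.le
      have hstep2 : ∑ n ∈ Finset.range (𝔇+1), (q:ℝ)^n ≤ (q:ℝ)^(𝔇+1) - 1 := by
        have hg := geom_sum_mul (q:ℝ) (𝔇+1)
        have hnn : (0:ℝ) ≤ ∑ n ∈ Finset.range (𝔇+1), (q:ℝ)^n :=
          Finset.sum_nonneg fun n _ => by positivity
        nlinarith [hg, hnn]
      rw [hURD]
      linarith
    have hTpos : (1:ℝ) ≤ (T.card : ℝ) := by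
      have hne : 0 < ∑ ψ ∈ T, ‖L ψ‖ := lt_of_lt_of_le (by linarith) hTub
      have hTne : T.Nonempty := by
        by_contra hc
        rw [Finset.not_nonempty_iff_eq_empty] at hc
        rw [hc, Finset.sum_empty] at hne
        exact lt_irrefl _ hne
      exact_mod_cast Finset.card_pos.mpr hTne
    have hle1 : ((q:ℝ)^5)⁻¹ * (q:ℝ)^𝔇 ≤ 1 := by
      have h25 : (q:ℝ)^𝔇 ≤ (q:ℝ)^5 := pow_le_pow_right₀ h1q hsmall
      calc ((q:ℝ)^5)⁻¹ * (q:ℝ)^𝔇 ≤ ((q:ℝ)^5)⁻¹ * (q:ℝ)^5 :=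
            mul_le_mul_of_nonneg_left h25 (by positivity)
        _ = 1 := inv_mul_cancel₀ (by positivity)
    calc ((q:ℝ)^5)⁻¹ * (q:ℝ)^𝔇 / (𝔇:ℝ) ≤ ((q:ℝ)^5)⁻¹ * (q:ℝ)^𝔇 :=
          div_le_self (by positivity) hD1R
      _ ≤ 1 := hle1
      _ ≤ (T.card : ℝ) := hTpos
  · -- big case : Cauchy-Schwarz
    have hBle1 : B ≤ ((𝔇:ℝ)+1) * (Real.sqrt q)^𝔇 := by
      have h26 := Finset.sum_le_card_nsmul (Finset.range (𝔇+1)) (fun n => (Real.sqrt q)^n)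
        ((Real.sqrt q)^𝔇)
        (fun n hn => pow_le_pow_right₀ hsqle1 (by
          simpa [Nat.lt_succ_iff] using Finset.mem_range.mp hn))
      rw [Finset.card_range, nsmul_eq_mul] at h26
      rw [hBdef]
      push_cast at h26 ⊢
      linarith
    have h1sD : (1:ℝ) ≤ (Real.sqrt q)^𝔇 := by
      calc (1:ℝ) = 1^𝔇 := (one_pow 𝔇).symm
        _ ≤ (Real.sqrt q)^𝔇 := pow_le_pow_left₀ (by norm_num) hsqle1 𝔇
    have hq𝔇2 : (2*(𝔇:ℝ)+3) ≤ (Real.sqrt q)^(𝔇+2) := by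
      have hn := aux_nat_sq 𝔇 (by omega)
      have hnR : (2*(𝔇:ℝ)+3)^2 ≤ (2:ℝ)^(𝔇+2) := by exact_mod_cast hn
      have h2q : ((2:ℝ))^(𝔇+2) ≤ (q:ℝ)^(𝔇+2) := pow_le_pow_left₀ (by norm_num) hqR _
      have hsq : ((Real.sqrt q)^(𝔇+2))^2 = (q:ℝ)^(𝔇+2) := by
        rw [← aux_sqrt_pow _ hq0.le, Real.sq_sqrt (by positivity)]
      have h0 : (0:ℝ) ≤ 2*(𝔇:ℝ)+3 := by positivity
      calc 2*(𝔇:ℝ)+3 = Real.sqrt ((2*(𝔇:ℝ)+3)^2) := (Real.sqrt_sq h0).symm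
        _ ≤ Real.sqrt (((Real.sqrt q)^(𝔇+2))^2) :=
            Real.sqrt_le_sqrt (by rw [hsq]; exact le_trans hnR h2q)
        _ = (Real.sqrt q)^(𝔇+2) := Real.sqrt_sq (by positivity)
    have hsum : (Real.sqrt q)^(𝔇+2) * (Real.sqrt q)^𝔇 = (q:ℝ)^(𝔇+1) := by
      rw [← pow_add, show 𝔇+2+𝔇 = 2*(𝔇+1) by omega, pow_mul, Real.sq_sqrt hq0.le]
    have hBle : 2*B + 1 ≤ (q:ℝ)^(𝔇+1) := by
      calc 2*B + 1 ≤ 2*(((𝔇:ℝ)+1) * (Real.sqrt q)^𝔇) + (Real.sqrt q)^𝔇 := by linarith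
        _ = (2*(𝔇:ℝ)+3) * (Real.sqrt q)^𝔇 := by ring
        _ ≤ (Real.sqrt q)^(𝔇+2) * (Real.sqrt q)^𝔇 :=
            mul_le_mul_of_nonneg_right hq𝔇2 (by positivity)
        _ = (q:ℝ)^(𝔇+1) := hsum
    have hUB2 : (U:ℝ)/2 ≤ (U:ℝ) - B := by
      have h27 : 2*B ≤ (U:ℝ) := by rw [hURD]; linarith
      linarith
    have hCS : ((U:ℝ) - B)^2 ≤ (T.card:ℝ) * ((U:ℝ) * ((𝔇:ℝ)+1)) := by
      have hcs := sq_sum_le_card_mul_sum_sq (s := T) (f := fun ψ => ‖L ψ‖)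
      have hsub : ∑ ψ ∈ T, ‖L ψ‖^2 ≤ ∑ ψ : MulChar K ℂ, ‖L ψ‖^2 :=
        Finset.sum_le_sum_of_subset_of_nonneg (Finset.subset_univ T) (fun ψ _ _ => by positivity)
      have hnonneg : (0:ℝ) ≤ (U:ℝ) - B := le_trans (by positivity) hUB2
      have h15 : ((U:ℝ) - B)^2 ≤ (∑ ψ ∈ T, ‖L ψ‖)^2 :=
        pow_le_pow_left₀ hnonneg hTub 2
      have h16 : ∑ ψ : MulChar K ℂ, ‖L ψ‖^2 ≤ (U:ℝ) * ((𝔇:ℝ)+1) := by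
        rw [hSM]; exact mul_le_mul_of_nonneg_left hW2le (by positivity)
      calc ((U:ℝ)-B)^2 ≤ (∑ ψ ∈ T, ‖L ψ‖)^2 := h15
        _ ≤ (T.card:ℝ) * ∑ ψ ∈ T, ‖L ψ‖^2 := hcs
        _ ≤ (T.card:ℝ) * ((U:ℝ) * ((𝔇:ℝ)+1)) :=
            mul_le_mul_of_nonneg_left (le_trans hsub h16) (Nat.cast_nonneg _)
    have h17 : (U:ℝ)^2/4 ≤ (T.card:ℝ) * ((U:ℝ) * ((𝔇:ℝ)+1)) := by
      have hUsq : ((U:ℝ)/2)^2 ≤ ((U:ℝ) - B)^2 := pow_le_pow_left₀ (by positivity) hUB2 2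
      calc (U:ℝ)^2/4 = ((U:ℝ)/2)^2 := by ring
        _ ≤ _ := le_trans hUsq hCS
    have h18 : (U:ℝ)/(4*((𝔇:ℝ)+1)) ≤ (T.card:ℝ) := by
      rw [div_le_iff₀ (by positivity)]
      nlinarith [h17, hUpos, hDpos, Nat.cast_nonneg (α := ℝ) T.card]
    have hq5 : (32:ℝ) ≤ (q:ℝ)^5 := by
      calc (32:ℝ) = 2^5 := by norm_num
        _ ≤ (q:ℝ)^5 := pow_le_pow_left₀ (by norm_num) hqR 5
    have h19 : ((q:ℝ)^5)⁻¹ * (q:ℝ)^𝔇 / (𝔇:ℝ) ≤ (U:ℝ)/(4*((𝔇:ℝ)+1)) := by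
      rw [div_le_div_iff₀ hDpos (by positivity)]
      have ha : ((q:ℝ)^5)⁻¹ * (q:ℝ)^𝔇 ≤ (q:ℝ)^𝔇/32 := by
        rw [div_eq_mul_inv, mul_comm ((q:ℝ)^𝔇) _]
        exact mul_le_mul_of_nonneg_right (inv_anti₀ (by norm_num) hq5) (by positivity)
      have hD2 : (𝔇:ℝ)+1 ≤ 2*(𝔇:ℝ) := by linarith
      have hx : (0:ℝ) < (q:ℝ)^𝔇 := by positivity
      calc ((q:ℝ)^5)⁻¹ * (q:ℝ)^𝔇 * (4*((𝔇:ℝ)+1))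
          ≤ ((q:ℝ)^𝔇/32) * (4*((𝔇:ℝ)+1)) :=
            mul_le_mul_of_nonneg_right ha (by positivity)
        _ ≤ ((q:ℝ)^𝔇/32) * (4*(2*(𝔇:ℝ))) :=
            mul_le_mul_of_nonneg_left (by linarith) (by positivity)
        _ = (q:ℝ)^𝔇 * (𝔇:ℝ)/4 := by ring
        _ ≤ (U:ℝ) * (𝔇:ℝ) := by nlinarith [mul_le_mul_of_nonneg_right hUq hDpos.le]
    exact le_trans h19 h18
end
end

section
/- For all sufficiently large integers x (the threshold depending only on q), the number of monic polynomials N ∈ F_q[x] with deg N ≤ x all of whose monic irreducible factors have degree at most log_q x + log_q log_q x is at most q^{3x/(log_q x)^{1/2}}; that is, Ψ(x, log_q x + log_q log_q x) ≤ q^{3x/(log_q x)^{1/2}}. -/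
open Polynomial

noncomputable section

variable {F : Type*}

/-- `p₊(N)`: the greatest degree of a monic irreducible factor of `N` (with `p₊(1) = 0`). -/
def pPlus [Field F] (N : Polynomial F) : ℕ :=
  sSup {d : ℕ | ∃ P : Polynomial F, P.Monic ∧ Irreducible P ∧ P ∣ N ∧ P.natDegree = d}


section AuxSmoothCount

open Finset UniqueFactorizationMonoid

variable {F : Type*} [Field F] [Fintype F]

lemma coeff_injOn_monic (d : ℕ) :
    Set.InjOn (fun (P : Polynomial F) (i : Fin d) => P.coeff i)
      {P | P.Monic ∧ P.natDegree = d} := by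
  rintro P ⟨hPm, hPd⟩ Q ⟨hQm, hQd⟩ h
  ext n
  rcases lt_trichotomy n d with hn | hn | hn
  · exact congrFun h ⟨n, hn⟩
  · subst hn
    rw [← hPd, Polynomial.Monic.coeff_natDegree hPm, hPd, ← hQd,
      Polynomial.Monic.coeff_natDegree hQm]
  · rw [Polynomial.coeff_eq_zero_of_natDegree_lt (hPd ▸ hn),
      Polynomial.coeff_eq_zero_of_natDegree_lt (hQd ▸ hn)]

lemma finite_monic_natDegree_le (D : ℕ) :
    {P : Polynomial F | P.Monic ∧ Irreducible P ∧ P.natDegree ≤ D}.Finite := by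
  have h : ∀ d, {P : Polynomial F | P.Monic ∧ P.natDegree = d}.Finite := by
    intro d
    apply Set.Finite.of_finite_image (f := fun (P : Polynomial F) (i : Fin d) => P.coeff i)
      (Set.toFinite _) (coeff_injOn_monic d)
  have : {P : Polynomial F | P.Monic ∧ Irreducible P ∧ P.natDegree ≤ D} ⊆
      ⋃ d ∈ Finset.range (D+1), {P : Polynomial F | P.Monic ∧ P.natDegree = d} := by
    rintro P ⟨h1, h2, h3⟩
    simp only [Set.mem_iUnion, Finset.mem_range, Set.mem_setOf_eq]
    exact ⟨P.natDegree, Nat.lt_succ_of_le h3, h1, rfl⟩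
  exact Set.Finite.subset (Set.Finite.biUnion (Finset.range (D+1)).finite_toSet (fun d _ => h d)) this

lemma card_monic_deg_le (d : ℕ) (J : Finset (Polynomial F))
    (hJ : ∀ P ∈ J, P.Monic ∧ P.natDegree = d) :
    J.card ≤ Fintype.card F ^ d := by
  classical
  have := Finset.card_le_card_of_injOn (f := fun (P : Polynomial F) => fun (i : Fin d) => P.coeff i)
    (fun P _ => Finset.mem_univ _)
    (fun P hP Q hQ h => coeff_injOn_monic d (hJ P hP) (hJ Q hQ) h)
  simpa [Fintype.card_fun] using this

lemma finite_deg_le (n : ℕ) : {P : Polynomial F | P.natDegree ≤ n}.Finite := by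
  apply Set.Finite.of_finite_image
    (f := fun (P : Polynomial F) (i : Fin (n+1)) => P.coeff i) (Set.toFinite _)
  rintro P (hP : P.natDegree ≤ n) Q (hQ : Q.natDegree ≤ n) h
  ext m
  rcases lt_or_ge m (n+1) with hm | hm
  · exact congrFun h ⟨m, hm⟩
  · rw [Polynomial.coeff_eq_zero_of_natDegree_lt (lt_of_le_of_lt hP hm),
      Polynomial.coeff_eq_zero_of_natDegree_lt (lt_of_le_of_lt hQ hm)]

lemma smooth_card_le (x D : ℕ) (t : ℝ) (ht0 : 0 < t) (ht1 : t < 1)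
    (S : Finset (Polynomial F))
    (hS : ∀ N ∈ S, N.Monic ∧ N.natDegree ≤ x ∧
      ∀ P : Polynomial F, P.Monic → Irreducible P → P ∣ N → P.natDegree ≤ D) :
    (S.card : ℝ) * t ^ x ≤
      ∏ d ∈ Finset.Icc 1 D, ((1 - t ^ d)⁻¹) ^ (Fintype.card F ^ d) := by
  classical
  set I := (finite_monic_natDegree_le (F := F) D).toFinset with hIdef
  have hImem : ∀ P : Polynomial F,
      P ∈ I ↔ P.Monic ∧ Irreducible P ∧ P.natDegree ≤ D := by
    intro P; simp [hIdef, Set.Finite.mem_toFinset]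
  -- facts about each N in S
  have key : ∀ N ∈ S, ((normalizedFactors N).toFinset ⊆ I) ∧
      (N.natDegree = ∑ P ∈ I, (normalizedFactors N).count P * P.natDegree) ∧
      (N = (normalizedFactors N).prod) := by
    intro N hN
    obtain ⟨hNm, hNx, hNd⟩ := hS N hN
    have hN0 : N ≠ 0 := hNm.ne_zero
    have hmonic : ∀ P ∈ normalizedFactors N, P.Monic := by
      intro P hP
      have h1 : P ≠ 0 := (irreducible_of_normalized_factor P hP).ne_zero
      have h2 := Polynomial.monic_normalize (p := P) h1
      rwa [normalize_normalized_factor P hP] at h2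
    have hprod : N = (normalizedFactors N).prod := by
      have hass := prod_normalizedFactors hN0
      have hm : (normalizedFactors N).prod.Monic := by
        have := Polynomial.monic_multiset_prod_of_monic (normalizedFactors N) id
          (fun P hP => hmonic P hP)
        simpa using this
      exact (Polynomial.eq_of_monic_of_associated hm hNm hass).symm
    have hsub : (normalizedFactors N).toFinset ⊆ I := by
      intro P hP
      rw [Multiset.mem_toFinset] at hP
      exact (hImem P).2 ⟨hmonic P hP, irreducible_of_normalized_factor P hP,
        hNd P (hmonic P hP) (irreducible_of_normalized_factor P hP)
          (dvd_of_mem_normalizedFactors hP)⟩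
    refine ⟨hsub, ?_, hprod⟩
    have h0 : (0 : Polynomial F) ∉ normalizedFactors N :=
      zero_notMem_normalizedFactors N
    conv_lhs => rw [hprod]
    rw [Polynomial.natDegree_multiset_prod _ h0,
      Finset.sum_multiset_map_count]
    refine Finset.sum_subset hsub ?_
    intro P _ hP
    rw [Multiset.count_eq_zero_of_notMem (by simpa only [Multiset.mem_toFinset] using hP)]
    simp
  have hIdeg : ∀ P ∈ I, P.natDegree ∈ Finset.Icc 1 D := by
    intro P hP
    obtain ⟨hm, hirr, hle⟩ := (hImem P).1 hP
    exact Finset.mem_Icc.2 ⟨hirr.natDegree_pos, hle⟩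
  -- Step 1
  have step1 : (S.card : ℝ) * t ^ x ≤ ∑ N ∈ S, t ^ N.natDegree := by
    have h := Finset.card_nsmul_le_sum S (fun N => t ^ N.natDegree) (t ^ x)
      (fun N hN => pow_le_pow_of_le_one ht0.le ht1.le (hS N hN).2.1)
    simpa [nsmul_eq_mul] using h
  set φ : Polynomial F → (∀ P, P ∈ I → ℕ) :=
    fun N P _ => (normalizedFactors N).count P with hφdef
  set G : (∀ P, P ∈ I → ℕ) → ℝ :=
    fun p => ∏ P ∈ I.attach, (t ^ (P : Polynomial F).natDegree) ^ (p P.1 P.2) with hGdef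
  have hφmem : ∀ N ∈ S, φ N ∈ I.pi (fun _ => Finset.range (x+1)) := by
    intro N hN
    refine Finset.mem_pi.2 (fun P hP => Finset.mem_range.2 (Nat.lt_succ_of_le ?_))
    obtain ⟨hsub, hdeg, hprod⟩ := key N hN
    have h1 : (normalizedFactors N).count P * P.natDegree ≤ N.natDegree := by
      rw [hdeg]
      exact Finset.single_le_sum (f := fun Q : Polynomial F =>
        (normalizedFactors N).count Q * Q.natDegree) (fun Q _ => Nat.zero_le _) hP
    have h2 : 1 ≤ P.natDegree := (Finset.mem_Icc.1 (hIdeg P hP)).1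
    calc (normalizedFactors N).count P ≤ (normalizedFactors N).count P * P.natDegree :=
          Nat.le_mul_of_pos_right _ h2
      _ ≤ N.natDegree := h1
      _ ≤ x := (hS N hN).2.1
  have hGN : ∀ N ∈ S, t ^ N.natDegree = G (φ N) := by
    intro N hN
    rw [hGdef, hφdef, (key N hN).2.1, ← Finset.sum_attach I
      (fun P => (normalizedFactors N).count P * P.natDegree),
      ← Finset.prod_pow_eq_pow_sum]
    refine Finset.prod_congr rfl (fun P _ => ?_)
    rw [← pow_mul, mul_comm]
  have hinj : ∀ N ∈ S, ∀ M ∈ S, φ N = φ M → N = M := by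
    intro N hN M hM h
    have hc : ∀ P : Polynomial F,
        (normalizedFactors N).count P = (normalizedFactors M).count P := by
      intro P
      by_cases hP : P ∈ I
      · have := congrFun (congrFun h P) hP
        simpa [hφdef] using this
      · rw [Multiset.count_eq_zero_of_notMem, Multiset.count_eq_zero_of_notMem]
        · intro hPM; exact hP ((key M hM).1 (Multiset.mem_toFinset.2 hPM))
        · intro hPN; exact hP ((key N hN).1 (Multiset.mem_toFinset.2 hPN))
    have : normalizedFactors N = normalizedFactors M := Multiset.ext.2 hc
    rw [(key N hN).2.2, (key M hM).2.2, this]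
  have step2 : ∑ N ∈ S, t ^ N.natDegree ≤
      ∑ p ∈ I.pi (fun _ => Finset.range (x+1)), G p := by
    have e1 : ∑ N ∈ S, t ^ N.natDegree = ∑ p ∈ S.image φ, G p := by
      rw [Finset.sum_image hinj]
      exact Finset.sum_congr rfl hGN
    rw [e1]
    refine Finset.sum_le_sum_of_subset_of_nonneg ?_ (fun p _ _ => Finset.prod_nonneg
      (fun P _ => pow_nonneg (pow_nonneg ht0.le _) _))
    intro p hp
    obtain ⟨N, hN, rfl⟩ := Finset.mem_image.1 hp
    exact hφmem N hN
  have step3 : ∑ p ∈ I.pi (fun _ => Finset.range (x+1)), G p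
      = ∏ P ∈ I, ∑ k ∈ Finset.range (x+1), (t ^ P.natDegree) ^ k := by
    rw [Finset.prod_sum I (fun _ => Finset.range (x+1)) (fun P k => (t ^ P.natDegree) ^ k)]
  have step4 : ∏ P ∈ I, ∑ k ∈ Finset.range (x+1), (t ^ P.natDegree) ^ k ≤
      ∏ P ∈ I, (1 - t ^ P.natDegree)⁻¹ := by
    refine Finset.prod_le_prod (fun P _ => Finset.sum_nonneg
      (fun k _ => pow_nonneg (pow_nonneg ht0.le _) _)) (fun P hP => ?_)
    have h1 : 1 ≤ P.natDegree := (Finset.mem_Icc.1 (hIdeg P hP)).1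
    have hr0 : (0:ℝ) ≤ t ^ P.natDegree := pow_nonneg ht0.le _
    have hr1 : t ^ P.natDegree < 1 :=
      lt_of_le_of_lt (pow_le_pow_of_le_one ht0.le ht1.le h1) (by simpa using ht1)
    exact sum_le_hasSum _ (fun k _ => pow_nonneg hr0 _) (hasSum_geometric_of_lt_one hr0 hr1)
  have step5 : ∏ P ∈ I, (1 - t ^ P.natDegree)⁻¹ ≤
      ∏ d ∈ Finset.Icc 1 D, ((1 - t ^ d)⁻¹) ^ (Fintype.card F ^ d) := by
    rw [← Finset.prod_fiberwise_of_maps_to hIdeg (fun P => (1 - t ^ P.natDegree)⁻¹)]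
    refine Finset.prod_le_prod (fun d _ => Finset.prod_nonneg (fun P hP => ?_)) (fun d hd => ?_)
    · have h1 : 1 ≤ P.natDegree := (Finset.mem_Icc.1 (hIdeg P (Finset.mem_filter.1 hP).1)).1
      have : t ^ P.natDegree < 1 :=
        lt_of_le_of_lt (pow_le_pow_of_le_one ht0.le ht1.le h1) (by simpa using ht1)
      have h2 : 0 < 1 - t ^ P.natDegree := by linarith
      positivity
    · have hd1 : 1 ≤ d := (Finset.mem_Icc.1 hd).1
      have htd : t ^ d < 1 :=
        lt_of_le_of_lt (pow_le_pow_of_le_one ht0.le ht1.le hd1) (by simpa using ht1)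
      have hpos : 0 < 1 - t ^ d := by linarith
      have hbase : 1 ≤ (1 - t ^ d)⁻¹ := by
        rw [one_le_inv_iff₀]
        constructor
        · exact hpos
        · have : 0 ≤ t ^ d := pow_nonneg ht0.le _
          linarith
      have hcongr : ∏ P ∈ I.filter (fun P => P.natDegree = d), (1 - t ^ P.natDegree)⁻¹
          = ((1 - t ^ d)⁻¹) ^ (I.filter (fun P => P.natDegree = d)).card := by
        rw [← Finset.prod_const]
        refine Finset.prod_congr rfl (fun P hP => ?_)
        rw [(Finset.mem_filter.1 hP).2]
      rw [hcongr]
      refine pow_le_pow_right₀ hbase ?_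
      refine card_monic_deg_le d _ (fun P hP => ?_)
      obtain ⟨hPI, hPd⟩ := Finset.mem_filter.1 hP
      exact ⟨((hImem P).1 hPI).1, hPd⟩
  calc (S.card : ℝ) * t ^ x ≤ ∑ N ∈ S, t ^ N.natDegree := step1
    _ ≤ _ := step2
    _ = _ := step3
    _ ≤ _ := step4
    _ ≤ _ := step5


end AuxSmoothCount

open Filter Finset UniqueFactorizationMonoid

set_option maxHeartbeats 1000000

/-- The de Bruijn-type bound for smooth polynomials: for all sufficiently large `x`
(the threshold depending only on `q`), the number of monic `N` with `deg N ≤ x` all of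
whose monic irreducible factors have degree at most `log_q x + log_q log_q x` is at most
`q^{3x/(log_q x)^{1/2}}`. -/
theorem smooth_polynomial_count
    (F : Type*) [Field F] [Fintype F] (q : ℕ) (hq : Fintype.card F = q) :
    ∃ x₀ : ℕ, ∀ x : ℕ, x₀ ≤ x →
      ({N : Polynomial F | N.Monic ∧ N.natDegree ≤ x ∧
          (pPlus N : ℝ) ≤ Real.logb q x + Real.logb q (Real.logb q x)}.ncard : ℝ) ≤
        (q : ℝ) ^ (3 * (x : ℝ) / Real.sqrt (Real.logb q x)) := by
  subst hq
  classical
  set Q : ℝ := (Fintype.card F : ℝ) with hQdef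
  have hq2 : 2 ≤ Fintype.card F := Fintype.one_lt_card
  have hQ2 : (2:ℝ) ≤ Q := by rw [hQdef]; exact_mod_cast hq2
  have hQ0 : (0:ℝ) < Q := by linarith
  have hQ1 : (1:ℝ) < Q := by linarith
  have hlq : 0 < Real.log Q := Real.log_pos hQ1
  have hlq23 : (2:ℝ)/3 ≤ Real.log Q := by
    have h2 := Real.log_two_gt_d9
    have h3 := Real.log_le_log (by norm_num : (0:ℝ) < 2) hQ2
    linarith
  -- filters
  have hLtop : Tendsto (fun x : ℕ => Real.logb Q x) atTop atTop :=
    (Real.tendsto_logb_atTop hQ1).comp tendsto_natCast_atTop_atTop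
  have hsqrt : Tendsto Real.sqrt atTop atTop :=
    tendsto_atTop_atTop_of_monotone (fun a b h => Real.sqrt_le_sqrt h)
      (fun b => ⟨b^2, by rw [Real.sqrt_sq_eq_abs]; exact le_abs_self b⟩)
  have hKtop : Tendsto (fun x : ℕ => Real.sqrt (Real.logb Q x)) atTop atTop :=
    hsqrt.comp hLtop
  have E1 : ∀ᶠ x : ℕ in atTop, 9 ≤ Real.logb Q x := hLtop.eventually_ge_atTop 9
  have E2 : ∀ᶠ x : ℕ in atTop, Real.log Q ≤ Real.sqrt (Real.logb Q x) :=
    hKtop.eventually_ge_atTop _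
  have hzero : Tendsto (fun u : ℝ => 2 * u^6 * Real.exp (-(Real.log Q) * u)) atTop (nhds 0) := by
    have h1 := Real.tendsto_pow_mul_exp_neg_atTop_nhds_zero 6
    have h2 : Tendsto (fun u : ℝ => Real.log Q * u) atTop atTop :=
      Tendsto.const_mul_atTop hlq tendsto_id
    have h3 := (h1.comp h2).const_mul (2 / (Real.log Q)^6)
    have he : (fun u : ℝ => 2 * u^6 * Real.exp (-(Real.log Q) * u)) =
        fun u => (2/(Real.log Q)^6) *
          (((Real.log Q)*u)^6 * Real.exp (-((Real.log Q)*u))) := by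
      funext u
      rw [mul_pow]
      field_simp
    rw [he]
    simpa using h3
  have E3 : ∀ᶠ x : ℕ in atTop,
      2 * (Real.sqrt (Real.logb Q x))^6 *
        Real.exp (-(Real.log Q) * Real.sqrt (Real.logb Q x)) ≤ (Real.log Q)^2 := by
    have h := (hzero.comp hKtop).eventually_lt_const (by positivity : (0:ℝ) < (Real.log Q)^2)
    exact h.mono (fun x hx => le_of_lt hx)
  obtain ⟨x₀, hx₀⟩ := eventually_atTop.1 (E1.and (E2.and E3))
  refine ⟨x₀, fun x hx => ?_⟩
  obtain ⟨e1, e2, e3⟩ := hx₀ x hx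
  -- basic facts about x
  have hx0 : 0 < x := by
    rcases Nat.eq_zero_or_pos x with h | h
    · subst h; simp at e1; linarith
    · exact h
  have hxR : (1:ℝ) ≤ (x:ℝ) := by exact_mod_cast hx0
  have hxR0 : (0:ℝ) < (x:ℝ) := by linarith
  set L : ℝ := Real.logb Q x with hLdef
  have hL9 : 9 ≤ L := e1
  have hL0 : 0 < L := by linarith
  set K : ℝ := Real.sqrt L with hKdef
  have hK3 : 3 ≤ K := by
    have h9 : (3:ℝ) = Real.sqrt 9 := by
      rw [show (9:ℝ) = 3^2 by norm_num, Real.sqrt_sq (by norm_num : (0:ℝ) ≤ 3)]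
    rw [h9, hKdef]
    exact Real.sqrt_le_sqrt hL9
  have hK0 : (0:ℝ) < K := by linarith
  have hKK : K^2 = L := Real.sq_sqrt hL0.le
  have hKL : K ≤ L := by nlinarith
  set s : ℝ := K⁻¹ with hsdef
  have hs0 : 0 < s := inv_pos.2 hK0
  have hs13 : s ≤ 1/3 := by
    rw [hsdef]
    rw [inv_le_comm₀ hK0 (by norm_num : (0:ℝ) < 1/3)]
    linarith
  set t : ℝ := Q ^ (-s) with htdef
  have ht0 : 0 < t := Real.rpow_pos_of_pos hQ0 _
  have ht1 : t < 1 := Real.rpow_lt_one_of_one_lt_of_neg hQ1 (by linarith)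
  have h1t : 0 < 1 - t := by linarith
  set z : ℝ := L + Real.logb Q L with hzdef
  have hlogbL : 0 ≤ Real.logb Q L := Real.logb_nonneg hQ1 (by linarith)
  have hz0 : (0:ℝ) ≤ z := by linarith
  have hLz : L ≤ z := by linarith
  have hzL : z ≤ 2*L := by
    have h1 : Real.log L = 2 * Real.log K := by
      rw [← hKK, Real.log_pow]; norm_num
    have h2 : Real.log K ≤ K - 1 := Real.log_le_sub_one_of_pos hK0
    have h3 : Real.log L ≤ (2/3) * L := by nlinarith
    have h4 : Real.logb Q L ≤ L := by
      rw [Real.logb, div_le_iff₀ hlq]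
      nlinarith
    linarith
  set D : ℕ := ⌊z⌋₊ with hDdef
  have hDz : (D:ℝ) ≤ z := Nat.floor_le hz0
  -- the finite set
  have hfin : {N : Polynomial F | N.Monic ∧ N.natDegree ≤ x ∧
      (pPlus N : ℝ) ≤ L + Real.logb Q L}.Finite :=
    Set.Finite.subset (finite_deg_le x) (fun N hN => hN.2.1)
  rw [Set.ncard_eq_toFinset_card _ hfin]
  -- hypotheses of the counting lemma
  have hSfacts : ∀ N ∈ hfin.toFinset, N.Monic ∧ N.natDegree ≤ x ∧
      ∀ P : Polynomial F, P.Monic → Irreducible P → P ∣ N → P.natDegree ≤ D := by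
    intro N hN
    rw [Set.Finite.mem_toFinset] at hN
    obtain ⟨hNm, hNx, hNp⟩ := hN
    refine ⟨hNm, hNx, fun P hPm hPi hPd => ?_⟩
    have hbdd : BddAbove {d : ℕ | ∃ P : Polynomial F,
        P.Monic ∧ Irreducible P ∧ P ∣ N ∧ P.natDegree = d} := by
      refine ⟨N.natDegree, fun d hd => ?_⟩
      obtain ⟨P', _, _, hdvd, hdeg⟩ := hd
      exact hdeg ▸ Polynomial.natDegree_le_of_dvd hdvd hNm.ne_zero
    have hmem : P.natDegree ≤ pPlus N :=
      le_csSup hbdd ⟨P, hPm, hPi, hPd, rfl⟩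
    have : (P.natDegree : ℝ) ≤ z := by
      calc (P.natDegree : ℝ) ≤ (pPlus N : ℝ) := by exact_mod_cast hmem
        _ ≤ L + Real.logb Q L := hNp
        _ = z := by rw [hzdef]
    exact Nat.le_floor this
  have hcount := smooth_card_le x D t ht0 ht1 hfin.toFinset hSfacts
  -- analytic bounds
  set e : ℝ := Real.exp (-(Real.log Q) * K) with hedef
  have he0 : 0 < e := Real.exp_pos _
  have hQt : Q * t = Q ^ (1 - s) := by
    rw [htdef, show (1:ℝ) - s = 1 + (-s) by ring, Real.rpow_add hQ0, Real.rpow_one]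
  have hQt1 : 1 ≤ Q * t := by
    rw [hQt]
    exact Real.one_le_rpow hQ1.le (by linarith)
  have hQt0 : 0 < Q * t := by linarith
  -- bound each factor of the product by an exponential
  have hfac : ∀ d ∈ Finset.Icc 1 D, ((1 - t^d)⁻¹) ^ (Fintype.card F ^ d) ≤
      Real.exp ((Q*t)^d * (1-t)⁻¹) := by
    intro d hd
    have hd1 : 1 ≤ d := (Finset.mem_Icc.1 hd).1
    have htd : t^d ≤ t := by
      have := pow_le_pow_of_le_one ht0.le ht1.le hd1
      simpa using this
    have htd0 : 0 < t^d := pow_pos ht0 d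
    have h1td : 0 < 1 - t^d := by linarith
    have hstep : (1 - t^d)⁻¹ ≤ Real.exp (t^d * (1-t)⁻¹) := by
      have hlog := Real.log_le_sub_one_of_pos (inv_pos.2 h1td)
      have heq : (1 - t^d)⁻¹ - 1 = t^d / (1 - t^d) := by field_simp; ring
      have hle : t^d / (1 - t^d) ≤ t^d * (1-t)⁻¹ := by
        rw [← div_eq_mul_inv]
        exact div_le_div_of_nonneg_left htd0.le h1t (by linarith)
      calc (1 - t^d)⁻¹ = Real.exp (Real.log ((1 - t^d)⁻¹)) :=
            (Real.exp_log (inv_pos.2 h1td)).symm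
        _ ≤ Real.exp (t^d * (1-t)⁻¹) := by
            apply Real.exp_le_exp.2
            rw [heq] at hlog
            linarith
    calc ((1 - t^d)⁻¹) ^ (Fintype.card F ^ d) ≤
          (Real.exp (t^d * (1-t)⁻¹)) ^ (Fintype.card F ^ d) :=
          pow_le_pow_left₀ (inv_pos.2 h1td).le hstep _
      _ = Real.exp ((Fintype.card F ^ d : ℕ) * (t^d * (1-t)⁻¹)) := by
          rw [Real.exp_nat_mul]
      _ = Real.exp ((Q*t)^d * (1-t)⁻¹) := by
          congr 1
          rw [Nat.cast_pow, mul_pow, ← hQdef]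
          ring
  have hprodexp : ∏ d ∈ Finset.Icc 1 D, ((1 - t^d)⁻¹) ^ (Fintype.card F ^ d) ≤
      Real.exp (∑ d ∈ Finset.Icc 1 D, (Q*t)^d * (1-t)⁻¹) := by
    rw [Real.exp_sum]
    refine Finset.prod_le_prod (fun d hd => ?_) hfac
    have hd1 : 1 ≤ d := (Finset.mem_Icc.1 hd).1
    have htd : t^d ≤ t := by
      have := pow_le_pow_of_le_one ht0.le ht1.le hd1
      simpa using this
    have h1td : 0 < 1 - t^d := by linarith
    positivity
  have hsum : ∑ d ∈ Finset.Icc 1 D, (Q*t)^d * (1-t)⁻¹ ≤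
      (D:ℝ) * ((Q*t)^D * (1-t)⁻¹) := by
    have := Finset.sum_le_card_nsmul (Finset.Icc 1 D)
      (fun d => (Q*t)^d * (1-t)⁻¹) ((Q*t)^D * (1-t)⁻¹)
      (fun d hd => by
        have hdD : d ≤ D := (Finset.mem_Icc.1 hd).2
        exact mul_le_mul_of_nonneg_right (pow_le_pow_right₀ hQt1 hdD) (inv_pos.2 h1t).le)
    rw [Nat.card_Icc] at this
    simp only [Nat.add_sub_cancel] at this
    simpa [nsmul_eq_mul] using this
  -- numeric bounds
  have hB1 : (1-t)⁻¹ ≤ 2*K/Real.log Q := by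
    set a : ℝ := Real.log Q * s with hadef
    have ha0 : 0 < a := mul_pos hlq hs0
    have ha1 : a ≤ 1 := by
      rw [hadef, hsdef, ← div_eq_mul_inv, div_le_one hK0]
      exact e2
    have hta : t = Real.exp (-a) := by
      rw [htdef, Real.rpow_def_of_pos hQ0, hadef]
      ring_nf
    have hexp : Real.exp (-a) ≤ (1+a)⁻¹ := by
      rw [Real.exp_neg]
      apply inv_anti₀ (by linarith)
      linarith [Real.add_one_le_exp a]
    have h2 : a/2 ≤ 1 - t := by
      rw [hta]
      have h3 : 1 - (1+a)⁻¹ = a/(1+a) := by field_simp; ring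
      have h4 : a/(1+a) ≥ a/2 := by
        apply div_le_div_of_nonneg_left ha0.le (by linarith) (by linarith)
      linarith [hexp, h3, h4]
    calc (1-t)⁻¹ ≤ (a/2)⁻¹ := by
          apply inv_anti₀ (by linarith) h2
      _ = 2/a := by rw [inv_div]
      _ = 2*K/Real.log Q := by
          rw [hadef, hsdef]
          field_simp
    
  have hB2 : (D:ℝ) ≤ 2*L := le_trans hDz hzL
  have hB3 : (Q*t)^D ≤ (x:ℝ) * L * e := by
    have h1 : (Q*t)^D = Q ^ ((1-s) * (D:ℝ)) := by
      rw [hQt, ← Real.rpow_natCast (Q ^ ((1:ℝ)-s)) D, ← Real.rpow_mul hQ0.le]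
    have h2 : Q ^ ((1-s) * (D:ℝ)) ≤ Q ^ ((1-s) * z) :=
      Real.rpow_le_rpow_of_exponent_le hQ1.le
        (mul_le_mul_of_nonneg_left hDz (by linarith))
    have h3 : Q ^ ((1-s) * z) = Q ^ z * Q ^ (-(s*z)) := by
      rw [← Real.rpow_add hQ0]; ring_nf
    have h4 : Q ^ z = (x:ℝ) * L := by
      rw [hzdef, Real.rpow_add hQ0, hLdef, Real.rpow_logb hQ0 (ne_of_gt hQ1) hxR0,
        Real.rpow_logb hQ0 (ne_of_gt hQ1) hL0]
    have h5 : Q ^ (-(s*z)) ≤ Q ^ (-K) := by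
      apply Real.rpow_le_rpow_of_exponent_le hQ1.le
      have hKsz : K ≤ s * z := by
        have hKKz : K * K ≤ z := by
          rw [show K*K = K^2 by ring, hKK]; exact hLz
        rw [hsdef, inv_mul_eq_div, le_div_iff₀ hK0]
        exact hKKz
      linarith
    have h6 : Q ^ (-K) = e := by
      rw [hedef, Real.rpow_def_of_pos hQ0]
      ring_nf
    calc (Q*t)^D = Q ^ ((1-s) * (D:ℝ)) := h1
      _ ≤ Q ^ ((1-s) * z) := h2
      _ = Q ^ z * Q ^ (-(s*z)) := h3
      _ ≤ ((x:ℝ) * L) * e := by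
          rw [h4] at *
          have hxL : (0:ℝ) ≤ (x:ℝ) * L := by positivity
          calc (x:ℝ) * L * Q ^ (-(s*z)) ≤ (x:ℝ) * L * Q ^ (-K) :=
                mul_le_mul_of_nonneg_left h5 hxL
            _ = (x:ℝ) * L * e := by rw [h6]
  have h4main : 4 * L^2 * K * e / Real.log Q ≤ 2 * Real.log Q / K := by
    rw [div_le_div_iff₀ hlq hK0]
    have hK6 : 2 * K^6 * e ≤ (Real.log Q)^2 := e3
    have hK6L : L^2 * K * K = K^6 := by rw [← hKK]; ring
    calc 4 * L^2 * K * e * K = 2*(2*K^6*e) := by rw [← hK6L]; ring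
      _ ≤ 2*((Real.log Q)^2) := by linarith
      _ = 2 * Real.log Q * Real.log Q := by ring
  -- put it all together
  have htotal : (D:ℝ) * ((Q*t)^D * (1-t)⁻¹) ≤ (x:ℝ) * (2 * Real.log Q / K) := by
    have m1 : (Q*t)^D * (1-t)⁻¹ ≤ ((x:ℝ) * L * e) * (2*K/Real.log Q) := by
      apply mul_le_mul hB3 hB1 (inv_pos.2 h1t).le (by positivity)
    have m2 : (D:ℝ) * ((Q*t)^D * (1-t)⁻¹) ≤
        (2*L) * (((x:ℝ) * L * e) * (2*K/Real.log Q)) := by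
      apply mul_le_mul hB2 m1 (by positivity) (by linarith)
    have m3 : (2*L) * (((x:ℝ) * L * e) * (2*K/Real.log Q)) =
        (x:ℝ) * (4 * L^2 * K * e / Real.log Q) := by
      field_simp
      ring
    have m4 : (x:ℝ) * (4 * L^2 * K * e / Real.log Q) ≤ (x:ℝ) * (2 * Real.log Q / K) :=
      mul_le_mul_of_nonneg_left h4main (by positivity)
    linarith
  -- final assembly
  have hfinal : (hfin.toFinset.card : ℝ) * t^x ≤ Q ^ (2 * (x:ℝ) / K) := by
    have hexp2 : Real.exp ((x:ℝ) * (2 * Real.log Q / K)) = Q ^ (2 * (x:ℝ) / K) := by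
      rw [Real.rpow_def_of_pos hQ0]
      congr 1
      ring
    calc (hfin.toFinset.card : ℝ) * t^x ≤
          ∏ d ∈ Finset.Icc 1 D, ((1 - t^d)⁻¹) ^ (Fintype.card F ^ d) := hcount
      _ ≤ Real.exp (∑ d ∈ Finset.Icc 1 D, (Q*t)^d * (1-t)⁻¹) := hprodexp
      _ ≤ Real.exp ((x:ℝ) * (2 * Real.log Q / K)) := by
          apply Real.exp_le_exp.2
          exact le_trans hsum htotal
      _ = Q ^ (2 * (x:ℝ) / K) := hexp2
  have htx : t^x = Q ^ (-(s * (x:ℝ))) := by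
    rw [htdef, ← Real.rpow_natCast (Q ^ (-s)) x, ← Real.rpow_mul hQ0.le]
    congr 1
    ring
  have hlast : (hfin.toFinset.card : ℝ) ≤ Q ^ (3 * (x:ℝ) / K) := by
    have hpos : 0 < t^x := pow_pos ht0 x
    rw [← le_div_iff₀ hpos] at hfinal
    calc (hfin.toFinset.card : ℝ) ≤ Q ^ (2 * (x:ℝ) / K) / t^x := hfinal
      _ = Q ^ (2 * (x:ℝ) / K) * Q ^ (s * (x:ℝ)) := by
          rw [htx, Real.rpow_neg hQ0.le, div_eq_mul_inv, inv_inv]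
      _ = Q ^ (2 * (x:ℝ) / K + s * (x:ℝ)) := by rw [← Real.rpow_add hQ0]
      _ = Q ^ (3 * (x:ℝ) / K) := by
          congr 1
          rw [hsdef]
          field_simp
          ring
  exact hlast
end
end

section
/- For every integer x ≥ 0, Σ_{N monic, deg N ≤ x} 2^{ω(N)}/|N| = ((q−1)x² + (3q+1)x + 2q)/(2q), where the sum is over monic polynomials N ∈ F_q[x]. -/
open UniqueFactorizationMonoid Finset
set_option linter.unusedSectionVars false
set_option maxHeartbeats 1000000


open Polynomial

noncomputable section

variable {F : Type*}

/-- `ω(N)`: the number of distinct monic irreducible divisors of `N`. -/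
def polyOmega [Field F] (N : Polynomial F) : ℕ :=
  {P : Polynomial F | P.Monic ∧ Irreducible P ∧ P ∣ N}.ncard


section L3
variable [Field F] [DecidableEq F]



lemma monic_of_mem_nf {N p : F[X]} (hp : p ∈ normalizedFactors N) : p.Monic := by
  have h0 : p ≠ 0 := (prime_of_normalized_factor p hp).ne_zero
  rw [← normalize_normalized_factor p hp]
  exact monic_normalize h0

lemma fprod_val (s : Finset F[X]) : ∏ p ∈ s, p = s.val.prod := by
  rw [Finset.prod_eq_multiset_prod]; simp

lemma monic_prod_nf {N : F[X]} (hN : N.Monic) : (normalizedFactors N).prod = N := by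
  refine eq_of_monic_of_associated ?_ hN (prod_normalizedFactors hN.ne_zero)
  have := monic_multiset_prod_of_monic (normalizedFactors N) id
    (fun p hp => monic_of_mem_nf hp)
  simpa using this

lemma polyOmega_eq {N : F[X]} (hN : N.Monic) :
    polyOmega N = (normalizedFactors N).toFinset.card := by
  rw [polyOmega, ← Set.ncard_coe_finset]
  congr 1
  ext P
  simp only [Set.mem_setOf_eq, Finset.coe_sort_coe, Multiset.mem_toFinset, Finset.mem_coe]
  constructor
  · rintro ⟨hm, hirr, hdvd⟩
    obtain ⟨Q, hQ, hPQ⟩ := exists_mem_normalizedFactors_of_dvd hN.ne_zero hirr hdvd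
    rwa [eq_of_monic_of_associated hm (monic_of_mem_nf hQ) hPQ]
  · intro hP
    exact ⟨monic_of_mem_nf hP, irreducible_of_normalized_factor P hP,
      dvd_of_mem_normalizedFactors hP⟩

/-- squarefree monic divisors of `N`. -/
def sqDiv (N : F[X]) : Finset F[X] :=
  (normalizedFactors N).toFinset.powerset.image fun s => ∏ p ∈ s, p

lemma nf_of_subset_nf {N : F[X]} {s : Finset F[X]}
    (hs : s ⊆ (normalizedFactors N).toFinset) :
    normalizedFactors (∏ p ∈ s, p) = s.val := by
  have hirr : ∀ p ∈ s.val, Irreducible p := fun p hp =>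
    irreducible_of_normalized_factor p (Multiset.mem_toFinset.mp (hs hp))
  have h2 := normalizedFactors_prod_eq s.val hirr
  rw [fprod_val, h2, Multiset.map_congr rfl fun p hp =>
    normalize_normalized_factor p (Multiset.mem_toFinset.mp (hs hp)), Multiset.map_id']

lemma mem_sqDiv {N d : F[X]} (hN : N.Monic) :
    d ∈ sqDiv N ↔ d.Monic ∧ Squarefree d ∧ d ∣ N := by
  constructor
  · intro hd
    obtain ⟨s, hs, rfl⟩ := Finset.mem_image.mp hd
    rw [Finset.mem_powerset] at hs
    have hmem : ∀ p ∈ s, p ∈ normalizedFactors N := fun p hp =>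
      Multiset.mem_toFinset.mp (hs hp)
    have hmonic : (∏ p ∈ s, p).Monic :=
      monic_prod_of_monic _ _ fun p hp => monic_of_mem_nf (hmem p hp)
    refine ⟨hmonic, ?_, ?_⟩
    · rw [squarefree_iff_nodup_normalizedFactors hmonic.ne_zero, nf_of_subset_nf hs]
      exact s.nodup
    · rw [← monic_prod_nf hN, fprod_val]
      refine Multiset.prod_dvd_prod_of_le ((Multiset.le_iff_subset s.nodup).mpr ?_)
      exact fun p hp => Multiset.mem_toFinset.mp (hs hp)
  · rintro ⟨hm, hsq, hdvd⟩
    refine Finset.mem_image.mpr ⟨(normalizedFactors d).toFinset, ?_, ?_⟩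
    · rw [Finset.mem_powerset]
      intro p hp
      rw [Multiset.mem_toFinset] at *
      exact Multiset.mem_of_le ((dvd_iff_normalizedFactors_le_normalizedFactors
        hm.ne_zero hN.ne_zero).mp hdvd) hp
    · have hnd : (normalizedFactors d).Nodup :=
        (squarefree_iff_nodup_normalizedFactors hm.ne_zero).mp hsq
      rw [fprod_val, Multiset.toFinset_val, Multiset.dedup_eq_self.mpr hnd]
      exact monic_prod_nf hm

lemma card_sqDiv {N : F[X]} (hN : N.Monic) :
    (sqDiv N).card = 2 ^ polyOmega N := by
  rw [sqDiv, Finset.card_image_of_injOn, Finset.card_powerset, polyOmega_eq hN]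
  intro s hs t ht hst
  rw [Finset.mem_coe, Finset.mem_powerset] at hs ht
  have : s.val = t.val := by
    rw [← nf_of_subset_nf hs, ← nf_of_subset_nf ht]
    exact congrArg normalizedFactors hst
  exact Finset.val_injective this

lemma monic_of_mul_monic {a b : F[X]} (ha : a.Monic) (hab : (a * b).Monic) : b.Monic := by
  by_cases hb : b = 0
  · rw [hb, mul_zero] at hab; exact absurd hab not_monic_zero
  · have := hab.leadingCoeff
    rw [leadingCoeff_mul' (by rw [ha.leadingCoeff, one_mul]; exact leadingCoeff_ne_zero.mpr hb),
      ha.leadingCoeff, one_mul] at this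
    exact this

lemma exists_sq_mul_sqf : ∀ (n : ℕ) (N : F[X]), N.Monic → N.natDegree = n →
    ∃ a b : F[X], a.Monic ∧ b.Monic ∧ Squarefree a ∧ b ^ 2 * a = N := by
  intro n
  induction n using Nat.strong_induction_on with
  | _ n ih =>
    intro N hN hdeg
    by_cases hsq : Squarefree N
    · exact ⟨N, 1, hN, monic_one, hsq, by ring⟩
    · have hN0 : N ≠ 0 := hN.ne_zero
      rw [squarefree_iff_irreducible_sq_not_dvd_of_ne_zero hN0] at hsq
      push_neg at hsq
      obtain ⟨p, hp, hpd⟩ := hsq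
      have hp0 : p ≠ 0 := hp.ne_zero
      set P := normalize p with hP
      have hPirr : Irreducible P := (associated_normalize p).irreducible hp
      have hPm : P.Monic := monic_normalize hp0
      have hPd : P * P ∣ N := by
        refine dvd_trans ?_ hpd
        exact mul_dvd_mul (normalize_dvd_iff.mpr dvd_rfl) (normalize_dvd_iff.mpr dvd_rfl)
      obtain ⟨M, hM⟩ := hPd
      have hMm : M.Monic := monic_of_mul_monic (hPm.mul hPm) (hM ▸ hN)
      have hdegP : 1 ≤ P.natDegree := hPm.natDegree_pos.mpr hPirr.ne_one
      have he : n = P.natDegree + P.natDegree + M.natDegree := by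
        rw [← hdeg, hM, (hPm.mul hPm).natDegree_mul hMm, hPm.natDegree_mul hPm]
      have hdegM : M.natDegree < n := by omega
      obtain ⟨a, b, ham, hbm, hasq, hab⟩ := ih M.natDegree hdegM M hMm rfl
      exact ⟨a, P * b, ham, hPm.mul hbm, hasq, by rw [hM, ← hab]; ring⟩

lemma sq_mul_sqf_unique {a₁ a₂ b₁ b₂ : F[X]} (ha₁ : a₁.Monic) (ha₂ : a₂.Monic)
    (hb₁ : b₁.Monic) (hb₂ : b₂.Monic) (hs₁ : Squarefree a₁) (hs₂ : Squarefree a₂)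
    (h : b₁ ^ 2 * a₁ = b₂ ^ 2 * a₂) : a₁ = a₂ ∧ b₁ = b₂ := by
  have key : ∀ (a b : F[X]), a.Monic → b.Monic → Squarefree a →
      normalizedFactors (b ^ 2 * a) = 2 • normalizedFactors b + normalizedFactors a := by
    intro a b ham hbm hsq
    rw [normalizedFactors_mul (pow_ne_zero 2 hbm.ne_zero) ham.ne_zero,
      normalizedFactors_pow]
  have h1 := key a₁ b₁ ha₁ hb₁ hs₁
  have h2 := key a₂ b₂ ha₂ hb₂ hs₂
  rw [h] at h1
  have hcnt : ∀ p : F[X],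
      (normalizedFactors a₁).count p = (normalizedFactors a₂).count p ∧
      (normalizedFactors b₁).count p = (normalizedFactors b₂).count p := by
    intro p
    have e : 2 * (normalizedFactors b₁).count p + (normalizedFactors a₁).count p =
        2 * (normalizedFactors b₂).count p + (normalizedFactors a₂).count p := by
      have := congrArg (Multiset.count p) (h1.symm.trans h2)
      simpa [Multiset.count_add, Multiset.count_nsmul, two_mul, mul_comm] using this
    have c1 : (normalizedFactors a₁).count p ≤ 1 :=
      Multiset.nodup_iff_count_le_one.mp
        ((squarefree_iff_nodup_normalizedFactors ha₁.ne_zero).mp hs₁) p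
    have c2 : (normalizedFactors a₂).count p ≤ 1 :=
      Multiset.nodup_iff_count_le_one.mp
        ((squarefree_iff_nodup_normalizedFactors ha₂.ne_zero).mp hs₂) p
    omega
  have hae : normalizedFactors a₁ = normalizedFactors a₂ :=
    Multiset.ext.mpr fun p => (hcnt p).1
  have hbe : normalizedFactors b₁ = normalizedFactors b₂ :=
    Multiset.ext.mpr fun p => (hcnt p).2
  constructor
  · rw [← monic_prod_nf ha₁, ← monic_prod_nf ha₂, hae]
  · rw [← monic_prod_nf hb₁, ← monic_prod_nf hb₂, hbe]
end L3

section L4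
variable (F) [Field F] [Fintype F] [DecidableEq F]

def coeffsToMonic (n : ℕ) (c : Fin n → F) : F[X] :=
  X ^ n + ∑ i : Fin n, C (c i) * X ^ (i : ℕ)
def monicFin (n : ℕ) : Finset F[X] := Finset.univ.image (coeffsToMonic F n)

open scoped Classical in
def sqfFin (n : ℕ) : Finset F[X] := (monicFin F n).filter (fun p => Squarefree p)

variable {F}


lemma coeffsToMonic_monic (n : ℕ) (c : Fin n → F) :
    (coeffsToMonic F n c).Monic ∧ (coeffsToMonic F n c).natDegree = n := by
  have hdeg : (∑ i : Fin n, C (c i) * X ^ (i : ℕ)).degree < (n : WithBot ℕ) := by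
    refine lt_of_le_of_lt (degree_sum_le _ _) ?_
    rw [Finset.sup_lt_iff (by exact_mod_cast WithBot.bot_lt_coe n)]
    intro i _
    exact lt_of_le_of_lt (degree_C_mul_X_pow_le _ _) (by exact_mod_cast i.2)
  constructor
  · exact monic_X_pow_add hdeg
  · unfold coeffsToMonic
    have : (X ^ n + ∑ i : Fin n, C (c i) * X ^ (i : ℕ)).degree = (n : WithBot ℕ) := by
      rw [add_comm, degree_add_eq_right_of_degree_lt (by simpa using hdeg), degree_X_pow]
    exact natDegree_eq_of_degree_eq_some this

lemma coeffsToMonic_coeff (n : ℕ) (c : Fin n → F) (i : Fin n) :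
    (coeffsToMonic F n c).coeff i = c i := by
  unfold coeffsToMonic
  rw [coeff_add, coeff_X_pow, if_neg (by exact Nat.ne_of_lt i.2), zero_add]
  simp_rw [C_mul_X_pow_eq_monomial, finset_sum_coeff, coeff_monomial]
  rw [Fintype.sum_eq_single i (by intro j hj; rw [if_neg]; exact fun h => hj (Fin.ext h)),
    if_pos rfl]

lemma mem_monicFin {n : ℕ} {p : F[X]} :
    p ∈ monicFin F n ↔ p.Monic ∧ p.natDegree = n := by
  constructor
  · rintro hp
    obtain ⟨c, -, rfl⟩ := Finset.mem_image.mp hp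
    exact coeffsToMonic_monic n c
  · rintro ⟨hm, rfl⟩
    refine Finset.mem_image.mpr ⟨fun i => p.coeff i, Finset.mem_univ _, ?_⟩
    unfold coeffsToMonic
    conv_rhs => rw [hm.as_sum]
    rw [Finset.sum_range fun i => C (p.coeff i) * X ^ i]

lemma card_monicFin (n : ℕ) : (monicFin F n).card = Fintype.card F ^ n := by
  rw [monicFin, Finset.card_image_of_injective _ ?_, Finset.card_univ, Fintype.card_fun,
    Fintype.card_fin]
  intro c c' h
  funext i
  rw [← coeffsToMonic_coeff n c i, ← coeffsToMonic_coeff n c' i, h]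


variable (F)

lemma mem_sqfFin {n : ℕ} {p : F[X]} :
    p ∈ sqfFin F n ↔ p.Monic ∧ p.natDegree = n ∧ Squarefree p := by
  classical
  rw [sqfFin]
  simp only [Finset.mem_filter, mem_monicFin]
  tauto

lemma sq_identity (n : ℕ) :
    ∑ j ∈ range (n / 2 + 1), (sqfFin F (n - 2 * j)).card * Fintype.card F ^ j =
      Fintype.card F ^ n := by
  have hcard : ((range (n / 2 + 1)).sigma
      (fun j => sqfFin F (n - 2 * j) ×ˢ monicFin F j)).card = (monicFin F n).card := by
    refine Finset.card_bij (fun x _ => x.2.2 ^ 2 * x.2.1) ?_ ?_ ?_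
    · rintro ⟨j, a, b⟩ hx
      rw [Finset.mem_sigma, Finset.mem_product, mem_sqfFin, mem_monicFin,
        Finset.mem_range] at hx
      obtain ⟨hj, ⟨ham, had, hasq⟩, hbm, hbd⟩ := hx
      rw [mem_monicFin]
      refine ⟨(hbm.pow 2).mul ham, ?_⟩
      rw [(hbm.pow 2).natDegree_mul ham, hbm.natDegree_pow, hbd, had]
      omega
    · rintro ⟨j, a, b⟩ hx ⟨j', a', b'⟩ hy hxy
      rw [Finset.mem_sigma, Finset.mem_product, mem_sqfFin, mem_monicFin,
        Finset.mem_range] at hx hy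
      dsimp only at hx hy hxy
      obtain ⟨hj, ⟨ham, had, hasq⟩, hbm, hbd⟩ := hx
      obtain ⟨hj', ⟨ham', had', hasq'⟩, hbm', hbd'⟩ := hy
      obtain ⟨hae, hbe⟩ := sq_mul_sqf_unique ham ham' hbm hbm' hasq hasq' hxy
      have hje : j = j' := by rw [← hbd, ← hbd', hbe]
      subst hje; subst hae; subst hbe; rfl
    · intro N hN
      rw [mem_monicFin] at hN
      obtain ⟨a, b, ham, hbm, hasq, hab⟩ := exists_sq_mul_sqf N.natDegree N hN.1 rfl
      have hd : 2 * b.natDegree + a.natDegree = n := by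
        rw [← hN.2, ← hab, (hbm.pow 2).natDegree_mul ham, hbm.natDegree_pow]
      refine ⟨⟨b.natDegree, a, b⟩, ?_, hab⟩
      rw [Finset.mem_sigma, Finset.mem_product, mem_sqfFin, mem_monicFin, Finset.mem_range]
      dsimp only
      exact ⟨by omega, ⟨ham, by omega, hasq⟩, hbm, rfl⟩
  rw [Finset.card_sigma] at hcard
  simp only [Finset.card_product, card_monicFin] at hcard
  rw [← hcard]

lemma sqfFin_zero : (sqfFin F 0).card = 1 := by
  have h : sqfFin F 0 = {1} := by
    ext p
    rw [mem_sqfFin, Finset.mem_singleton]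
    constructor
    · rintro ⟨hm, hd, -⟩
      exact hm.natDegree_eq_zero.mp hd
    · rintro rfl
      exact ⟨monic_one, natDegree_one, squarefree_one⟩
  rw [h, Finset.card_singleton]

lemma sqfFin_one : (sqfFin F 1).card = Fintype.card F := by
  have h : sqfFin F 1 = monicFin F 1 := by
    ext p
    rw [mem_sqfFin, mem_monicFin]
    refine ⟨fun h => ⟨h.1, h.2.1⟩, fun ⟨hm, hd⟩ => ⟨hm, hd, ?_⟩⟩
    have : Irreducible p := irreducible_of_degree_eq_one (by rw [degree_eq_natDegree hm.ne_zero, hd]; norm_cast)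
    exact this.squarefree
  rw [h, card_monicFin, pow_one]

lemma sqfFin_card {n : ℕ} (hn : 2 ≤ n) :
    (sqfFin F n).card + Fintype.card F ^ (n - 1) = Fintype.card F ^ n := by
  have h1 := sq_identity F n
  have h2 := sq_identity F (n - 2)
  rw [Finset.sum_range_succ'] at h1
  have h3 : ∑ j ∈ range (n / 2), (sqfFin F (n - 2 * (j + 1))).card * Fintype.card F ^ (j + 1)
      = Fintype.card F ^ (n - 1) := by
    have hr : n / 2 = (n - 2) / 2 + 1 := by omega
    calc ∑ j ∈ range (n / 2), (sqfFin F (n - 2 * (j + 1))).card * Fintype.card F ^ (j + 1)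
        = Fintype.card F * ∑ j ∈ range ((n - 2) / 2 + 1), (sqfFin F ((n - 2) - 2 * j)).card * Fintype.card F ^ j := by
          rw [Finset.mul_sum, hr]
          refine Finset.sum_congr rfl fun j hj => ?_
          have he : n - 2 * (j + 1) = (n - 2) - 2 * j := by omega
          rw [he]; ring
      _ = Fintype.card F * Fintype.card F ^ (n - 2) := by rw [h2]
      _ = Fintype.card F ^ (n - 1) := by rw [← pow_succ']; congr 1; omega
  rw [h3] at h1
  have hnn : n - 2 * 0 = n := by omega
  rw [hnn, pow_zero, mul_one] at h1
  omega

end L4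

section L5
variable (F) [Field F] [Fintype F] [DecidableEq F]

lemma divcount (n : ℕ) :
    ∑ N ∈ monicFin F n, (sqDiv N).card =
      ∑ k ∈ range (n + 1), (sqfFin F k).card * Fintype.card F ^ (n - k) := by
  have hcard : ((monicFin F n).sigma (fun N => sqDiv N)).card =
      ((range (n + 1)).biUnion (fun k => sqfFin F k ×ˢ monicFin F (n - k))).card := by
    refine Finset.card_bij (fun x _ => (x.2, x.1 / x.2)) ?_ ?_ ?_
    · rintro ⟨N, d⟩ hx
      rw [Finset.mem_sigma, mem_monicFin] at hx
      obtain ⟨⟨hNm, hNd⟩, hd⟩ := hx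
      dsimp only at hNm hNd hd ⊢
      rw [mem_sqDiv hNm] at hd
      obtain ⟨hdm, hdsq, hddvd⟩ := hd
      have hmd : d * (N / d) = N := EuclideanDomain.mul_div_cancel' hdm.ne_zero hddvd
      have hm : (N / d).Monic := monic_of_mul_monic hdm (by rwa [hmd])
      have hdeg : d.natDegree + (N / d).natDegree = n := by
        conv_rhs => rw [← hNd, ← hmd]
        rw [hdm.natDegree_mul hm]
      rw [Finset.mem_biUnion]
      refine ⟨d.natDegree, Finset.mem_range.mpr (by omega), ?_⟩
      rw [Finset.mem_product, mem_sqfFin, mem_monicFin]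
      dsimp only
      exact ⟨⟨hdm, rfl, hdsq⟩, hm, by omega⟩
    · rintro ⟨N, d⟩ hx ⟨N', d'⟩ hy hxy
      rw [Finset.mem_sigma, mem_monicFin] at hx hy
      dsimp only at hx hy hxy
      obtain ⟨⟨hNm, hNd⟩, hd⟩ := hx
      obtain ⟨⟨hNm', hNd'⟩, hd'⟩ := hy
      rw [mem_sqDiv hNm] at hd
      rw [mem_sqDiv hNm'] at hd'
      rw [Prod.mk.injEq] at hxy
      obtain ⟨h1, h2⟩ := hxy
      have hN : N = N' := by
        rw [← EuclideanDomain.mul_div_cancel' hd.1.ne_zero hd.2.2,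
          ← EuclideanDomain.mul_div_cancel' hd'.1.ne_zero hd'.2.2, h2, h1]
      subst hN; subst h1; rfl
    · rintro ⟨d, m⟩ hdm
      rw [Finset.mem_biUnion] at hdm
      obtain ⟨k, hk, hdm⟩ := hdm
      rw [Finset.mem_range] at hk
      rw [Finset.mem_product, mem_sqfFin, mem_monicFin] at hdm
      obtain ⟨⟨hdmon, hddeg, hdsq⟩, hmm, hmd⟩ := hdm
      have hNm : (d * m).Monic := hdmon.mul hmm
      refine ⟨⟨d * m, d⟩, ?_, ?_⟩
      · rw [Finset.mem_sigma, mem_monicFin]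
        refine ⟨⟨hNm, ?_⟩, (mem_sqDiv hNm).mpr ⟨hdmon, hdsq, dvd_mul_right d m⟩⟩
        rw [hdmon.natDegree_mul hmm, hddeg, hmd]
        omega
      · rw [Prod.mk.injEq]
        exact ⟨rfl, mul_div_cancel_left₀ m hdmon.ne_zero⟩
  rw [Finset.card_sigma, Finset.card_biUnion] at hcard
  · simpa only [Finset.card_product, card_monicFin, mem_sqfFin] using hcard
  · intro k hk k' hk' hne
    rw [Function.onFun, Finset.disjoint_left]
    rintro ⟨d, m⟩ hd hd'
    rw [Finset.mem_product, mem_sqfFin] at hd hd'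
    exact hne (by rw [← hd.1.2.1, ← hd'.1.2.1])

end L5

section L6
variable (F) [Field F] [Fintype F] [DecidableEq F]

def vsum (n : ℕ) : ℝ := ∑ k ∈ range (n + 1), ((sqfFin F k).card : ℝ) / (Fintype.card F : ℝ) ^ k

lemma qR_pos : (0 : ℝ) < (Fintype.card F : ℝ) := by
  exact_mod_cast Fintype.card_pos

lemma vsum_zero : vsum F 0 = 1 := by
  simp [vsum, sqfFin_zero]

lemma vsum_val {n : ℕ} (hn : 1 ≤ n) :
    vsum F n = ((n : ℝ) * ((Fintype.card F : ℝ) - 1) + Fintype.card F + 1) /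
      (Fintype.card F : ℝ) := by
  have hq : (Fintype.card F : ℝ) ≠ 0 := (qR_pos F).ne'
  induction n, hn using Nat.le_induction with
  | base =>
    rw [vsum]
    rw [Finset.sum_range_succ, Finset.sum_range_one, sqfFin_zero, sqfFin_one]
    field_simp
    ring
  | succ n hn ih =>
    rw [vsum, Finset.sum_range_succ, ← vsum, ih]
    have hc := sqfFin_card F (n := n + 1) (by omega)
    have hcR : ((sqfFin F (n + 1)).card : ℝ) + (Fintype.card F : ℝ) ^ n
        = (Fintype.card F : ℝ) ^ (n + 1) := by
      have : n + 1 - 1 = n := by omega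
      rw [this] at hc
      exact_mod_cast hc
    have hS : ((sqfFin F (n + 1)).card : ℝ)
        = (Fintype.card F : ℝ) ^ (n + 1) - (Fintype.card F : ℝ) ^ n := by linarith
    rw [hS]
    have hqp : (Fintype.card F : ℝ) ^ (n + 1) ≠ 0 := pow_ne_zero _ hq
    push_cast
    field_simp
    ring

lemma innerSum (n : ℕ) :
    ∑ N ∈ monicFin F n, (2 : ℝ) ^ polyOmega N / (Fintype.card F : ℝ) ^ N.natDegree
      = vsum F n := by
  have hq : (Fintype.card F : ℝ) ≠ 0 := (qR_pos F).ne'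
  have h1 : ∑ N ∈ monicFin F n, (2 : ℝ) ^ polyOmega N / (Fintype.card F : ℝ) ^ N.natDegree
      = ∑ N ∈ monicFin F n, ((sqDiv N).card : ℝ) / (Fintype.card F : ℝ) ^ n := by
    refine Finset.sum_congr rfl fun N hN => ?_
    rw [mem_monicFin] at hN
    rw [hN.2, card_sqDiv hN.1]
    push_cast
    ring
  rw [h1, ← Finset.sum_div, ← Nat.cast_sum, divcount, vsum]
  rw [Nat.cast_sum, Finset.sum_div]
  refine Finset.sum_congr rfl fun k hk => ?_
  rw [Finset.mem_range] at hk
  have hpow : (Fintype.card F : ℝ) ^ (n - k) * (Fintype.card F : ℝ) ^ k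
      = (Fintype.card F : ℝ) ^ n := by
    rw [← pow_add]
    congr 1
    omega
  push_cast
  rw [div_eq_div_iff (pow_ne_zero _ hq) (pow_ne_zero _ hq), mul_assoc, hpow]

lemma total_sum (x : ℕ) :
    ∑ n ∈ range (x + 1), vsum F n =
      (((Fintype.card F : ℝ) - 1) * (x : ℝ) ^ 2 + (3 * (Fintype.card F : ℝ) + 1) * (x : ℝ)
        + 2 * (Fintype.card F : ℝ)) / (2 * (Fintype.card F : ℝ)) := by
  have hq : (Fintype.card F : ℝ) ≠ 0 := (qR_pos F).ne'
  induction x with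
  | zero =>
    rw [Finset.sum_range_one, vsum_zero]
    push_cast
    field_simp
    ring
  | succ x ih =>
    rw [Finset.sum_range_succ, ih, vsum_val F (by omega)]
    push_cast
    field_simp
    ring

end L6

/-- For every integer `x ≥ 0`,
`Σ_{N monic, deg N ≤ x} 2^{ω(N)}/|N| = ((q-1)x² + (3q+1)x + 2q)/(2q)`. -/
theorem sum_two_pow_omega
    (F : Type*) [Field F] [Fintype F] (q : ℕ) (hq : Fintype.card F = q) (x : ℕ) :
    ∑ᶠ N ∈ {N : Polynomial F | N.Monic ∧ N.natDegree ≤ x},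
      (2 : ℝ) ^ polyOmega N / (q : ℝ) ^ N.natDegree =
      (((q : ℝ) - 1) * (x : ℝ) ^ 2 + (3 * (q : ℝ) + 1) * (x : ℝ) + 2 * q) / (2 * q) := by
  subst hq
  letI : DecidableEq F := Classical.decEq F
  have hset : {N : Polynomial F | N.Monic ∧ N.natDegree ≤ x}
      = ↑((range (x + 1)).biUnion (monicFin F)) := by
    ext N
    simp only [Set.mem_setOf_eq, Finset.coe_biUnion, Set.mem_iUnion, Finset.mem_coe,
      Finset.mem_range, mem_monicFin, Nat.lt_succ_iff]
    constructor
    · rintro ⟨hm, hd⟩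
      exact ⟨N.natDegree, hd, hm, rfl⟩
    · rintro ⟨n, hn, hm, rfl⟩
      exact ⟨hm, hn⟩
  rw [hset, finsum_mem_coe_finset, Finset.sum_biUnion ?_]
  · rw [Finset.sum_congr rfl fun n _ => innerSum F n]
    exact total_sum F x
  · intro a _ b _ hab
    rw [Function.onFun, Finset.disjoint_left]
    intro N hN hN'
    rw [mem_monicFin] at hN hN'
    exact hab (by rw [← hN.2, ← hN'.2])
end
end

section
/- For positive integers 𝔇, Σ |ABCD|^{−1/2} = ((q−1)/(48q))·𝔇⁴ + O(𝔇³), where the sum is over quadruples (A,B,C,D) of monic polynomials in F_q[x] satisfying deg(AB) < 𝔇, deg(CD) < 𝔇 and AC = BD, and the implied constant depends only on q. -/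
set_option maxHeartbeats 1600000

open Polynomial Finset

noncomputable section

namespace DSA
variable (F : Type*) [Field F] [Fintype F]
open scoped Classical

set_option linter.unusedSectionVars false
set_option linter.unusedVariables false
set_option linter.unusedTactic false

/-- Finset of monic polynomials of natDegree exactly `n`. -/
def mon (n : ℕ) : Finset (Polynomial F) :=
  Finset.univ.image (fun c : Fin n → F => X ^ n + ∑ i : Fin n, C (c i) * X ^ (i : ℕ))

/-- Finset of coprime pairs of monic polynomials of natDegrees `(m, n)`. -/
def cop (m n : ℕ) : Finset (Polynomial F × Polynomial F) :=
  ((mon F m) ×ˢ (mon F n)).filter fun p => IsCoprime p.1 p.2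

/-- Finset of monic polynomials of natDegree `< D`. -/
def monLT (D : ℕ) : Finset (Polynomial F) := (range D).biUnion (mon F)

variable {F}

lemma aux_deg (n : ℕ) (c : Fin n → F) :
    (∑ i : Fin n, C (c i) * X ^ (i : ℕ)).degree < ((n : ℕ) : WithBot ℕ) :=
  degree_sum_fin_lt c

lemma mem_mon {n : ℕ} {P : Polynomial F} : P ∈ mon F n ↔ P.Monic ∧ P.natDegree = n := by
  constructor
  · rintro h
    simp only [mon, Finset.mem_image, Finset.mem_univ, true_and] at h
    obtain ⟨c, rfl⟩ := h
    have hd := aux_deg n c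
    refine ⟨monic_X_pow_add hd, ?_⟩
    have hdeg : (X ^ n + ∑ i : Fin n, C (c i) * X ^ (i : ℕ)).degree = (n : WithBot ℕ) := by
      rw [add_comm, degree_add_eq_right_of_degree_lt (by simpa using hd), degree_X_pow]
    exact natDegree_eq_of_degree_eq_some hdeg
  · rintro ⟨hm, rfl⟩
    simp only [mon, Finset.mem_image, Finset.mem_univ, true_and]
    refine ⟨fun i => P.coeff i, ?_⟩
    ext k
    by_cases hk : k < P.natDegree
    · rw [coeff_add, coeff_X_pow, if_neg hk.ne, finset_sum_coeff]
      simp only [coeff_C_mul, coeff_X_pow]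
      rw [Finset.sum_eq_single (⟨k, hk⟩ : Fin P.natDegree)] <;> simp +contextual [Fin.ext_iff, eq_comm]
    · push_neg at hk
      rcases eq_or_lt_of_le hk with h | h
      · rw [coeff_add, coeff_X_pow, if_pos h.symm, finset_sum_coeff]
        have : ∀ i : Fin P.natDegree, (C (P.coeff (i:ℕ)) * X ^ (i:ℕ)).coeff k = 0 := by
          intro i
          simp only [coeff_C_mul, coeff_X_pow]
          rw [if_neg (by omega : ¬ k = (i:ℕ)), mul_zero]
        rw [Finset.sum_congr rfl (fun i _ => this i), Finset.sum_const, smul_zero, add_zero]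
        rw [← h]; exact hm.coeff_natDegree.symm ▸ rfl
      · rw [coeff_add, coeff_X_pow, if_neg (by omega), finset_sum_coeff]
        rw [P.coeff_eq_zero_of_natDegree_lt h]
        have : ∀ i : Fin P.natDegree, (C (P.coeff (i:ℕ)) * X ^ (i:ℕ)).coeff k = 0 := by
          intro i
          simp only [coeff_C_mul, coeff_X_pow]
          rw [if_neg (by omega : ¬ k = (i:ℕ)), mul_zero]
        rw [Finset.sum_congr rfl (fun i _ => this i), Finset.sum_const, smul_zero, add_zero]

lemma card_mon (n : ℕ) : (mon F n).card = Fintype.card F ^ n := by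
  rw [mon, Finset.card_image_of_injective _ ?_, Finset.card_univ, Fintype.card_fun, Fintype.card_fin]
  intro c c' h
  funext i
  have := congrArg (fun P => Polynomial.coeff P (i : ℕ)) h
  simp only [coeff_add, finset_sum_coeff, coeff_C_mul, coeff_X_pow] at this
  rw [Finset.sum_eq_single i, Finset.sum_eq_single i] at this
  · simpa using this
  all_goals simp +contextual [Fin.ext_iff, eq_comm]


/-- Every pair of monic polynomials decomposes as `(G*A', G*B')` with `A', B'` coprime monic. -/
lemma exists_decomp {A B : Polynomial F} (hA : A.Monic) (hB : B.Monic) :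
    ∃ G A' B' : Polynomial F, G.Monic ∧ A'.Monic ∧ B'.Monic ∧ IsCoprime A' B' ∧
      A = G * A' ∧ B = G * B' := by
  classical
  set d := EuclideanDomain.gcd A B with hd
  have hdne : d ≠ 0 := by
    intro h
    rw [hd, EuclideanDomain.gcd_eq_zero_iff] at h
    exact hA.ne_zero h.1
  set G := d * C (d.leadingCoeff)⁻¹ with hG
  have hGm : G.Monic := monic_mul_leadingCoeff_inv hdne
  have hGd : ∀ p, d ∣ p → G ∣ p := by
    intro p hp
    obtain ⟨r, rfl⟩ := hp
    exact ⟨C d.leadingCoeff * r, by rw [hG]; ring_nf; rw [mul_assoc, ← C_mul, inv_mul_cancel₀ (leadingCoeff_ne_zero.2 hdne), C_1, mul_one]⟩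
  obtain ⟨A', hA'⟩ := hGd A (EuclideanDomain.gcd_dvd_left A B)
  obtain ⟨B', hB'⟩ := hGd B (EuclideanDomain.gcd_dvd_right A B)
  have hGne : G ≠ 0 := hGm.ne_zero
  have hA'm : A'.Monic := hGm.of_mul_monic_left (hA' ▸ hA)
  have hB'm : B'.Monic := hGm.of_mul_monic_left (hB' ▸ hB)
  refine ⟨G, A', B', hGm, hA'm, hB'm, ?_, hA', hB'⟩
  -- Bezout: d = A * a + B * b
  have hbez := EuclideanDomain.gcd_eq_gcd_ab A B
  set a := EuclideanDomain.gcdA A B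
  set b := EuclideanDomain.gcdB A B
  have key : d * (C d.leadingCoeff⁻¹ * (A' * a + B' * b)) = d * 1 := by
    rw [mul_one]
    calc d * (C d.leadingCoeff⁻¹ * (A' * a + B' * b)) = G * A' * a + G * B' * b := by
          rw [hG]; ring
      _ = A * a + B * b := by rw [← hA', ← hB']
      _ = d := hbez.symm
  have hone : C d.leadingCoeff⁻¹ * (A' * a + B' * b) = 1 := mul_left_cancel₀ hdne key
  exact ⟨C d.leadingCoeff⁻¹ * a, C d.leadingCoeff⁻¹ * b, by linear_combination hone⟩

lemma decomp_unique {G A' B' H A'' B'' : Polynomial F}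
    (hG : G.Monic) (hH : H.Monic) (hA' : A'.Monic) (hB' : B'.Monic)
    (hA'' : A''.Monic) (hB'' : B''.Monic)
    (hc : IsCoprime A' B') (hc' : IsCoprime A'' B'')
    (e1 : G * A' = H * A'') (e2 : G * B' = H * B'') :
    G = H ∧ A' = A'' ∧ B' = B'' := by
  have key : A' * B'' = B' * A'' := by
    have h : G * (A' * B'') = G * (B' * A'') := by
      calc G * (A' * B'') = (G * A') * B'' := by ring
        _ = (H * A'') * B'' := by rw [e1]
        _ = (H * B'') * A'' := by ring
        _ = (G * B') * A'' := by rw [e2]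
        _ = G * (B' * A'') := by ring
    exact mul_left_cancel₀ hG.ne_zero h
  have d1 : A' ∣ A'' := hc.dvd_of_dvd_mul_left ⟨B'', by linear_combination -key⟩
  have d2 : A'' ∣ A' := hc'.dvd_of_dvd_mul_left ⟨B', by linear_combination key⟩
  have hAeq : A' = A'' := eq_of_monic_of_associated hA' hA'' (associated_of_dvd_dvd d1 d2)
  have hGeq : G = H := by
    apply mul_right_cancel₀ hA'.ne_zero
    rw [e1, hAeq]
  have hBeq : B' = B'' := by
    apply mul_left_cancel₀ hG.ne_zero
    rw [e2, hGeq]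
  exact ⟨hGeq, hAeq, hBeq⟩


lemma mem_cop {m n : ℕ} {p : Polynomial F × Polynomial F} :
    p ∈ cop F m n ↔ p.1.Monic ∧ p.1.natDegree = m ∧ p.2.Monic ∧ p.2.natDegree = n ∧
      IsCoprime p.1 p.2 := by
  simp only [cop, Finset.mem_filter, Finset.mem_product, mem_mon]
  tauto

lemma fib (m n : ℕ) :
    ∑ g ∈ range (min m n + 1), Fintype.card F ^ g * (cop F (m - g) (n - g)).card =
      Fintype.card F ^ (m + n) := by
  have key : ((range (min m n + 1)).sigma
      (fun g => (mon F g) ×ˢ (cop F (m - g) (n - g)))).card = ((mon F m) ×ˢ (mon F n)).card := by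
    apply Finset.card_bij (fun t _ => (t.2.1 * t.2.2.1, t.2.1 * t.2.2.2))
    · rintro ⟨g, G, A', B'⟩ ht
      simp only [Finset.mem_sigma, Finset.mem_range, Finset.mem_product, mem_mon, mem_cop] at ht ⊢
      obtain ⟨hg, ⟨hGm, hGd⟩, hA'm, hA'd, hB'm, hB'd, hcop⟩ := ht
      exact ⟨⟨hGm.mul hA'm, by rw [hGm.natDegree_mul hA'm]; omega⟩,
        hGm.mul hB'm, by rw [hGm.natDegree_mul hB'm]; omega⟩
    · rintro ⟨g, G, A', B'⟩ ht ⟨g', H, A'', B''⟩ ht' heq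
      simp only [Finset.mem_sigma, Finset.mem_range, Finset.mem_product, mem_mon, mem_cop]
        at ht ht'
      obtain ⟨hg, ⟨hGm, hGd⟩, hA'm, hA'd, hB'm, hB'd, hcop⟩ := ht
      obtain ⟨hg', ⟨hHm, hHd⟩, hA''m, hA''d, hB''m, hB''d, hcop'⟩ := ht'
      simp only [Prod.mk.injEq] at heq
      obtain ⟨e1, e2, e3⟩ := decomp_unique hGm hHm hA'm hB'm hA''m hB''m hcop hcop' heq.1 heq.2
      subst e1 e2 e3
      obtain rfl : g = g' := by omega
      rfl
    · rintro ⟨A, B⟩ hAB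
      simp only [Finset.mem_product, mem_mon] at hAB
      obtain ⟨⟨hAm, hAd⟩, hBm, hBd⟩ := hAB
      obtain ⟨G, A', B', hGm, hA'm, hB'm, hcop, rfl, rfl⟩ := exists_decomp hAm hBm
      have hdm : G.natDegree + A'.natDegree = m := by rw [← hGm.natDegree_mul hA'm]; exact hAd
      have hdn : G.natDegree + B'.natDegree = n := by rw [← hGm.natDegree_mul hB'm]; exact hBd
      refine ⟨⟨G.natDegree, G, A', B'⟩, ?_, rfl⟩
      simp only [Finset.mem_sigma, Finset.mem_range, Finset.mem_product, mem_mon, mem_cop]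
      exact ⟨by omega, ⟨hGm, by trivial⟩, hA'm, by omega, hB'm, by omega, hcop⟩
  rw [Finset.card_sigma] at key
  simp only [Finset.card_product, card_mon] at key
  rw [pow_add]
  exact key

lemma card_cop_zero {m n : ℕ} (h : m = 0 ∨ n = 0) :
    (cop F m n).card = Fintype.card F ^ (m + n) := by
  have : cop F m n = (mon F m) ×ˢ (mon F n) := by
    rw [cop, Finset.filter_true_of_mem]
    rintro ⟨A, B⟩ hp
    simp only [Finset.mem_product, mem_mon] at hp
    rcases h with h | h
    · subst h
      have : A = 1 := hp.1.1.natDegree_eq_zero.mp hp.1.2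
      rw [this]
      exact isCoprime_one_left
    · subst h
      have : B = 1 := hp.2.1.natDegree_eq_zero.mp hp.2.2
      rw [this]
      exact isCoprime_one_right
  rw [this, Finset.card_product, card_mon, card_mon, pow_add]

lemma card_cop {m n : ℕ} (hm : 1 ≤ m) (hn : 1 ≤ n) :
    (cop F m n).card + Fintype.card F ^ (m + n - 1) = Fintype.card F ^ (m + n) := by
  have h1 := fib (F := F) m n
  have h2 := fib (F := F) (m - 1) (n - 1)
  rw [Finset.sum_range_succ'] at h1
  have hmin : min m n = min (m - 1) (n - 1) + 1 := by omega
  rw [hmin] at h1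
  have hshift : ∀ g ∈ range (min (m - 1) (n - 1) + 1),
      Fintype.card F ^ (g + 1) * (cop F (m - (g + 1)) (n - (g + 1))).card =
      Fintype.card F * (Fintype.card F ^ g * (cop F (m - 1 - g) (n - 1 - g)).card) := by
    intro g _
    have e1 : m - (g + 1) = m - 1 - g := by omega
    have e2 : n - (g + 1) = n - 1 - g := by omega
    rw [e1, e2, pow_succ]
    ring
  rw [Finset.sum_congr rfl hshift, ← Finset.mul_sum, h2] at h1
  have : Fintype.card F * Fintype.card F ^ (m - 1 + (n - 1)) = Fintype.card F ^ (m + n - 1) := by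
    rw [← pow_succ']
    congr 1
    omega
  rw [this] at h1
  simpa [Nat.sub_zero, pow_zero, one_mul, add_comm] using h1

lemma card_cop_real {m n : ℕ} :
    ((cop F m n).card : ℝ) = if m = 0 ∨ n = 0 then (Fintype.card F : ℝ) ^ (m + n)
      else (Fintype.card F : ℝ) ^ (m + n) - (Fintype.card F : ℝ) ^ (m + n - 1) := by
  split_ifs with h
  · rw [card_cop_zero h]
    push_cast
    rfl
  · push_neg at h
    have := card_cop (F := F) (by omega : 1 ≤ m) (by omega : 1 ≤ n)
    have := congrArg (fun k : ℕ => (k : ℝ)) this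
    push_cast at this
    linarith


lemma sq_sum (j : ℕ) : ∑ i ∈ range j, ((i : ℝ) + 1) ^ 2 = (j:ℝ) * ((j:ℝ) + 1) * (2 * (j:ℝ) + 1) / 6 := by
  induction j with
  | zero => simp
  | succ k ih => rw [Finset.sum_range_succ, ih]; push_cast; ring

lemma cube_like (D : ℕ) :
    ∑ m ∈ range D, ((m : ℝ) + 1) * ((m : ℝ) + 2) * (2 * (m : ℝ) + 3) / 6 =
      (D:ℝ) * ((D:ℝ) + 1) ^ 2 * ((D:ℝ) + 2) / 12 := by
  induction D with
  | zero => simp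
  | succ k ih => rw [Finset.sum_range_succ, ih]; push_cast; ring

lemma inner_sum (D m : ℕ) (hm : m < D) :
    ∑ n ∈ range D, (((D - (m + n) : ℕ)) : ℝ) ^ 2 =
      ((D - m : ℕ) : ℝ) * ((D - m : ℕ) + 1) * (2 * ((D - m : ℕ) : ℝ) + 1) / 6 := by
  set j := D - m with hj
  have h1 : ∑ n ∈ range D, (((D - (m + n) : ℕ)) : ℝ) ^ 2
      = ∑ n ∈ range j, (((j - n : ℕ)) : ℝ) ^ 2 := by
    rw [← Finset.sum_subset (Finset.range_subset_range.2 (by omega : j ≤ D))]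
    · apply Finset.sum_congr rfl
      intro n hn
      rw [Finset.mem_range] at hn
      congr 2
      omega
    · intro n _ hn
      rw [Finset.mem_range, not_lt] at hn
      have : D - (m + n) = 0 := by omega
      rw [this]
      norm_num
  rw [h1, ← Finset.sum_range_reflect (fun n => (((j - n : ℕ)) : ℝ) ^ 2) j]
  have h2 : ∀ i ∈ range j, (((j - (j - 1 - i) : ℕ)) : ℝ) ^ 2 = ((i : ℝ) + 1) ^ 2 := by
    intro i hi
    rw [Finset.mem_range] at hi
    have : j - (j - 1 - i) = i + 1 := by omega
    rw [this]
    push_cast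
    ring
  rw [Finset.sum_congr rfl h2, sq_sum]

lemma Kpp (D : ℕ) :
    ∑ m ∈ range D, ∑ n ∈ range D, (((D - (m + n) : ℕ)) : ℝ) ^ 2 =
      (D:ℝ) * ((D:ℝ) + 1) ^ 2 * ((D:ℝ) + 2) / 12 := by
  have h1 : ∀ m ∈ range D, ∑ n ∈ range D, (((D - (m + n) : ℕ)) : ℝ) ^ 2
      = ((D - m : ℕ) : ℝ) * ((D - m : ℕ) + 1) * (2 * ((D - m : ℕ) : ℝ) + 1) / 6 := by
    intro m hm
    exact inner_sum D m (Finset.mem_range.1 hm)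
  rw [Finset.sum_congr rfl h1]
  have h2 : ∀ m ∈ range D,
      ((D - m : ℕ) : ℝ) * ((D - m : ℕ) + 1) * (2 * ((D - m : ℕ) : ℝ) + 1) / 6
      = (fun x : ℕ => (((x + 1 : ℕ)) : ℝ) * ((((x + 1 : ℕ)) : ℝ) + 1) * (2 * (((x + 1 : ℕ)) : ℝ) + 1) / 6) (D - 1 - m) := by
    intro m hm
    rw [Finset.mem_range] at hm
    simp only
    have : D - 1 - m + 1 = D - m := by omega
    rw [this]
  rw [Finset.sum_congr rfl h2,
    Finset.sum_range_reflect
      (fun x : ℕ => (((x + 1 : ℕ)) : ℝ) * ((((x + 1 : ℕ)) : ℝ) + 1) * (2 * (((x + 1 : ℕ)) : ℝ) + 1) / 6) D]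
  have h3 : ∀ m ∈ range D,
      (((m + 1 : ℕ)) : ℝ) * ((((m + 1 : ℕ)) : ℝ) + 1) * (2 * (((m + 1 : ℕ)) : ℝ) + 1) / 6
      = ((m : ℝ) + 1) * ((m : ℝ) + 2) * (2 * (m : ℝ) + 3) / 6 := by
    intro m _
    push_cast
    ring
  rw [Finset.sum_congr rfl h3, cube_like]

lemma Ncard (D s : ℕ) :
    (((range D).filter (fun g => 2 * g + s < D)).card : ℕ) = (D - s + 1) / 2 := by
  have : (range D).filter (fun g => 2 * g + s < D) = range ((D - s + 1) / 2) := by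
    ext g
    simp only [Finset.mem_filter, Finset.mem_range]
    omega
  rw [this, Finset.card_range]

lemma arith (q : ℝ) (hq : 2 ≤ q) (cc : ℕ → ℕ → ℝ)
    (hcc : ∀ m n : ℕ, cc m n = if m = 0 ∨ n = 0 then q ^ (m + n)
      else q ^ (m + n) - q ^ (m + n - 1))
    (D : ℕ) (hD : 1 ≤ D) :
    |(∑ m ∈ range D, ∑ n ∈ range D, cc m n * (q ^ (m + n))⁻¹ *
        (((range D).filter (fun g => 2 * g + (m + n) < D)).card : ℝ) *
        (((range D).filter (fun g => 2 * g + (m + n) < D)).card : ℝ)) -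
      (q - 1) / (48 * q) * (D : ℝ) ^ 4| ≤ 4 * (D : ℝ) ^ 3 := by
  have hq0 : (0 : ℝ) < q := by linarith
  set W : ℝ := 1 - 1/q with hW
  have hW0 : 0 ≤ W := by
    rw [hW]
    have : 1/q ≤ 1/2 := by
      apply div_le_div_of_nonneg_left <;> linarith
    linarith
  have hW1 : W ≤ 1 := by
    rw [hW]
    have : 0 < 1/q := by positivity
    linarith
  set N : ℕ → ℝ := fun s => (((D - s + 1) / 2 : ℕ) : ℝ) with hN
  -- rewrite the summand
  have hterm : ∀ m n : ℕ, cc m n * (q ^ (m + n))⁻¹ *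
        (((range D).filter (fun g => 2 * g + (m + n) < D)).card : ℝ) *
        (((range D).filter (fun g => 2 * g + (m + n) < D)).card : ℝ)
      = W * N (m + n) ^ 2 + (if m = 0 ∨ n = 0 then (1/q) * N (m + n) ^ 2 else 0) := by
    intro m n
    rw [Ncard]
    have hw : cc m n * (q ^ (m + n))⁻¹ = W + (if m = 0 ∨ n = 0 then 1/q else 0) := by
      rw [hcc]
      split_ifs with h
      · rw [mul_inv_cancel₀ (by positivity)]
        rw [hW]; ring
      · have hmn : 1 ≤ m + n := by
          push_neg at h
          omega
        rw [sub_mul, mul_inv_cancel₀ (by positivity)]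
        have : q ^ (m + n) = q ^ (m + n - 1) * q := by
          rw [← pow_succ]
          congr 1
          omega
        rw [this, mul_inv, ← mul_assoc, mul_inv_cancel₀ (by positivity), one_mul, hW]
        ring
    rw [hN]
    simp only
    rw [show (cc m n * (q ^ (m + n))⁻¹ * (((D - (m + n) + 1) / 2 : ℕ) : ℝ) *
        (((D - (m + n) + 1) / 2 : ℕ) : ℝ)) = (cc m n * (q ^ (m + n))⁻¹) *
        (((D - (m + n) + 1) / 2 : ℕ) : ℝ) ^ 2 by ring, hw]
    split_ifs with h <;> ring
  rw [Finset.sum_congr rfl (fun m _ => Finset.sum_congr rfl (fun n _ => hterm m n))]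
  simp only [Finset.sum_add_distrib]
  simp only [← Finset.mul_sum]
  set K : ℝ := ∑ m ∈ range D, ∑ n ∈ range D, N (m + n) ^ 2 with hK
  set E : ℝ := ∑ m ∈ range D, ∑ n ∈ range D,
    (if m = 0 ∨ n = 0 then (1/q) * N (m + n) ^ 2 else 0) with hE
  -- bounds on N
  have hNb : ∀ s : ℕ, ((D - s : ℕ) : ℝ) / 2 ≤ N s ∧ N s ≤ (((D - s : ℕ) : ℝ) + 1) / 2
      ∧ ((D - s : ℕ) : ℝ) ≤ D ∧ 0 ≤ N s := by
    intro s
    have hx1 : (D - s : ℕ) ≤ 2 * ((D - s + 1) / 2) := by omega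
    have hx2 : 2 * ((D - s + 1) / 2) ≤ D - s + 1 := by omega
    have hx3 : (D - s : ℕ) ≤ D := by omega
    have c1 : ((D - s : ℕ) : ℝ) ≤ 2 * (((D - s + 1) / 2 : ℕ) : ℝ) := by exact_mod_cast hx1
    have c2 : 2 * (((D - s + 1) / 2 : ℕ) : ℝ) ≤ ((D - s : ℕ) : ℝ) + 1 := by exact_mod_cast hx2
    have c3 : ((D - s : ℕ) : ℝ) ≤ (D : ℝ) := by exact_mod_cast hx3
    refine ⟨by simp only [hN]; linarith, by simp only [hN]; linarith, c3, by positivity⟩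
  have hD1 : (1 : ℝ) ≤ (D : ℝ) := by exact_mod_cast hD
  -- |K - Kpp/4| ≤ D^3
  have hKdiff : |K - (∑ m ∈ range D, ∑ n ∈ range D, (((D - (m + n) : ℕ)) : ℝ) ^ 2) / 4|
      ≤ (D : ℝ) ^ 3 := by
    rw [hK, Finset.sum_div, ← Finset.sum_sub_distrib]
    calc |∑ m ∈ range D, ((∑ n ∈ range D, N (m + n) ^ 2) -
            (∑ n ∈ range D, (((D - (m + n) : ℕ)) : ℝ) ^ 2) / 4)|
        ≤ ∑ m ∈ range D, |(∑ n ∈ range D, N (m + n) ^ 2) -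
            (∑ n ∈ range D, (((D - (m + n) : ℕ)) : ℝ) ^ 2) / 4| := Finset.abs_sum_le_sum_abs _ _
      _ ≤ ∑ m ∈ range D, ((D : ℝ) * D) := by
          apply Finset.sum_le_sum
          intro m _
          rw [Finset.sum_div, ← Finset.sum_sub_distrib]
          calc |∑ n ∈ range D, (N (m + n) ^ 2 - (((D - (m + n) : ℕ)) : ℝ) ^ 2 / 4)|
              ≤ ∑ n ∈ range D, |N (m + n) ^ 2 - (((D - (m + n) : ℕ)) : ℝ) ^ 2 / 4| :=
                Finset.abs_sum_le_sum_abs _ _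
            _ ≤ ∑ n ∈ range D, (D : ℝ) := by
                apply Finset.sum_le_sum
                intro n _
                obtain ⟨b1, b2, b3, b4⟩ := hNb (m + n)
                rw [abs_le]
                constructor <;> nlinarith
            _ = (D : ℝ) * D := by rw [Finset.sum_const, Finset.card_range]; ring
      _ = (D : ℝ) ^ 3 := by rw [Finset.sum_const, Finset.card_range]; ring
  -- E bound
  have hEb : |E| ≤ 2 * (D : ℝ) ^ 3 := by
    have hNle : ∀ s : ℕ, N s ^ 2 ≤ (D : ℝ) ^ 2 := by
      intro s
      obtain ⟨b1, b2, b3, b4⟩ := hNb s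
      nlinarith
    have h1q : 1/q ≤ 1 := by
      rw [div_le_one hq0]; linarith
    have h1q0 : 0 ≤ 1/q := by positivity
    have hterm_le : ∀ m n : ℕ, (if m = 0 ∨ n = 0 then (1/q) * N (m + n) ^ 2 else 0)
        ≤ (if m = 0 then (D : ℝ) ^ 2 else 0) + (if n = 0 then (D : ℝ) ^ 2 else 0) := by
      intro m n
      have hsq : 0 ≤ N (m + n) ^ 2 := sq_nonneg _
      have hb : (1/q) * N (m + n) ^ 2 ≤ (D : ℝ) ^ 2 := by
        nlinarith [hNle (m + n)]
      have hD2 : (0:ℝ) ≤ (D : ℝ) ^ 2 := by positivity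
      by_cases hm : m = 0
      · rw [if_pos (Or.inl hm), if_pos hm]
        have h2 : (0:ℝ) ≤ (if n = 0 then (D : ℝ) ^ 2 else 0) := by
          split_ifs
          · exact hD2
          · exact le_refl 0
        linarith
      · by_cases hn : n = 0
        · rw [if_pos (Or.inr hn), if_neg hm, if_pos hn]
          linarith
        · rw [if_neg (by tauto), if_neg hm, if_neg hn]
          norm_num
    have hterm_nn : ∀ m n : ℕ, 0 ≤ (if m = 0 ∨ n = 0 then (1/q) * N (m + n) ^ 2 else 0) := by
      intro m n
      split_ifs
      · positivity
      · exact le_refl 0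
    have hE0 : 0 ≤ E := by
      rw [hE]
      apply Finset.sum_nonneg; intro m _
      apply Finset.sum_nonneg; intro n _
      exact hterm_nn m n
    rw [abs_of_nonneg hE0, hE]
    calc (∑ m ∈ range D, ∑ n ∈ range D, (if m = 0 ∨ n = 0 then (1/q) * N (m + n) ^ 2 else 0))
        ≤ ∑ m ∈ range D, ∑ n ∈ range D,
            ((if m = 0 then (D : ℝ) ^ 2 else 0) + (if n = 0 then (D : ℝ) ^ 2 else 0)) := by
          apply Finset.sum_le_sum; intro m _
          apply Finset.sum_le_sum; intro n _
          exact hterm_le m n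
      _ = ∑ m ∈ range D, ((D : ℝ) * (if m = 0 then (D : ℝ) ^ 2 else 0) + (D : ℝ) ^ 2) := by
          apply Finset.sum_congr rfl; intro m _
          rw [Finset.sum_add_distrib, Finset.sum_const, Finset.card_range,
            Finset.sum_ite_eq' (range D) 0 (fun _ => (D : ℝ) ^ 2),
            if_pos (Finset.mem_range.2 (by omega : 0 < D))]
          push_cast
          ring
      _ = 2 * (D : ℝ) ^ 3 := by
          rw [Finset.sum_add_distrib, ← Finset.mul_sum,
            Finset.sum_ite_eq' (range D) 0 (fun _ => (D : ℝ) ^ 2),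
            if_pos (Finset.mem_range.2 (by omega : 0 < D)), Finset.sum_const,
            Finset.card_range]
          push_cast
          ring
  -- main term
  have hKmain : |K - (D : ℝ) ^ 4 / 48| ≤ 2 * (D : ℝ) ^ 3 := by
    have hKpp := Kpp D
    have h2 : |(∑ m ∈ range D, ∑ n ∈ range D, (((D - (m + n) : ℕ)) : ℝ) ^ 2) / 4 -
        (D : ℝ) ^ 4 / 48| ≤ (D : ℝ) ^ 3 := by
      have hD0 : (0:ℝ) ≤ (D : ℝ) := by positivity
      have h3 : (D : ℝ) ^ 2 ≤ (D : ℝ) ^ 3 := by nlinarith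
      have h4 : (D : ℝ) ≤ (D : ℝ) ^ 3 := by nlinarith
      rw [hKpp, abs_le]
      constructor <;> nlinarith
    calc |K - (D : ℝ) ^ 4 / 48|
        ≤ |K - (∑ m ∈ range D, ∑ n ∈ range D, (((D - (m + n) : ℕ)) : ℝ) ^ 2) / 4| +
          |(∑ m ∈ range D, ∑ n ∈ range D, (((D - (m + n) : ℕ)) : ℝ) ^ 2) / 4 -
            (D : ℝ) ^ 4 / 48| := abs_sub_le _ _ _
      _ ≤ (D : ℝ) ^ 3 + (D : ℝ) ^ 3 := add_le_add hKdiff h2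
      _ = 2 * (D : ℝ) ^ 3 := by ring
  -- assemble
  have hqW : (q - 1) / (48 * q) = W / 48 := by
    rw [hW]
    field_simp
  have heq : W * K + E - W / 48 * (D : ℝ) ^ 4 = W * (K - (D : ℝ) ^ 4 / 48) + E := by ring
  rw [hqW, heq]
  calc |W * (K - (D : ℝ) ^ 4 / 48) + E| ≤ |W * (K - (D : ℝ) ^ 4 / 48)| + |E| := abs_add_le _ _
    _ = W * |K - (D : ℝ) ^ 4 / 48| + |E| := by rw [abs_mul, abs_of_nonneg hW0]
    _ ≤ 1 * (2 * (D : ℝ) ^ 3) + 2 * (D : ℝ) ^ 3 :=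
        add_le_add (mul_le_mul hW1 hKmain (abs_nonneg _) zero_le_one) hEb
    _ = 4 * (D : ℝ) ^ 3 := by ring


lemma mem_monLT {D : ℕ} {P : Polynomial F} : P ∈ monLT F D ↔ P.Monic ∧ P.natDegree < D := by
  simp only [monLT, Finset.mem_biUnion, Finset.mem_range, mem_mon]
  constructor
  · rintro ⟨d, hd, hm, rfl⟩
    exact ⟨hm, hd⟩
  · rintro ⟨hm, hd⟩
    exact ⟨P.natDegree, hd, hm, rfl⟩

lemma sum_monLT {D : ℕ} (f : Polynomial F → ℝ) :
    ∑ P ∈ monLT F D, f P = ∑ d ∈ range D, ∑ P ∈ mon F d, f P := by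
  apply Finset.sum_biUnion
  intro a _ b _ hab
  simp only [Finset.disjoint_left]
  intro P hPa hPb
  exact hab ((mem_mon.1 hPa).2 ▸ (mem_mon.1 hPb).2.symm ▸ rfl)

lemma sum_cop (m n : ℕ) (c : ℝ) :
    ∑ A' ∈ mon F m, ∑ B' ∈ mon F n, (if IsCoprime A' B' then c else 0)
      = ((cop F m n).card : ℝ) * c := by
  rw [← Finset.sum_product']
  rw [show (∑ p ∈ (mon F m) ×ˢ (mon F n), if IsCoprime p.1 p.2 then c else 0)
      = ∑ p ∈ cop F m n, c from (Finset.sum_filter _ _).symm]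
  rw [Finset.sum_const, nsmul_eq_mul]

lemma ite_and_assoc {p q : Prop} [Decidable p] [Decidable q] (a : ℝ) :
    (if p ∧ q then a else 0) = if p then (if q then a else 0) else 0 := by
  split_ifs <;> tauto

lemma sum_mon_const (n : ℕ) (c : ℝ) :
    ∑ _P ∈ mon F n, c = (Fintype.card F : ℝ) ^ n * c := by
  rw [Finset.sum_const, card_mon, nsmul_eq_mul]
  push_cast
  ring

lemma sum_ite_const {α : Type*} {s : Finset α} {P : Prop} [Decidable P] (f : α → ℝ) :
    ∑ x ∈ s, (if P then f x else 0) = if P then ∑ x ∈ s, f x else 0 := by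
  split_ifs <;> simp

lemma bridge (D : ℕ) :
    ∑ t ∈ ((monLT F D ×ˢ (monLT F D ×ˢ (monLT F D ×ˢ monLT F D))).filter
      (fun t : Polynomial F × Polynomial F × Polynomial F × Polynomial F =>
        IsCoprime t.2.1 t.2.2.1 ∧
        2 * t.1.natDegree + t.2.1.natDegree + t.2.2.1.natDegree < D ∧
        t.2.1.natDegree + t.2.2.1.natDegree + 2 * t.2.2.2.natDegree < D)),
      ((Fintype.card F : ℝ) ^ (t.1.natDegree + t.2.1.natDegree + t.2.2.1.natDegree +
        t.2.2.2.natDegree))⁻¹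
    = ∑ g ∈ range D, (Fintype.card F : ℝ) ^ g *
        ∑ m ∈ range D, ∑ n ∈ range D, ((cop F m n).card : ℝ) *
          ∑ e ∈ range D, (Fintype.card F : ℝ) ^ e *
            (if 2 * g + m + n < D ∧ m + n + 2 * e < D
              then ((Fintype.card F : ℝ) ^ (g + m + n + e))⁻¹ else 0) := by
  set q : ℝ := (Fintype.card F : ℝ) with hqdef
  rw [Finset.sum_filter]
  simp only [Finset.sum_product]
  simp only [sum_monLT]
  -- replace degrees and collapse, level by level
  apply Finset.sum_congr rfl
  intro g hg
  -- G level
  have hG : ∀ G ∈ mon F g,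
      (∑ m ∈ range D, ∑ A' ∈ mon F m, ∑ n ∈ range D, ∑ B' ∈ mon F n,
        ∑ e ∈ range D, ∑ E ∈ mon F e,
          (if IsCoprime A' B' ∧
              2 * G.natDegree + A'.natDegree + B'.natDegree < D ∧
              A'.natDegree + B'.natDegree + 2 * E.natDegree < D
            then (q ^ (G.natDegree + A'.natDegree + B'.natDegree + E.natDegree))⁻¹ else 0))
      = ∑ m ∈ range D, ∑ n ∈ range D, ((cop F m n).card : ℝ) *
          ∑ e ∈ range D, q ^ e *
            (if 2 * g + m + n < D ∧ m + n + 2 * e < D then (q ^ (g + m + n + e))⁻¹ else 0) := by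
    intro G hGmem
    obtain ⟨-, hGdeg⟩ := mem_mon.1 hGmem
    rw [hGdeg]
    -- swap A' sum with n sum
    rw [Finset.sum_congr rfl (fun m _ => Finset.sum_comm)]
    apply Finset.sum_congr rfl
    intro m _
    apply Finset.sum_congr rfl
    intro n _
    -- now collapse A', B'
    rw [← sum_cop m n]
    apply Finset.sum_congr rfl
    intro A' hA'
    obtain ⟨-, hA'deg⟩ := mem_mon.1 hA'
    apply Finset.sum_congr rfl
    intro B' hB'
    obtain ⟨-, hB'deg⟩ := mem_mon.1 hB'
    rw [hA'deg, hB'deg]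
    -- collapse E and e
    have he : ∀ e ∈ range D, (∑ E ∈ mon F e,
        (if IsCoprime A' B' ∧ 2 * g + m + n < D ∧ m + n + 2 * E.natDegree < D
          then (q ^ (g + m + n + E.natDegree))⁻¹ else 0))
        = q ^ e * (if IsCoprime A' B' ∧ 2 * g + m + n < D ∧ m + n + 2 * e < D
          then (q ^ (g + m + n + e))⁻¹ else 0) := by
      intro e _
      rw [← sum_mon_const (F := F) e]
      apply Finset.sum_congr rfl
      intro E hE
      obtain ⟨-, hEdeg⟩ := mem_mon.1 hE
      rw [hEdeg]
    rw [Finset.sum_congr rfl he]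
    -- pull the coprime condition out
    have hsplit : ∀ e : ℕ, q ^ e * (if IsCoprime A' B' ∧ 2 * g + m + n < D ∧ m + n + 2 * e < D
          then (q ^ (g + m + n + e))⁻¹ else 0)
        = (if IsCoprime A' B' then q ^ e *
            (if 2 * g + m + n < D ∧ m + n + 2 * e < D then (q ^ (g + m + n + e))⁻¹ else 0)
          else 0) := by
      intro e
      rw [ite_and_assoc]
      split_ifs <;> simp
    rw [Finset.sum_congr rfl (fun e _ => hsplit e), sum_ite_const]
  rw [Finset.sum_congr rfl hG, sum_mon_const]

lemma arith2 (q : ℝ) (hq0 : 0 < q) (cc : ℕ → ℕ → ℝ) (D : ℕ) :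
    ∑ g ∈ range D, q ^ g * ∑ m ∈ range D, ∑ n ∈ range D, cc m n *
        ∑ e ∈ range D, q ^ e *
          (if 2 * g + m + n < D ∧ m + n + 2 * e < D then (q ^ (g + m + n + e))⁻¹ else 0)
    = ∑ m ∈ range D, ∑ n ∈ range D, cc m n * (q ^ (m + n))⁻¹ *
        (((range D).filter (fun g => 2 * g + (m + n) < D)).card : ℝ) *
        (((range D).filter (fun g => 2 * g + (m + n) < D)).card : ℝ) := by
  have hqe : ∀ k : ℕ, q ^ k ≠ 0 := fun k => pow_ne_zero k hq0.ne'
  have hcard1 : ∀ m n : ℕ, (range D).filter (fun e => m + n + 2 * e < D)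
      = (range D).filter (fun k => 2 * k + (m + n) < D) := by
    intro m n
    ext x
    simp only [Finset.mem_filter, Finset.mem_range]
    omega
  have hcard2 : ∀ m n : ℕ, (range D).filter (fun g => 2 * g + m + n < D)
      = (range D).filter (fun k => 2 * k + (m + n) < D) := by
    intro m n
    ext x
    simp only [Finset.mem_filter, Finset.mem_range]
    omega
  have hA : ∀ g m n : ℕ, (∑ e ∈ range D, q ^ e *
        (if 2 * g + m + n < D ∧ m + n + 2 * e < D then (q ^ (g + m + n + e))⁻¹ else 0))
      = (if 2 * g + m + n < D then (q ^ (g + m + n))⁻¹ *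
          (((range D).filter (fun k => 2 * k + (m + n) < D)).card : ℝ) else 0) := by
    intro g m n
    have hterm : ∀ e : ℕ, q ^ e *
        (if 2 * g + m + n < D ∧ m + n + 2 * e < D then (q ^ (g + m + n + e))⁻¹ else 0)
        = (if 2 * g + m + n < D then (if m + n + 2 * e < D then (q ^ (g + m + n))⁻¹ else 0)
            else 0) := by
      intro e
      rw [ite_and_assoc]
      split_ifs with h1 h2
      · rw [show g + m + n + e = (g + m + n) + e by omega, pow_add, mul_inv]
        field_simp
      · simp
      · simp
    rw [Finset.sum_congr rfl (fun e _ => hterm e), sum_ite_const]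
    congr 1
    rw [← Finset.sum_filter, Finset.sum_const, hcard1, nsmul_eq_mul]
    ring
  have hB : ∀ g : ℕ, (q ^ g * ∑ m ∈ range D, ∑ n ∈ range D, cc m n *
        ∑ e ∈ range D, q ^ e *
          (if 2 * g + m + n < D ∧ m + n + 2 * e < D then (q ^ (g + m + n + e))⁻¹ else 0))
      = ∑ m ∈ range D, ∑ n ∈ range D,
          (if 2 * g + m + n < D then cc m n * (q ^ (m + n))⁻¹ *
            (((range D).filter (fun k => 2 * k + (m + n) < D)).card : ℝ) else 0) := by
    intro g
    rw [Finset.mul_sum]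
    apply Finset.sum_congr rfl
    intro m _
    rw [Finset.mul_sum]
    apply Finset.sum_congr rfl
    intro n _
    rw [hA g m n]
    split_ifs with h
    · rw [show g + m + n = g + (m + n) by omega, pow_add, mul_inv]
      field_simp
    · simp
  rw [Finset.sum_congr rfl (fun g _ => hB g), Finset.sum_comm]
  apply Finset.sum_congr rfl
  intro m _
  rw [Finset.sum_comm]
  apply Finset.sum_congr rfl
  intro n _
  rw [← Finset.sum_filter, Finset.sum_const, hcard2, nsmul_eq_mul]
  ring


lemma poly_bij (D : ℕ) :
    ∑ t ∈ ((monLT F D ×ˢ (monLT F D ×ˢ (monLT F D ×ˢ monLT F D))).filter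
      (fun t : Polynomial F × Polynomial F × Polynomial F × Polynomial F =>
        (t.1 * t.2.1).natDegree < D ∧ (t.2.2.1 * t.2.2.2).natDegree < D ∧
        t.1 * t.2.2.1 = t.2.1 * t.2.2.2)),
      (Real.sqrt ((Fintype.card F : ℝ) ^ (t.1 * t.2.1 * t.2.2.1 * t.2.2.2).natDegree))⁻¹
    = ∑ t ∈ ((monLT F D ×ˢ (monLT F D ×ˢ (monLT F D ×ˢ monLT F D))).filter
      (fun t : Polynomial F × Polynomial F × Polynomial F × Polynomial F =>
        IsCoprime t.2.1 t.2.2.1 ∧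
        2 * t.1.natDegree + t.2.1.natDegree + t.2.2.1.natDegree < D ∧
        t.2.1.natDegree + t.2.2.1.natDegree + 2 * t.2.2.2.natDegree < D)),
      ((Fintype.card F : ℝ) ^ (t.1.natDegree + t.2.1.natDegree + t.2.2.1.natDegree +
        t.2.2.2.natDegree))⁻¹ := by
  symm
  apply Finset.sum_bij
    (i := fun (t : Polynomial F × Polynomial F × Polynomial F × Polynomial F) _ =>
      (t.1 * t.2.1, t.1 * t.2.2.1, t.2.2.1 * t.2.2.2, t.2.1 * t.2.2.2))
  · -- maps to
    rintro ⟨G, A', B', E⟩ ht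
    simp only [Finset.mem_filter, Finset.mem_product, mem_monLT] at ht ⊢
    obtain ⟨⟨⟨hGm, hGd⟩, ⟨hA'm, hA'd⟩, ⟨hB'm, hB'd⟩, hEm, hEd⟩, hcop, h1, h2⟩ := ht
    have k1 : (G * A').natDegree = G.natDegree + A'.natDegree := hGm.natDegree_mul hA'm
    have k2 : (G * B').natDegree = G.natDegree + B'.natDegree := hGm.natDegree_mul hB'm
    have k3 : (B' * E).natDegree = B'.natDegree + E.natDegree := hB'm.natDegree_mul hEm
    have k4 : (A' * E).natDegree = A'.natDegree + E.natDegree := hA'm.natDegree_mul hEm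
    refine ⟨⟨⟨hGm.mul hA'm, ?_⟩, ⟨hGm.mul hB'm, ?_⟩, ⟨hB'm.mul hEm, ?_⟩, hA'm.mul hEm, ?_⟩,
      ?_, ?_, by ring⟩
    · omega
    · omega
    · omega
    · omega
    · rw [(hGm.mul hA'm).natDegree_mul (hGm.mul hB'm), k1, k2]; omega
    · rw [(hB'm.mul hEm).natDegree_mul (hA'm.mul hEm), k3, k4]; omega
  · -- injective
    rintro ⟨G, A', B', E⟩ ht ⟨H, A'', B'', E'⟩ ht' heq
    simp only [Finset.mem_filter, Finset.mem_product, mem_monLT] at ht ht'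
    obtain ⟨⟨⟨hGm, _⟩, ⟨hA'm, _⟩, ⟨hB'm, _⟩, hEm, _⟩, hcop, _, _⟩ := ht
    obtain ⟨⟨⟨hHm, _⟩, ⟨hA''m, _⟩, ⟨hB''m, _⟩, hE'm, _⟩, hcop', _, _⟩ := ht'
    simp only [Prod.mk.injEq] at heq
    obtain ⟨e1, e2, e3, e4⟩ := heq
    obtain ⟨rfl, rfl, rfl⟩ := decomp_unique hGm hHm hA'm hB'm hA''m hB''m hcop hcop' e1 e2
    obtain rfl : E = E' := mul_left_cancel₀ hB'm.ne_zero e3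
    rfl
  · -- surjective
    rintro ⟨A, B, Cc, Dd⟩ ht
    simp only [Finset.mem_filter, Finset.mem_product, mem_monLT] at ht
    obtain ⟨⟨⟨hAm, hAd⟩, ⟨hBm, hBd⟩, ⟨hCm, hCd⟩, hDm, hDd⟩, h1, h2, heq⟩ := ht
    obtain ⟨G, A', B', hGm, hA'm, hB'm, hcop, rfl, rfl⟩ := exists_decomp hAm hBm
    have heq' : A' * Cc = B' * Dd := by
      apply mul_left_cancel₀ hGm.ne_zero
      calc G * (A' * Cc) = G * A' * Cc := by ring
        _ = G * B' * Dd := heq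
        _ = G * (B' * Dd) := by ring
    have hdvd : B' ∣ Cc := (hcop.symm).dvd_of_dvd_mul_left ⟨Dd, by linear_combination heq'⟩
    obtain ⟨E, rfl⟩ := hdvd
    have hEm : E.Monic := hB'm.of_mul_monic_left hCm
    have hDeq : Dd = A' * E := by
      apply mul_left_cancel₀ hB'm.ne_zero
      calc B' * Dd = A' * (B' * E) := heq'.symm
        _ = B' * (A' * E) := by ring
    subst hDeq
    have k1 : (G * A').natDegree = G.natDegree + A'.natDegree := hGm.natDegree_mul hA'm
    have k2 : (G * B').natDegree = G.natDegree + B'.natDegree := hGm.natDegree_mul hB'm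
    have k3 : (B' * E).natDegree = B'.natDegree + E.natDegree := hB'm.natDegree_mul hEm
    have k4 : (A' * E).natDegree = A'.natDegree + E.natDegree := hA'm.natDegree_mul hEm
    have h1' : (G * A' * (G * B')).natDegree =
        G.natDegree + A'.natDegree + (G.natDegree + B'.natDegree) := by
      rw [(hGm.mul hA'm).natDegree_mul (hGm.mul hB'm), k1, k2]
    have h2' : (B' * E * (A' * E)).natDegree =
        B'.natDegree + E.natDegree + (A'.natDegree + E.natDegree) := by
      rw [(hB'm.mul hEm).natDegree_mul (hA'm.mul hEm), k3, k4]
    refine ⟨(G, A', B', E), ?_, rfl⟩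
    simp only [Finset.mem_filter, Finset.mem_product, mem_monLT]
    refine ⟨⟨⟨hGm, by omega⟩, ⟨hA'm, by omega⟩, ⟨hB'm, by omega⟩, hEm, by omega⟩,
      hcop, by omega, by omega⟩
  · -- values
    rintro ⟨G, A', B', E⟩ ht
    simp only [Finset.mem_filter, Finset.mem_product, mem_monLT] at ht
    obtain ⟨⟨⟨hGm, _⟩, ⟨hA'm, _⟩, ⟨hB'm, _⟩, hEm, _⟩, hcop, _, _⟩ := ht
    have hdeg : (G * A' * (G * B') * (B' * E) * (A' * E)).natDegree =
        2 * (G.natDegree + A'.natDegree + B'.natDegree + E.natDegree) := by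
      rw [(((hGm.mul hA'm).mul (hGm.mul hB'm)).mul (hB'm.mul hEm)).natDegree_mul
        (hA'm.mul hEm),
        ((hGm.mul hA'm).mul (hGm.mul hB'm)).natDegree_mul (hB'm.mul hEm),
        (hGm.mul hA'm).natDegree_mul (hGm.mul hB'm),
        hGm.natDegree_mul hA'm, hGm.natDegree_mul hB'm, hB'm.natDegree_mul hEm,
        hA'm.natDegree_mul hEm]
      ring
    simp only
    rw [hdeg]
    have hq0 : (0 : ℝ) ≤ (Fintype.card F : ℝ) := by positivity
    rw [mul_comm 2, pow_mul, Real.sqrt_sq (by positivity)]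

lemma set_eq (D : ℕ) :
    {t : Polynomial F × Polynomial F × Polynomial F × Polynomial F |
        t.1.Monic ∧ t.2.1.Monic ∧ t.2.2.1.Monic ∧ t.2.2.2.Monic ∧
        (t.1 * t.2.1).natDegree < D ∧ (t.2.2.1 * t.2.2.2).natDegree < D ∧
        t.1 * t.2.2.1 = t.2.1 * t.2.2.2}
    = ↑((monLT F D ×ˢ (monLT F D ×ˢ (monLT F D ×ˢ monLT F D))).filter
      (fun t : Polynomial F × Polynomial F × Polynomial F × Polynomial F =>
        (t.1 * t.2.1).natDegree < D ∧ (t.2.2.1 * t.2.2.2).natDegree < D ∧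
        t.1 * t.2.2.1 = t.2.1 * t.2.2.2)) := by
  ext ⟨A, B, Cc, Dd⟩
  simp only [Set.mem_setOf_eq, Finset.coe_filter, Finset.mem_product, mem_monLT,
    Set.mem_setOf_eq]
  constructor
  · rintro ⟨hA, hB, hC, hD, h1, h2, h3⟩
    have k1 : (A * B).natDegree = A.natDegree + B.natDegree := hA.natDegree_mul hB
    have k2 : (Cc * Dd).natDegree = Cc.natDegree + Dd.natDegree := hC.natDegree_mul hD
    exact ⟨⟨⟨hA, by omega⟩, ⟨hB, by omega⟩, ⟨hC, by omega⟩, hD, by omega⟩, h1, h2, h3⟩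
  · rintro ⟨⟨⟨hA, _⟩, ⟨hB, _⟩, ⟨hC, _⟩, hD, _⟩, h1, h2, h3⟩
    exact ⟨hA, hB, hC, hD, h1, h2, h3⟩


end DSA

/-- Diagonal sum: `Σ |ABCD|^{-1/2} = ((q-1)/(48q)) 𝔇⁴ + O(𝔇³)` over quadruples of monic
polynomials with `deg(AB) < 𝔇`, `deg(CD) < 𝔇` and `AC = BD`, the implied constant
depending only on `q`. -/
theorem diagonal_sum_asymptotic
    (F : Type*) [Field F] [Fintype F] (q : ℕ) (hq : Fintype.card F = q) :
    ∃ C : ℝ, ∀ 𝔇 : ℕ, 1 ≤ 𝔇 →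
      |(∑ᶠ t ∈ {t : Polynomial F × Polynomial F × Polynomial F × Polynomial F |
            t.1.Monic ∧ t.2.1.Monic ∧ t.2.2.1.Monic ∧ t.2.2.2.Monic ∧
            (t.1 * t.2.1).natDegree < 𝔇 ∧ (t.2.2.1 * t.2.2.2).natDegree < 𝔇 ∧
            t.1 * t.2.2.1 = t.2.1 * t.2.2.2},
          (Real.sqrt ((q : ℝ) ^ (t.1 * t.2.1 * t.2.2.1 * t.2.2.2).natDegree))⁻¹) -
        ((q : ℝ) - 1) / (48 * q) * (𝔇 : ℝ) ^ 4| ≤ C * (𝔇 : ℝ) ^ 3 := by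
  subst hq
  refine ⟨4, fun D hD => ?_⟩
  have hq2 : (2 : ℝ) ≤ (Fintype.card F : ℝ) := by
    have := Fintype.one_lt_card (α := F)
    exact_mod_cast this
  have hq0 : (0 : ℝ) < (Fintype.card F : ℝ) := by linarith
  have e1 := DSA.set_eq (F := F) D
  rw [e1, finsum_mem_coe_finset, DSA.poly_bij, DSA.bridge,
    DSA.arith2 (Fintype.card F : ℝ) hq0 (fun m n => ((DSA.cop F m n).card : ℝ)) D]
  exact DSA.arith (Fintype.card F : ℝ) hq2 _ (fun m n => DSA.card_cop_real) D hD
end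
end
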